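/- arXiv:2209.08140 — 10 statements merged into one kernel-verified Lean document; each statement's English description precedes it below -/
import Mathlib

section
/- Let X be a Polish space and let F : C_b(X) → ℝ be a convex nondecreasing function. Then F is continuous for the supremum norm on C_b(X); more precisely, for all f, g ∈ C_b(X) and ε > 0, if ‖f − g‖∞ ≤ ε then |F(f) − F(g)| ≤ F(f + ε) − F(f − ε), and F(f + ε) − F(f − ε) → 0 as ε → 0. -/
open Filter Topology BoundedContinuousFunction

/-- A convex nondecreasing function `F : C_b(X) → ℝ` on a Polish space `X` is
continuous for the supremum norm; more precisely, if `‖f - g‖ ≤ ε` then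
`|F f - F g| ≤ F (f + ε) - F (f - ε)`, and `F (f + ε) - F (f - ε) → 0` as `ε → 0⁺`. -/
theorem stmt0 {X : Type*} [TopologicalSpace X] [PolishSpace X]
    (F : (X →ᵇ ℝ) → ℝ) (hconv : ConvexOn ℝ Set.univ F) (hmono : Monotone F) :
    Continuous F ∧
    (∀ (f g : X →ᵇ ℝ) (ε : ℝ), 0 < ε → ‖f - g‖ ≤ ε →
      |F f - F g| ≤ F (f + const X ε) - F (f - const X ε)) ∧
    (∀ f : X →ᵇ ℝ,
      Tendsto (fun ε : ℝ => F (f + const X ε) - F (f - const X ε)) (𝓝[>] (0 : ℝ)) (𝓝 0)) := by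
  have hle : ∀ f g : X →ᵇ ℝ, (∀ x, f x ≤ g x) → f ≤ g := fun f g h => h
  -- Key sandwich from convexity: for 0 < ε ≤ 1,
  -- F (f + ε) - F (f - ε) ≤ 2 ε (F (f + 1) - F f)
  have key : ∀ (f : X →ᵇ ℝ) (ε : ℝ), 0 < ε → ε ≤ 1 →
      F (f + const X ε) - F (f - const X ε)
        ≤ 2 * ε * (F (f + const X 1) - F f) := by
    intro f ε hε hε1
    have hupper : F (f + const X ε) ≤ (1 - ε) * F f + ε * F (f + const X 1) := by
      have hcomb : (1 - ε) • f + ε • (f + const X 1) = f + const X ε := by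
        ext x; simp; ring
      have := hconv.2 (Set.mem_univ f) (Set.mem_univ (f + const X 1))
        (by linarith : (0:ℝ) ≤ 1 - ε) hε.le (by ring)
      rwa [hcomb] at this
    have hlower : (1 + ε) * F f - ε * F (f + const X 1) ≤ F (f - const X ε) := by
      have ha : (0:ℝ) < 1 + ε := by linarith
      have hcomb : (1/(1+ε)) • (f - const X ε) + (ε/(1+ε)) • (f + const X 1) = f := by
        ext x
        simp
        field_simp
        ring
      have h2 := hconv.2 (Set.mem_univ (f - const X ε)) (Set.mem_univ (f + const X 1))
        (by positivity : (0:ℝ) ≤ 1/(1+ε)) (by positivity : (0:ℝ) ≤ ε/(1+ε))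
        (by field_simp)
      rw [hcomb] at h2
      rw [smul_eq_mul, smul_eq_mul, div_mul_eq_mul_div, div_mul_eq_mul_div, one_mul,
        ← add_div, le_div_iff₀ ha] at h2
      nlinarith [h2]
    nlinarith [hupper, hlower]
  have hC : ∀ f : X →ᵇ ℝ, 0 ≤ F (f + const X 1) - F f := by
    intro f
    have : f ≤ f + const X 1 := hle _ _ fun x => by simp
    linarith [hmono this]
  -- Part 2
  have part2 : ∀ (f g : X →ᵇ ℝ) (ε : ℝ), 0 < ε → ‖f - g‖ ≤ ε →
      |F f - F g| ≤ F (f + const X ε) - F (f - const X ε) := by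
    intro f g ε hε hfg
    have hxb : ∀ x, |f x - g x| ≤ ε := by
      intro x
      have := (f - g).norm_coe_le_norm x
      simp only [coe_sub, Pi.sub_apply] at this
      calc |f x - g x| ≤ ‖f - g‖ := by rw [← Real.norm_eq_abs]; exact this
        _ ≤ ε := hfg
    have h1 : g ≤ f + const X ε := hle _ _ fun x => by
      have := abs_le.1 (hxb x); simp; linarith [this.1]
    have h2 : f - const X ε ≤ g := hle _ _ fun x => by
      have := abs_le.1 (hxb x); simp; linarith [this.2]
    have h3 : f ≤ f + const X ε := hle _ _ fun x => by simp; linarith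
    have h4 : f - const X ε ≤ f := hle _ _ fun x => by simp; linarith
    have := hmono h1
    have := hmono h2
    have := hmono h3
    have := hmono h4
    rw [abs_sub_le_iff]
    constructor <;> linarith
  -- Part 3
  have part3 : ∀ f : X →ᵇ ℝ,
      Tendsto (fun ε : ℝ => F (f + const X ε) - F (f - const X ε)) (𝓝[>] (0 : ℝ)) (𝓝 0) := by
    intro f
    apply squeeze_zero'
    · filter_upwards [self_mem_nhdsWithin] with ε (hε : 0 < ε)
      have : f - const X ε ≤ f + const X ε := hle _ _ fun x => by simp; linarith
      linarith [hmono this]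
    · filter_upwards [Ioo_mem_nhdsGT_of_mem (by norm_num : (0:ℝ) ∈ Set.Ico 0 1)]
        with ε hε
      exact key f ε hε.1 hε.2.le
    · have : Tendsto (fun ε : ℝ => 2 * ε * (F (f + const X 1) - F f)) (𝓝 0) (𝓝 0) := by
        have hcont : Continuous (fun ε : ℝ => 2 * ε * (F (f + const X 1) - F f)) := by
          continuity
        simpa using hcont.tendsto 0
      exact this.mono_left nhdsWithin_le_nhds
  refine ⟨?_, part2, part3⟩
  -- Continuity
  rw [Metric.continuous_iff]
  intro f δ hδ
  set C := F (f + const X 1) - F f with hCdef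
  have hC0 := hC f
  refine ⟨min 1 (δ / (2 * (C + 1))), lt_min one_pos (by positivity), fun g hg => ?_⟩
  set ε := min 1 (δ / (2 * (C + 1))) with hεdef
  have hε0 : 0 < ε := lt_min one_pos (by positivity)
  have hfg : ‖f - g‖ ≤ ε := by
    rw [norm_sub_rev]
    rw [dist_eq_norm] at hg
    exact hg.le
  have h1 := part2 f g ε hε0 hfg
  have h2 := key f ε hε0 (min_le_left _ _)
  have h3 : ε ≤ δ / (2 * (C + 1)) := min_le_right _ _
  have : 2 * ε * C ≤ 2 * (δ / (2 * (C + 1))) * C :=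
    mul_le_mul_of_nonneg_right (by linarith) hC0
  have hlt : 2 * (δ / (2 * (C + 1))) * C < δ := by
    have heq : 2 * (δ / (2 * (C + 1))) * C = δ * C / (C + 1) := by
      field_simp
    rw [heq, div_lt_iff₀ (by positivity : (0:ℝ) < C + 1)]
    nlinarith
  rw [Real.dist_eq, abs_sub_comm]
  calc |F f - F g| ≤ F (f + const X ε) - F (f - const X ε) := h1
    _ ≤ 2 * ε * C := h2
    _ ≤ 2 * (δ / (2 * (C + 1))) * C := this
    _ < δ := hlt
end

section
/- Let X be a Polish space and let F : C_b(X) → ℝ be a convex nondecreasing function. If F is downward continuous, then F is upward continuous. -/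
open Filter Topology BoundedContinuousFunction

/-- For a convex nondecreasing `F : C_b(X) → ℝ` on a Polish space,
downward continuity implies upward continuity. -/
theorem stmt1 {X : Type*} [TopologicalSpace X] [PolishSpace X]
    (F : (X →ᵇ ℝ) → ℝ) (hconv : ConvexOn ℝ Set.univ F) (hmono : Monotone F)
    (hdown : ∀ (f : X →ᵇ ℝ) (g : ℕ → X →ᵇ ℝ), Antitone g →
      (∀ x, Tendsto (fun n => g n x) atTop (𝓝 (f x))) →
      Tendsto (fun n => F (g n)) atTop (𝓝 (F f))) :
    ∀ (f : X →ᵇ ℝ) (g : ℕ → X →ᵇ ℝ), Monotone g →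
      (∀ x, Tendsto (fun n => g n x) atTop (𝓝 (f x))) →
      Tendsto (fun n => F (g n)) atTop (𝓝 (F f)) := by
  intro f g hg hpt
  -- g n ≤ f pointwise
  have hle : ∀ n, g n ≤ f := by
    intro n
    intro x
    refine ge_of_tendsto (hpt x) ?_
    filter_upwards [eventually_ge_atTop n] with m hm
    exact hg hm x
  -- auxiliary antitone sequence
  set h : ℕ → X →ᵇ ℝ := fun n => f + (f - g n) with hh
  have hanti : Antitone h := by
    intro n m hnm x
    have h1 : g n x ≤ g m x := hg hnm x
    show (f + (f - g m)) x ≤ (f + (f - g n)) x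
    simp only [BoundedContinuousFunction.add_apply, BoundedContinuousFunction.sub_apply]
    linarith
  have hhpt : ∀ x, Tendsto (fun n => h n x) atTop (𝓝 (f x)) := by
    intro x
    have : Tendsto (fun n => f x + (f x - g n x)) atTop (𝓝 (f x + (f x - f x))) :=
      tendsto_const_nhds.add (tendsto_const_nhds.sub (hpt x))
    simpa [hh] using this
  have hFh : Tendsto (fun n => F (h n)) atTop (𝓝 (F f)) := hdown f h hanti hhpt
  -- convexity bound: F f ≤ (F (g n) + F (h n)) / 2
  have hkey : ∀ n, 2 * F f - F (h n) ≤ F (g n) := by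
    intro n
    have hcomb := hconv.2 (Set.mem_univ (g n)) (Set.mem_univ (h n))
      (by norm_num : (0:ℝ) ≤ 1/2) (by norm_num : (0:ℝ) ≤ 1/2) (by norm_num)
    have heq : (1/2 : ℝ) • g n + (1/2 : ℝ) • h n = f := by
      ext x
      simp only [hh, BoundedContinuousFunction.coe_add, BoundedContinuousFunction.coe_smul,
        BoundedContinuousFunction.coe_sub, Pi.add_apply, Pi.smul_apply, Pi.sub_apply,
        smul_eq_mul]
      ring
    rw [heq] at hcomb
    simp only [smul_eq_mul] at hcomb
    linarith
  have hub : ∀ n, F (g n) ≤ F f := fun n => hmono (hle n)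
  have hlow : Tendsto (fun n => 2 * F f - F (h n)) atTop (𝓝 (F f)) := by
    have : Tendsto (fun n => 2 * F f - F (h n)) atTop (𝓝 (2 * F f - F f)) :=
      tendsto_const_nhds.sub hFh
    simpa [two_mul] using this
  exact tendsto_of_tendsto_of_tendsto_of_le_of_le hlow tendsto_const_nhds hkey hub
end

section
/- Let X be a Polish space and let F : C_b(X) → ℝ be a convex nondecreasing upward continuous function with F(0) = 0. If (f_n) is a uniformly bounded sequence in C_b(X) converging pointwise on X to some f ∈ C_b(X), then F(f) ≤ liminf_n F(f_n). -/
open Filter Topology BoundedContinuousFunction Metric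

namespace Stmt7Aux


lemma bcf_le_iff {X : Type*} [TopologicalSpace X] {f g : X →ᵇ ℝ} :
    f ≤ g ↔ ∀ x, f x ≤ g x := Iff.rfl

lemma bcf_norm_le {X : Type*} [TopologicalSpace X] {f : X →ᵇ ℝ} {c : ℝ} (hc : 0 ≤ c)
    (h : ∀ x, |f x| ≤ c) : ‖f‖ ≤ c := (norm_le hc).mpr h

variable {K : Type*} [TopologicalSpace K] [CompactSpace K]

/-- Dini-type theorem: an antitone sequence of nonneg continuous functions on a compact
space tending pointwise to 0 tends to 0 uniformly. -/
lemma dini (w : ℕ → K →ᵇ ℝ) (hanti : Antitone w) (hnn : ∀ n, 0 ≤ w n)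
    (h0 : ∀ x, Tendsto (fun n => w n x) atTop (𝓝 0)) :
    Tendsto (fun n => ‖w n‖) atTop (𝓝 0) := by
  rw [Metric.tendsto_atTop]
  intro ε hε
  have hU : ∀ n : ℕ, IsOpen {x : K | w n x < ε / 2} := fun n =>
    isOpen_lt (w n).continuous continuous_const
  have hcover : (Set.univ : Set K) ⊆ ⋃ n : ℕ, {x : K | w n x < ε / 2} := by
    intro x _
    have := (h0 x).eventually (eventually_lt_nhds (by linarith : (0:ℝ) < ε/2))
    rcases this.exists with ⟨n, hn⟩
    exact Set.mem_iUnion.2 ⟨n, hn⟩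
  rcases isCompact_univ.elim_finite_subcover _ hU hcover with ⟨t, ht⟩
  refine ⟨t.sup id, fun n hn => ?_⟩
  have hwn : ‖w n‖ ≤ ε / 2 := by
    apply bcf_norm_le (by linarith)
    intro x
    rcases Set.mem_iUnion₂.1 (ht (Set.mem_univ x)) with ⟨i, hit, hx⟩
    have hin : i ≤ n := le_trans (Finset.le_sup (f := id) hit) hn
    have : w n x ≤ w i x := (hanti hin) x
    have h1 : 0 ≤ w n x := (hnn n) x
    rw [abs_of_nonneg h1]
    exact le_of_lt (lt_of_le_of_lt this hx)
  have : dist ‖w n‖ 0 = ‖w n‖ := by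
    rw [Real.dist_eq, sub_zero, abs_of_nonneg (norm_nonneg _)]
  rw [this]; linarith

section Machine

variable (p : ℕ → K →ᵇ ℝ)

/-- running maxima over the window `[n, n+m]` -/
def T (n : ℕ) : ℕ → K →ᵇ ℝ
  | 0 => p n
  | (m+1) => T n m ⊔ p (n+m+1)

lemma T_le (q : K →ᵇ ℝ) (n : ℕ) : ∀ m, (∀ k, n ≤ k → k ≤ n + m → p k ≤ q) → T p n m ≤ q := by
  intro m
  induction m with
  | zero => intro h; exact h n le_rfl (by omega)
  | succ m ih =>
    intro h
    show T p n m ⊔ p (n+m+1) ≤ q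
    exact sup_le (ih fun k hk hk' => h k hk (by omega)) (h (n+m+1) (by omega) (by omega))

lemma le_T (n : ℕ) : ∀ m k, n ≤ k → k ≤ n + m → p k ≤ T p n m := by
  intro m
  induction m with
  | zero => intro k h1 h2; have : k = n := by omega
            subst this; exact le_rfl
  | succ m ih =>
    intro k h1 h2
    show p k ≤ T p n m ⊔ p (n+m+1)
    rcases Nat.lt_or_ge k (n+m+1) with h | h
    · exact le_trans (ih k h1 (by omega)) le_sup_left
    · have : k = n+m+1 := by omega
      subst this; exact le_sup_right

lemma T_window {n' n m m' : ℕ} (h1 : n' ≤ n) (h2 : n + m ≤ n' + m') :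
    T p n m ≤ T p n' m' :=
  T_le p _ n m fun k hk hk' => le_T p n' m' k (le_trans h1 hk) (by omega)

lemma T_nonneg (hp : ∀ k, 0 ≤ p k) (n m : ℕ) : 0 ≤ T p n m :=
  le_trans (hp n) (le_T p n m n le_rfl (by omega))

lemma T_le_const {D : ℝ} (hp : ∀ k, p k ≤ const K D) (n m : ℕ) : T p n m ≤ const K D :=
  T_le p _ n m fun k _ _ => hp k

lemma T_apply_le {x : K} {c : ℝ} (n : ℕ) :
    ∀ m, (∀ k, n ≤ k → p k x ≤ c) → T p n m x ≤ c := by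
  intro m
  induction m with
  | zero => intro h; exact h n le_rfl
  | succ m ih =>
    intro h
    show (T p n m ⊔ p (n+m+1)) x ≤ c
    have : (T p n m ⊔ p (n+m+1)) x = max (T p n m x) (p (n+m+1) x) := rfl
    rw [this]
    exact max_le (ih h) (h (n+m+1) (by omega))

end Machine

/-- The key "B-machine": a positive continuous linear functional on `C(K)`, `K` compact,
takes arbitrarily small values along any bounded sequence of nonneg continuous functions
tending to 0 pointwise. -/
lemma machine (L : (K →ᵇ ℝ) →L[ℝ] ℝ) (hL : ∀ q : K →ᵇ ℝ, 0 ≤ q → 0 ≤ L q)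
    (p : ℕ → K →ᵇ ℝ) (D : ℝ) (hp0 : ∀ n, 0 ≤ p n) (hpD : ∀ n, p n ≤ const K D)
    (hptw : ∀ x, Tendsto (fun n => p n x) atTop (𝓝 0))
    {u : ℝ} (hu : 0 < u) : ∃ n, L (p n) < u := by
  by_contra hcon
  push_neg at hcon
  have Lmono : ∀ {a b : K →ᵇ ℝ}, a ≤ b → L a ≤ L b := by
    intro a b h
    have h1 : 0 ≤ L (b - a) := hL _ (sub_nonneg.mpr h)
    have h2 : L (b - a) = L b - L a := map_sub L b a
    linarith
  -- sup values over windows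
  have hbdd : ∀ n, BddAbove (Set.range fun m => L (T p n m)) := by
    intro n
    refine ⟨L (const K D), ?_⟩
    rintro _ ⟨m, rfl⟩
    exact Lmono (T_le_const p hpD n m)
  set ℓ : ℕ → ℝ := fun n => ⨆ m, L (T p n m) with hℓ
  have hle_l : ∀ n m, L (T p n m) ≤ ℓ n := fun n m => le_ciSup (hbdd n) m
  have hch : ∀ j : ℕ, ∃ m, ℓ j - u/8 * (1/2)^j < L (T p j m) := by
    intro j
    have hβ : (0:ℝ) < u/8 * (1/2)^j := by positivity
    have : ℓ j - u/8 * (1/2)^j < ℓ j := by linarith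
    exact exists_lt_of_lt_ciSup this
  -- recursive choice of window lengths
  set mseq : ℕ → ℕ := fun j => Nat.rec (hch 0).choose (fun j ih => max (hch (j+1)).choose (ih + 1)) j
    with hmseq
  have hmseq_ge : ∀ j, (hch j).choose ≤ mseq j := by
    intro j
    cases j with
    | zero => exact le_rfl
    | succ j => exact le_max_left _ _
  have hmseq_succ : ∀ j, mseq j + 1 ≤ mseq (j+1) := fun j => le_max_right _ _
  set R : ℕ → K →ᵇ ℝ := fun j => T p j (mseq j) with hR
  have hRval : ∀ j, ℓ j - u/8 * (1/2)^j < L (R j) := by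
    intro j
    have h1 := (hch j).choose_spec
    have h2 : T p j (hch j).choose ≤ R j := T_window p le_rfl (by have := hmseq_ge j; omega)
    exact lt_of_lt_of_le h1 (Lmono h2)
  have hEmono : ∀ {i n : ℕ}, i ≤ n → i + mseq i ≤ n + mseq n := by
    have hm : Monotone (fun j => j + mseq j) :=
      monotone_nat_of_le_succ (fun j => by have := hmseq_succ j; omega)
    intro i n h
    exact hm h
  set W : ℕ → ℕ → K →ᵇ ℝ := fun i n => T p i ((n + mseq n) - i) with hW
  have hRW : ∀ i n, i ≤ n → R i ≤ W i n := by
    intro i n h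
    apply T_window p le_rfl
    have h1 : i + mseq i ≤ n + mseq n := hEmono h
    omega
  have hRnW : ∀ i n, i ≤ n → R n ≤ W i n := by
    intro i n h
    apply T_window p h
    omega
  have hWl : ∀ i n, L (W i n) ≤ ℓ i := fun i n => hle_l i _
  -- running minima
  set Q : ℕ → K →ᵇ ℝ := fun n => Nat.rec (R 0) (fun n ih => ih ⊓ R (n+1)) n with hQ
  have hQsucc : ∀ n, Q (n+1) = Q n ⊓ R (n+1) := fun n => rfl
  have hQglb : ∀ n (c : K →ᵇ ℝ), (∀ j, j ≤ n → c ≤ R j) → c ≤ Q n := by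
    intro n
    induction n with
    | zero => intro c h; exact h 0 le_rfl
    | succ n ih =>
      intro c h
      rw [hQsucc]
      exact le_inf (ih c fun j hj => h j (by omega)) (h (n+1) le_rfl)
  have hQle : ∀ n, Q n ≤ R n := by
    intro n
    cases n with
    | zero => exact le_rfl
    | succ n => rw [hQsucc]; exact inf_le_right
  have hQanti : Antitone Q := by
    apply antitone_nat_of_succ_le
    intro n; rw [hQsucc]; exact inf_le_left
  have hQnn : ∀ n, 0 ≤ Q n := fun n => hQglb n 0 fun j _ => T_nonneg p hp0 j _
  have hQptw : ∀ x, Tendsto (fun n => Q n x) atTop (𝓝 0) := by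
    intro x
    rw [Metric.tendsto_atTop]
    intro ε hε
    have := (hptw x).eventually (eventually_lt_nhds (by linarith : (0:ℝ) < ε/2))
    rcases (eventually_atTop.1 this) with ⟨N, hN⟩
    refine ⟨N, fun n hn => ?_⟩
    have h1 : Q n x ≤ R n x := (hQle n) x
    have h2 : R n x ≤ ε/2 := by
      apply T_apply_le p n (mseq n)
      intro k hk
      have h5 := hN k (le_trans hn hk)
      linarith
    have h3 : 0 ≤ Q n x := (hQnn n) x
    rw [Real.dist_eq, sub_zero, abs_of_nonneg h3]
    linarith
  -- key inequality
  have hkey : ∀ n, R n - (∑ i ∈ Finset.range (n+1), (W i n - R i)) ≤ Q n := by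
    intro n
    apply hQglb
    intro j hj
    have hterm : W j n - R j ≤ ∑ i ∈ Finset.range (n+1), (W i n - R i) := by
      apply Finset.single_le_sum (f := fun i => W i n - R i)
      · intro i hi
        exact sub_nonneg.mpr (hRW i n (Nat.lt_succ_iff.mp (Finset.mem_range.1 hi)))
      · exact Finset.mem_range.2 (by omega)
    have h1 : R n - (∑ i ∈ Finset.range (n+1), (W i n - R i)) ≤ R n - (W j n - R j) :=
      sub_le_sub_left hterm _
    have h2 : R n - (W j n - R j) ≤ R j := by
      have h3 : R n ≤ W j n := hRnW j n hj
      have : R n - (W j n - R j) = (R n - W j n) + R j := by abel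
      rw [this]
      have h4 : R n - W j n ≤ 0 := sub_nonpos.mpr h3
      calc (R n - W j n) + R j ≤ 0 + R j := add_le_add_left h4 _
        _ = R j := zero_add _
    exact le_trans h1 h2
  have hLQ : ∀ n, ℓ n - 3*u/8 < L (Q n) := by
    intro n
    have h1 : L (R n - (∑ i ∈ Finset.range (n+1), (W i n - R i))) ≤ L (Q n) :=
      Lmono (hkey n)
    have h2 : L (R n - (∑ i ∈ Finset.range (n+1), (W i n - R i)))
        = L (R n) - ∑ i ∈ Finset.range (n+1), (L (W i n) - L (R i)) := by
      rw [map_sub, map_sum]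
      congr 1
      exact Finset.sum_congr rfl fun i _ => map_sub L _ _
    have h3 : ∑ i ∈ Finset.range (n+1), (L (W i n) - L (R i))
        ≤ ∑ i ∈ Finset.range (n+1), u/8 * (1/2)^i := by
      apply Finset.sum_le_sum
      intro i hi
      have := hRval i
      have := hWl i n
      linarith
    have h4 : ∑ i ∈ Finset.range (n+1), u/8 * (1/2)^i ≤ u/4 := by
      rw [← Finset.mul_sum]
      have := sum_geometric_two_le (n+1)
      nlinarith [le_of_lt hu]
    have h5 := hRval n
    have h6 : u/8 * (1/2)^n ≤ u/8 := by
      nlinarith [pow_le_one₀ (by norm_num : (0:ℝ) ≤ 1/2) (by norm_num : (1:ℝ)/2 ≤ 1) (n := n),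
        le_of_lt hu]
    have := h1
    rw [h2] at this
    nlinarith
  -- Dini gives L (Q n) → 0
  have hQnorm : Tendsto (fun n => ‖Q n‖) atTop (𝓝 0) := dini Q hQanti hQnn hQptw
  have hLQ0 : ∃ n, L (Q n) < u / 8 := by
    have : ∀ n, L (Q n) ≤ ‖L‖ * ‖Q n‖ := fun n => le_trans (le_abs_self _)
      (by simpa using L.le_opNorm (Q n))
    have h8 : (0:ℝ) < u/8 := by linarith
    have := hQnorm.eventually (eventually_lt_nhds (show (0:ℝ) < (u/8)/(‖L‖+1) by positivity))
    rcases this.exists with ⟨n, hn⟩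
    refine ⟨n, ?_⟩
    have hn' : ‖L‖ * ‖Q n‖ ≤ ‖L‖ * ((u/8)/(‖L‖+1)) :=
      mul_le_mul_of_nonneg_left (le_of_lt hn) (norm_nonneg L)
    have : ‖L‖ * ((u/8)/(‖L‖+1)) < u/8 := by
      rw [mul_div_assoc']
      rw [div_lt_iff₀ (by positivity)]
      nlinarith [norm_nonneg L]
    calc L (Q n) ≤ ‖L‖ * ‖Q n‖ := by
          exact le_trans (le_abs_self _) (by simpa using L.le_opNorm (Q n))
      _ ≤ ‖L‖ * ((u/8)/(‖L‖+1)) := hn'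
      _ < u/8 := this
  rcases hLQ0 with ⟨n, hn⟩
  have h1 := hLQ n
  have h2 : L (p n) ≤ ℓ n := by
    have : p n = T p n 0 := rfl
    rw [this]
    exact hle_l n 0
  have := hcon n
  nlinarith



lemma bcf_smul_le' {X : Type*} [TopologicalSpace X] {a : ℝ} (ha : 0 ≤ a) {f g : X →ᵇ ℝ}
    (h : f ≤ g) : a • f ≤ a • g := by
  intro x
  have := mul_le_mul_of_nonneg_left (h x) ha
  simpa [BoundedContinuousFunction.smul_apply, smul_eq_mul] using this

lemma bcf_smul_nonneg' {X : Type*} [TopologicalSpace X] {a : ℝ} (ha : 0 ≤ a) {f : X →ᵇ ℝ}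
    (h : 0 ≤ f) : 0 ≤ a • f := by
  intro x
  have : (0:ℝ) ≤ a * f x := mul_nonneg ha (h x)
  simpa [BoundedContinuousFunction.smul_apply, smul_eq_mul] using this

lemma mazur {K : Type*} [TopologicalSpace K] [CompactSpace K]
    (p : ℕ → K →ᵇ ℝ) (D : ℝ) (hp0 : ∀ n, 0 ≤ p n) (hpD : ∀ n, p n ≤ const K D)
    (hptw : ∀ x, Tendsto (fun n => p n x) atTop (𝓝 0)) {δ : ℝ} (hδ : 0 < δ) :
    ∃ (t : Finset ℕ) (lam : ℕ → ℝ), (∀ i, 0 ≤ lam i) ∧ (∑ i ∈ t, lam i = 1) ∧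
      (∑ i ∈ t, lam i • p i) ≤ const K δ := by
  by_contra hcon
  push_neg at hcon
  set V : Set (K →ᵇ ℝ) := {v | ∃ (t : Finset ℕ) (lam : ℕ → ℝ), (∀ i, 0 ≤ lam i) ∧
      (∑ i ∈ t, lam i = 1) ∧ v = ∑ i ∈ t, lam i • p i} with hV
  set S : Set (K →ᵇ ℝ) := {w | ∃ v ∈ V, v ≤ w} with hS
  have hpV : ∀ n, p n ∈ V := by
    intro n
    refine ⟨{n}, fun _ => 1, fun i => zero_le_one, by simp, by simp⟩
  have hpS : ∀ n, p n ∈ S := fun n => ⟨p n, hpV n, le_rfl⟩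
  have hsum_ext : ∀ (t₁ t₂ : Finset ℕ) (lam : ℕ → ℝ),
      ∑ i ∈ t₁, lam i • p i = ∑ i ∈ t₁ ∪ t₂, (if i ∈ t₁ then lam i else 0) • p i := by
    intro t₁ t₂ lam
    rw [← Finset.sum_subset Finset.subset_union_left
      (fun x _ hx1 => by rw [if_neg hx1, zero_smul])]
    exact Finset.sum_congr rfl (fun i hi => by rw [if_pos hi])
  have hsum_ext' : ∀ (t₁ t₂ : Finset ℕ) (lam : ℕ → ℝ),
      ∑ i ∈ t₂, lam i • p i = ∑ i ∈ t₁ ∪ t₂, (if i ∈ t₂ then lam i else 0) • p i := by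
    intro t₁ t₂ lam
    rw [← Finset.sum_subset Finset.subset_union_right
      (fun x _ hx1 => by rw [if_neg hx1, zero_smul])]
    exact Finset.sum_congr rfl (fun i hi => by rw [if_pos hi])
  have hSconv : Convex ℝ S := by
    rintro w₁ ⟨v₁, ⟨t₁, lam₁, h₁0, h₁1, h₁e⟩, h₁le⟩ w₂ ⟨v₂, ⟨t₂, lam₂, h₂0, h₂1, h₂e⟩, h₂le⟩
      a b ha hb hab
    refine ⟨a • v₁ + b • v₂, ?_, add_le_add (bcf_smul_le' ha h₁le) (bcf_smul_le' hb h₂le)⟩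
    refine ⟨t₁ ∪ t₂, fun i => a * (if i ∈ t₁ then lam₁ i else 0)
        + b * (if i ∈ t₂ then lam₂ i else 0), ?_, ?_, ?_⟩
    · intro i
      have g1 : (0:ℝ) ≤ if i ∈ t₁ then lam₁ i else 0 := by split
                                                           · exact h₁0 i
                                                           · exact le_rfl
      have g2 : (0:ℝ) ≤ if i ∈ t₂ then lam₂ i else 0 := by split
                                                           · exact h₂0 i
                                                           · exact le_rfl
      positivity
    · rw [Finset.sum_add_distrib, ← Finset.mul_sum, ← Finset.mul_sum,
        Finset.sum_ite_mem, Finset.sum_ite_mem,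
        Finset.union_inter_cancel_left, Finset.union_inter_cancel_right, h₁1, h₂1]
      linear_combination hab
    · rw [h₁e, h₂e, hsum_ext t₁ t₂ lam₁, hsum_ext' t₁ t₂ lam₂]
      rw [Finset.smul_sum, Finset.smul_sum, ← Finset.sum_add_distrib]
      apply Finset.sum_congr rfl
      intro i _
      rw [add_smul, mul_smul, mul_smul]
  -- every element of S has norm at least δ
  have hSnorm : ∀ w ∈ S, δ ≤ ‖w‖ := by
    rintro w ⟨v, ⟨t, lam, h0, h1, he⟩, hle⟩
    have hnotle : ¬ (v ≤ const K δ) := by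
      rw [he]; exact hcon t lam h0 h1
    have hex : ∃ x, δ < v x := by
      by_contra hall
      push_neg at hall
      exact hnotle (fun x => hall x)
    rcases hex with ⟨x, hx⟩
    have h2 : v x ≤ w x := hle x
    have h3 : w x ≤ |w x| := le_abs_self _
    have h4 : |w x| ≤ ‖w‖ := by
      have := (w).norm_coe_le_norm x
      simpa [Real.norm_eq_abs] using this
    linarith only [h2, h3, h4, hx]
  have hScl_conv : Convex ℝ (closure S) := hSconv.closure
  have h0notin : (0 : K →ᵇ ℝ) ∉ closure S := by
    intro h0
    have hsub : closure S ⊆ {w : K →ᵇ ℝ | δ ≤ ‖w‖} := by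
      apply closure_minimal
      · exact fun w hw => hSnorm w hw
      · exact isClosed_le continuous_const continuous_norm
    have := hsub h0
    simp at this
    linarith
  obtain ⟨L, u, hLu, hLS⟩ := geometric_hahn_banach_point_closed hScl_conv isClosed_closure h0notin
  rw [map_zero] at hLu
  have hLpos : ∀ q : K →ᵇ ℝ, 0 ≤ q → 0 ≤ L q := by
    intro q hq
    by_contra hneg
    push_neg at hneg
    set s₀ : ℝ := (L (p 0) - u + 1) / (-(L q)) with hs₀
    have hs₀pos : 0 < s₀ := by
      have h1 : u < L (p 0) := hLS _ (subset_closure (hpS 0))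
      apply div_pos (by linarith) (by linarith)
    have hmem : p 0 + s₀ • q ∈ S := by
      refine ⟨p 0, hpV 0, ?_⟩
      have : 0 ≤ s₀ • q := bcf_smul_nonneg' (le_of_lt hs₀pos) hq
      calc p 0 = p 0 + 0 := by rw [add_zero]
        _ ≤ p 0 + s₀ • q := add_le_add_right this _
    have := hLS _ (subset_closure hmem)
    rw [map_add, map_smul] at this
    have hne : -(L q) ≠ 0 := by linarith
    have hmul : s₀ * (-(L q)) = L (p 0) - u + 1 := div_mul_cancel₀ _ hne
    simp only [smul_eq_mul] at this
    nlinarith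
  have hLp : ∀ n, u < L (p n) := fun n => hLS _ (subset_closure (hpS n))
  obtain ⟨n, hn⟩ := machine L hLpos p D hp0 hpD hptw hLu
  exact absurd hn (not_lt.mpr (le_of_lt (hLp n)))



section Cut

variable {X : Type*} [MetricSpace X]

/-- finite unions of closed balls around a dense sequence -/
def Aset (xs : ℕ → X) (k m : ℕ) : Set X :=
  ⋃ i ∈ Finset.range (m+1), Metric.closedBall (xs i) (1/((k:ℝ)+1))

lemma Aset_nonempty (xs : ℕ → X) (k m : ℕ) : (Aset xs k m).Nonempty := by
  have h0 : (0:ℕ) ∈ Finset.range (m+1) := Finset.mem_range.2 (Nat.succ_pos m)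
  have h1 : xs 0 ∈ Metric.closedBall (xs 0) (1/((k:ℝ)+1)) :=
    Metric.mem_closedBall_self (by positivity)
  exact ⟨xs 0, Set.mem_biUnion h0 h1⟩

lemma Aset_mono (xs : ℕ → X) (k : ℕ) {m m' : ℕ} (h : m ≤ m') :
    Aset xs k m ⊆ Aset xs k m' := by
  exact Set.biUnion_subset_biUnion_left
    (Finset.coe_subset.mpr (Finset.range_subset_range.mpr (by omega)))

/-- sharp cutoff functions around `Aset` -/
noncomputable def cut (xs : ℕ → X) (k m : ℕ) : X →ᵇ ℝ :=
  BoundedContinuousFunction.ofNormedAddCommGroup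
    (fun x => max 0 (1 - (2*((k:ℝ)+1)) * infDist x (Aset xs k m)))
    (by
      apply continuous_const.max
      exact continuous_const.sub (continuous_const.mul (continuous_infDist_pt _)))
    1
    (by
      intro x
      have h1 : (0:ℝ) ≤ infDist x (Aset xs k m) := infDist_nonneg
      have h2 : 1 - (2*((k:ℝ)+1)) * infDist x (Aset xs k m) ≤ 1 := by nlinarith
      rw [Real.norm_eq_abs, abs_of_nonneg (le_max_left _ _)]
      exact max_le (by norm_num) h2)

lemma cut_apply (xs : ℕ → X) (k m : ℕ) (x : X) :
    cut xs k m x = max 0 (1 - (2*((k:ℝ)+1)) * infDist x (Aset xs k m)) := rfl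

lemma cut_nonneg (xs : ℕ → X) (k m : ℕ) (x : X) : 0 ≤ cut xs k m x := le_max_left _ _

lemma cut_le_one (xs : ℕ → X) (k m : ℕ) (x : X) : cut xs k m x ≤ 1 := by
  rw [cut_apply]
  have h1 : (0:ℝ) ≤ infDist x (Aset xs k m) := infDist_nonneg
  have h2 : 1 - (2*((k:ℝ)+1)) * infDist x (Aset xs k m) ≤ 1 := by nlinarith
  exact max_le (by norm_num) h2

lemma cut_mono (xs : ℕ → X) (k : ℕ) {m m' : ℕ} (h : m ≤ m') :
    cut xs k m ≤ cut xs k m' := by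
  intro x
  show cut xs k m x ≤ cut xs k m' x
  rw [cut_apply, cut_apply]
  apply max_le_max le_rfl
  have := infDist_le_infDist_of_subset (Aset_mono xs k h) (Aset_nonempty xs k m) (x := x)
  nlinarith

lemma cut_eq_one (xs : ℕ → X) (k m : ℕ) {x : X} (hx : x ∈ Aset xs k m) :
    cut xs k m x = 1 := by
  rw [cut_apply, infDist_zero_of_mem hx]
  norm_num

lemma cut_eventually_one (xs : ℕ → X) (hxs : DenseRange xs) (k : ℕ) (x : X) :
    ∀ᶠ m in atTop, cut xs k m x = 1 := by
  obtain ⟨i, hi⟩ := hxs.exists_dist_lt x (show (0:ℝ) < 1/((k:ℝ)+1) by positivity)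
  rw [eventually_atTop]
  refine ⟨i, fun m hm => ?_⟩
  apply cut_eq_one
  have h0 : i ∈ Finset.range (m+1) := Finset.mem_range.2 (by omega)
  have h1 : x ∈ Metric.closedBall (xs i) (1/((k:ℝ)+1)) := Metric.mem_closedBall.2 (le_of_lt hi)
  exact Set.mem_biUnion h0 h1

lemma cut_eq_zero (xs : ℕ → X) (k m : ℕ) {x : X}
    (hx : 1/(2*((k:ℝ)+1)) < infDist x (Aset xs k m)) : cut xs k m x = 0 := by
  rw [cut_apply]
  have hk : (0:ℝ) < 2*((k:ℝ)+1) := by positivity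
  have : 1 - (2*((k:ℝ)+1)) * infDist x (Aset xs k m) ≤ 0 := by
    have h2 : (2*((k:ℝ)+1)) * (1/(2*((k:ℝ)+1))) ≤ (2*((k:ℝ)+1)) * infDist x (Aset xs k m) :=
      mul_le_mul_of_nonneg_left (le_of_lt hx) (le_of_lt hk)
    rw [mul_one_div_cancel (ne_of_gt hk)] at h2
    linarith
  exact max_eq_left this

end Cut



lemma slope_est {Y : Type*} [TopologicalSpace Y] (F : (Y →ᵇ ℝ) → ℝ)
    (hconv : ConvexOn ℝ Set.univ F) (v : Y →ᵇ ℝ) {c : ℝ} (hc : 0 < c) :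
    F v - F (v - const Y c) ≤ c * (F (v + const Y 1) - F v) := by
  have h1c : (0:ℝ) < 1 + c := by linarith
  have ha : (0:ℝ) ≤ 1/(1+c) := by positivity
  have hb : (0:ℝ) ≤ c/(1+c) := by positivity
  have hab : 1/(1+c) + c/(1+c) = 1 := by field_simp
  have hcomb : (1/(1+c)) • (v - const Y c) + (c/(1+c)) • (v + const Y 1) = v := by
    ext x
    simp only [BoundedContinuousFunction.add_apply, BoundedContinuousFunction.smul_apply,
      BoundedContinuousFunction.sub_apply, BoundedContinuousFunction.const_apply,
      smul_eq_mul]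
    field_simp
    ring
  have h := hconv.2 (Set.mem_univ (v - const Y c)) (Set.mem_univ (v + const Y 1)) ha hb hab
  rw [hcomb] at h
  simp only [smul_eq_mul] at h
  have h2 := mul_le_mul_of_nonneg_left h (le_of_lt h1c)
  have h3 : (1+c) * (1/(1+c) * F (v - const Y c) + c/(1+c) * F (v + const Y 1))
      = F (v - const Y c) + c * F (v + const Y 1) := by field_simp
  rw [h3] at h2
  nlinarith

variable {X : Type*} [MetricSpace X] [CompleteSpace X] [SecondCountableTopology X] [Nonempty X]

lemma tightness (F : (X →ᵇ ℝ) → ℝ) (hconv : ConvexOn ℝ Set.univ F) (hmono : Monotone F)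
    (hup : ∀ (f : X →ᵇ ℝ) (g : ℕ → X →ᵇ ℝ), Monotone g →
      (∀ x, Tendsto (fun n => g n x) atTop (𝓝 (f x))) →
      Tendsto (fun n => F (g n)) atTop (𝓝 (F f)))
    (f : X →ᵇ ℝ) (B : ℝ) (hfB : ∀ x, |f x| ≤ B)
    {ε δ : ℝ} (hε : 0 < ε) (hδ : 0 < δ) :
    ∃ K : Set X, IsCompact K ∧
      ∀ h : X →ᵇ ℝ, (∀ x, -B ≤ h x) → (∀ x ∈ K, f x - δ ≤ h x) →
        F f - ε - (2*δ) * (F (f + const X 1) - F (const X (-B))) ≤ F h := by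
  classical
  set xs := TopologicalSpace.denseSeq X with hxsdef
  have hxs : DenseRange xs := TopologicalSpace.denseRange_denseSeq X
  have hfB' : const X (-B) ≤ f := by
    intro x
    have := (abs_le.1 (hfB x)).1
    show -B ≤ f x
    exact this
  set stepf : (X →ᵇ ℝ) → ℕ → ℕ → (X →ᵇ ℝ) :=
    fun v k m => (v - (f + const X B) * (1 - cut xs k m)) ⊔ const X (-B) with hstepfdef
  have hstep_apply : ∀ v k m x,
      stepf v k m x = max (v x - (f x + B) * (1 - cut xs k m x)) (-B) := fun v k m x => rfl
  have hstep_lb : ∀ v k m, const X (-B) ≤ stepf v k m := fun v k m => le_sup_right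
  have hwnn : ∀ k m (x : X), 0 ≤ (f x + B) * (1 - cut xs k m x) := by
    intro k m x
    apply mul_nonneg
    · have := (abs_le.1 (hfB x)).1; linarith
    · have := cut_le_one xs k m x; linarith
  have hstep_le : ∀ v k m, v ≤ f → stepf v k m ≤ f := by
    intro v k m hvf
    apply sup_le _ hfB'
    intro x
    have h1 := hwnn k m x
    have h2 : v x ≤ f x := hvf x
    show v x - (f x + B) * (1 - cut xs k m x) ≤ f x
    linarith
  have hstep_le_v : ∀ v k m, const X (-B) ≤ v → stepf v k m ≤ v := by
    intro v k m hv
    apply sup_le _ hv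
    intro x
    have h1 := hwnn k m x
    show v x - (f x + B) * (1 - cut xs k m x) ≤ v x
    linarith
  have hstep_mono : ∀ v k, Monotone (fun m => stepf v k m) := by
    intro v k m m' hmm'
    intro x
    show stepf v k m x ≤ stepf v k m' x
    rw [hstep_apply, hstep_apply]
    apply max_le_max _ le_rfl
    have hc : cut xs k m x ≤ cut xs k m' x := cut_mono xs k hmm' x
    have hfx : 0 ≤ f x + B := by have := (abs_le.1 (hfB x)).1; linarith
    have : (f x + B) * (1 - cut xs k m' x) ≤ (f x + B) * (1 - cut xs k m x) :=
      mul_le_mul_of_nonneg_left (by linarith) hfx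
    linarith
  have hstep_tendsto : ∀ v k, const X (-B) ≤ v →
      ∀ x, Tendsto (fun m => stepf v k m x) atTop (𝓝 (v x)) := by
    intro v k hv x
    refine tendsto_const_nhds.congr' ?_
    filter_upwards [cut_eventually_one xs hxs k x] with m hm
    rw [hstep_apply, hm]
    have : v x - (f x + B) * (1 - 1) = v x := by ring
    rw [this]
    exact (max_eq_left (hv x)).symm
  have hchoice : ∀ (k : ℕ) (v : X →ᵇ ℝ), const X (-B) ≤ v → v ≤ f →
      ∃ m, F v - ε * (1/2)^(k+1) < F (stepf v k m) := by
    intro k v h1 h2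
    have ht := hup v (fun m => stepf v k m) (hstep_mono v k) (hstep_tendsto v k h1)
    have hlt : F v - ε*(1/2)^(k+1) < F v := by
      have : (0:ℝ) < ε*(1/2)^(k+1) := by positivity
      linarith
    exact (ht.eventually (eventually_gt_nhds hlt)).exists
  -- recursive construction
  let T0 := {p : (X →ᵇ ℝ) × ℕ // const X (-B) ≤ p.1 ∧ p.1 ≤ f}
  let vrec : ℕ → T0 := fun k => Nat.rec (motive := fun _ => T0)
    ⟨(f, 0), hfB', le_rfl⟩
    (fun k ih => ⟨(stepf ih.1.1 k (hchoice k ih.1.1 ih.2.1 ih.2.2).choose,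
                   (hchoice k ih.1.1 ih.2.1 ih.2.2).choose),
                  hstep_lb _ _ _, hstep_le _ _ _ ih.2.2⟩) k
  set v : ℕ → X →ᵇ ℝ := fun k => (vrec k).1.1 with hvdef
  set mm : ℕ → ℕ := fun k => (vrec (k+1)).1.2 with hmmdef
  have hv0 : v 0 = f := rfl
  have hvsucc : ∀ k, v (k+1) = stepf (v k) k (mm k) := fun k => rfl
  have hvlb : ∀ k, const X (-B) ≤ v k := fun k => (vrec k).2.1
  have hvub : ∀ k, v k ≤ f := fun k => (vrec k).2.2
  have hvF : ∀ k, F (v k) - ε * (1/2)^(k+1) < F (v (k+1)) := by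
    intro k
    exact (hchoice k (v k) (hvlb k) (hvub k)).choose_spec
  have hvFf : ∀ k, F f - ε ≤ F (v k) := by
    have key : ∀ k, F f - ε * (∑ j ∈ Finset.range k, ((1:ℝ)/2)^(j+1)) ≤ F (v k) := by
      intro k
      induction k with
      | zero => simp [hv0]
      | succ k ih =>
        have h1 := hvF k
        rw [Finset.sum_range_succ]
        have hε' : (0:ℝ) ≤ ε := le_of_lt hε
        nlinarith
    intro k
    have h2 : (∑ j ∈ Finset.range k, ((1:ℝ)/2)^(j+1)) ≤ 1 := by
      have h3 := sum_geometric_two_le k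
      have h4 : (∑ j ∈ Finset.range k, ((1:ℝ)/2)^(j+1))
          = (∑ j ∈ Finset.range k, ((1:ℝ)/2)^j) * (1/2) := by
        rw [Finset.sum_mul]
        exact Finset.sum_congr rfl (fun j _ => pow_succ _ _)
      rw [h4]
      nlinarith
    have := key k
    nlinarith
  have hvanti : Antitone v :=
    antitone_nat_of_succ_le (fun k => by rw [hvsucc]; exact hstep_le_v _ _ _ (hvlb k))
  -- the compact set
  set KK : Set X := ⋂ k, {x | infDist x (Aset xs k (mm k)) ≤ 1/(2*((k:ℝ)+1))} with hKKdef
  have hKclosed : IsClosed KK :=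
    isClosed_iInter (fun k => isClosed_le (continuous_infDist_pt _) continuous_const)
  have hhalf : ∀ k : ℕ, 1/(2*((k:ℝ)+1)) < 1/((k:ℝ)+1) := by
    intro k
    have hk : (0:ℝ) < (k:ℝ)+1 := by positivity
    rw [div_lt_div_iff₀ (by positivity) hk]
    nlinarith
  have hnear : ∀ (k : ℕ) (x : X), infDist x (Aset xs k (mm k)) ≤ 1/(2*((k:ℝ)+1)) →
      ∃ i ∈ Finset.range (mm k + 1), dist x (xs i) < 2/((k:ℝ)+1) := by
    intro k x hx
    have hlt : infDist x (Aset xs k (mm k)) < 1/((k:ℝ)+1) := lt_of_le_of_lt hx (hhalf k)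
    obtain ⟨a, haA, hada⟩ := (infDist_lt_iff (Aset_nonempty xs k (mm k))).1 hlt
    obtain ⟨i, hi, hai⟩ := Set.mem_iUnion₂.1 haA
    refine ⟨i, hi, ?_⟩
    have h1 : dist a (xs i) ≤ 1/((k:ℝ)+1) := Metric.mem_closedBall.1 hai
    calc dist x (xs i) ≤ dist x a + dist a (xs i) := dist_triangle _ _ _
      _ < 1/((k:ℝ)+1) + 1/((k:ℝ)+1) := by linarith
      _ = 2/((k:ℝ)+1) := by ring
  have hscale : ∀ {r : ℝ}, 0 < r → ∃ k : ℕ, 2/((k:ℝ)+1) < r := by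
    intro r hr
    obtain ⟨k, hk⟩ := exists_nat_gt (2/r)
    refine ⟨k, ?_⟩
    rw [div_lt_iff₀ (by positivity)]
    rw [div_lt_iff₀ hr] at hk
    nlinarith
  have hKtb : TotallyBounded KK := by
    rw [totallyBounded_iff]
    intro r hr
    obtain ⟨k, hk⟩ := hscale hr
    refine ⟨↑((Finset.range (mm k + 1)).image xs), Finset.finite_toSet _, ?_⟩
    intro x hx
    have hxk : infDist x (Aset xs k (mm k)) ≤ 1/(2*((k:ℝ)+1)) := by
      have := Set.mem_iInter.1 hx k
      exact this
    obtain ⟨i, hi, hdi⟩ := hnear k x hxk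
    apply Set.mem_biUnion
    · exact Finset.mem_coe.2 (Finset.mem_image_of_mem xs hi)
    · exact Metric.mem_ball.2 (by linarith)
  have hKcomp : IsCompact KK := TotallyBounded.isCompact_of_isClosed hKtb hKclosed
  refine ⟨KK, hKcomp, ?_⟩
  intro h hhB hhK
  set Dh : Set X := {x | h x ≤ f x - 2*δ} with hDhdef
  have hDhclosed : IsClosed Dh := isClosed_le h.continuous (f.continuous.sub continuous_const)
  set Cs : ℕ → Set X := fun j =>
    {x | ∀ k, k ≤ j → infDist x (Aset xs k (mm k)) ≤ 1/(2*((k:ℝ)+1))} ∩ Dh with hCsdef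
  have hCsclosed : ∀ j, IsClosed (Cs j) := by
    intro j
    apply IsClosed.inter _ hDhclosed
    have heq : {x : X | ∀ k, k ≤ j → infDist x (Aset xs k (mm k)) ≤ 1/(2*((k:ℝ)+1))}
        = ⋂ k, ⋂ (_ : k ≤ j), {x | infDist x (Aset xs k (mm k)) ≤ 1/(2*((k:ℝ)+1))} := by
      ext x
      simp only [Set.mem_iInter, Set.mem_setOf_eq]
    rw [heq]
    exact isClosed_iInter fun k => isClosed_iInter fun _ =>
      isClosed_le (continuous_infDist_pt _) continuous_const
  have hCsanti : ∀ {j j' : ℕ}, j ≤ j' → Cs j' ⊆ Cs j := by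
    intro j j' hj x hx
    exact ⟨fun k hk => hx.1 k (le_trans hk hj), hx.2⟩
  have hJ : ∃ J, Cs J = ∅ := by
    by_contra hno
    push_neg at hno
    have hne : ∀ j, (Cs j).Nonempty := fun j => hno j
    choose xc hxc using hne
    have htb : TotallyBounded (Set.range xc) := by
      rw [totallyBounded_iff]
      intro r hr
      obtain ⟨k, hk⟩ := hscale hr
      refine ⟨↑((Finset.range (mm k + 1)).image xs) ∪ ↑((Finset.range k).image xc),
        (Finset.finite_toSet _).union (Finset.finite_toSet _), ?_⟩
      rintro _ ⟨j, rfl⟩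
      rcases lt_or_ge j k with hj | hj
      · apply Set.mem_biUnion (Set.mem_union_right _
          (Finset.mem_coe.2 (Finset.mem_image_of_mem xc (Finset.mem_range.2 hj))))
        exact Metric.mem_ball_self hr
      · have hmem := (hxc j).1 k hj
        obtain ⟨i, hi, hdi⟩ := hnear k (xc j) hmem
        apply Set.mem_biUnion (Set.mem_union_left _
          (Finset.mem_coe.2 (Finset.mem_image_of_mem xs hi)))
        exact Metric.mem_ball.2 (by linarith)
    have hclcomp : IsCompact (closure (Set.range xc)) :=
      TotallyBounded.isCompact_of_isClosed htb.closure isClosed_closure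
    obtain ⟨xstar, _, φ, hφ, hlim⟩ :=
      hclcomp.tendsto_subseq (fun n => subset_closure (Set.mem_range_self n))
    have hxstar : ∀ j, xstar ∈ Cs j := by
      intro j
      apply (hCsclosed j).mem_of_tendsto hlim
      rw [eventually_atTop]
      refine ⟨j, fun i hi => ?_⟩
      exact hCsanti (le_trans hi (hφ.le_apply)) (hxc (φ i))
    have hx0 := hxstar 0
    have hxK : xstar ∈ KK := by
      apply Set.mem_iInter.2
      intro k
      exact (hxstar k).1 k le_rfl
    have h1 := hhK xstar hxK
    have h2 : h xstar ≤ f xstar - 2*δ := hx0.2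
    linarith
  obtain ⟨J, hJempty⟩ := hJ
  have hcomp : v (J+1) - const X (2*δ) ≤ h := by
    intro x
    show v (J+1) x - 2*δ ≤ h x
    by_cases hx1 : ∀ k, k ≤ J → infDist x (Aset xs k (mm k)) ≤ 1/(2*((k:ℝ)+1))
    · have hxD : x ∉ Dh := by
        intro hxD
        have hmem : x ∈ Cs J := ⟨hx1, hxD⟩
        rw [hJempty] at hmem
        exact hmem
      have h2 : ¬ (h x ≤ f x - 2*δ) := hxD
      push_neg at h2
      have h3 := hvub (J+1) x
      have h3' : v (J+1) x ≤ f x := h3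
      linarith
    · push_neg at hx1
      obtain ⟨k₀, hk₀J, hk₀⟩ := hx1
      have hcut0 : cut xs k₀ (mm k₀) x = 0 := cut_eq_zero xs k₀ (mm k₀) hk₀
      have hvk₀ : v (k₀+1) x = -B := by
        have e1 : v (k₀+1) x = max (v k₀ x - (f x + B) * (1 - cut xs k₀ (mm k₀) x)) (-B) := by
          rw [hvsucc k₀]; exact hstep_apply _ _ _ _
        rw [e1, hcut0]
        have h4 : v k₀ x ≤ f x := hvub k₀ x
        have heq : v k₀ x - (f x + B) * (1 - 0) = v k₀ x - f x - B := by ring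
        rw [heq]
        exact max_eq_right (by linarith)
      have hmono2 : v (J+1) x ≤ v (k₀+1) x := (hvanti (by omega : k₀+1 ≤ J+1)) x
      have h5 := hhB x
      have h6 : v (J+1) x ≤ -B := by rw [← hvk₀]; exact hmono2
      linarith
  have hFh : F (v (J+1) - const X (2*δ)) ≤ F h := hmono hcomp
  have hslope := slope_est F hconv (v (J+1)) (show (0:ℝ) < 2*δ by linarith)
  have hb1 : F (v (J+1) + const X 1) ≤ F (f + const X 1) := by
    apply hmono
    intro x
    have h9 : v (J+1) x ≤ f x := hvub (J+1) x
    show v (J+1) x + 1 ≤ f x + 1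
    linarith
  have hb2 : F (const X (-B)) ≤ F (v (J+1)) := hmono (hvlb (J+1))
  have hFv := hvFf (J+1)
  have hball : F (v (J+1) + const X 1) - F (v (J+1)) ≤ F (f + const X 1) - F (const X (-B)) := by
    linarith
  have hmul : (2*δ) * (F (v (J+1) + const X 1) - F (v (J+1)))
      ≤ (2*δ) * (F (f + const X 1) - F (const X (-B))) :=
    mul_le_mul_of_nonneg_left hball (by linarith)
  linarith


end Stmt7Aux

open Stmt7Aux

/-- For a convex nondecreasing upward continuous `F : C_b(X) → ℝ` with `F 0 = 0`
on a Polish space, if `(f_n)` is uniformly bounded and converges pointwise to `f ∈ C_b(X)`,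
then `F(f) ≤ liminf F(f_n)`. -/

theorem stmt7 {X : Type*} [TopologicalSpace X] [PolishSpace X]
    (F : (X →ᵇ ℝ) → ℝ) (hconv : ConvexOn ℝ Set.univ F) (hmono : Monotone F)
    (hF0 : F 0 = 0)
    (hup : ∀ (f : X →ᵇ ℝ) (g : ℕ → X →ᵇ ℝ), Monotone g →
      (∀ x, Tendsto (fun n => g n x) atTop (𝓝 (f x))) →
      Tendsto (fun n => F (g n)) atTop (𝓝 (F f)))
    (f : X →ᵇ ℝ) (g : ℕ → X →ᵇ ℝ) (C : ℝ) (hbdd : ∀ n, ‖g n‖ ≤ C)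
    (hlim : ∀ x, Tendsto (fun n => g n x) atTop (𝓝 (f x))) :
    F f ≤ liminf (fun n => F (g n)) atTop := by
  classical
  by_contra hcon
  push_neg at hcon
  obtain ⟨b, hb1, hb2⟩ := exists_between hcon
  -- frequently below b
  have hgle : ∀ n, g n ≤ const X C := by
    intro n x
    have := (g n).norm_coe_le_norm x
    have h2 : |g n x| ≤ C := le_trans (by simpa [Real.norm_eq_abs] using this) (hbdd n)
    show g n x ≤ C
    linarith [(abs_le.1 h2).2]
  have hubd : IsBoundedUnder (· ≤ ·) atTop (fun n => F (g n)) :=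
    isBoundedUnder_of ⟨F (const X C), fun n => hmono (hgle n)⟩
  have hfreq : ∃ᶠ n in atTop, F (g n) < b :=
    frequently_lt_of_liminf_lt (IsBoundedUnder.isCoboundedUnder_ge hubd) hb1
  obtain ⟨φ, hφ, hφb⟩ := extraction_of_frequently_atTop hfreq
  -- truncated subsequence
  set B : ℝ := max C ‖f‖ with hBdef
  have hBC : C ≤ B := le_max_left _ _
  have hBf : ‖f‖ ≤ B := le_max_right _ _
  have hfB : ∀ x, |f x| ≤ B := by
    intro x
    have := f.norm_coe_le_norm x
    rw [Real.norm_eq_abs] at this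
    linarith
  set g' : ℕ → X →ᵇ ℝ := fun i => g (φ i) ⊓ f with hg'def
  have hg'le : ∀ i, g' i ≤ f := fun i => inf_le_right
  have hg'apply : ∀ i x, g' i x = min (g (φ i) x) (f x) := fun i x => rfl
  have hg'b : ∀ i, F (g' i) < b := fun i =>
    lt_of_le_of_lt (hmono inf_le_left) (hφb i)
  have hgabs : ∀ n x, |g n x| ≤ C := by
    intro n x
    have := (g n).norm_coe_le_norm x
    rw [Real.norm_eq_abs] at this
    linarith [hbdd n]
  have hg'lb : ∀ i x, -B ≤ g' i x := by
    intro i x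
    rw [hg'apply]
    apply le_min
    · linarith [(abs_le.1 (hgabs (φ i) x)).1]
    · linarith [(abs_le.1 (hfB x)).1]
  have hg'lim : ∀ x, Tendsto (fun i => g' i x) atTop (𝓝 (f x)) := by
    intro x
    have h1 : Tendsto (fun i => g (φ i) x) atTop (𝓝 (f x)) :=
      (hlim x).comp (hφ.tendsto_atTop)
    have h2 := h1.min (tendsto_const_nhds (x := f x) (f := atTop))
    simpa [hg'apply, min_self] using h2
  -- switch to the complete metric structure
  letI := TopologicalSpace.upgradeIsCompletelyMetrizable X
  rcases isEmpty_or_nonempty X with hX | hX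
  · -- trivial case: X empty
    have hfg : g' 0 = f := by
      ext x
      exact (IsEmpty.false x).elim
    have := hg'b 0
    rw [hfg] at this
    linarith
  -- main case
  set Lam : ℝ := F (f + const X 1) - F (const X (-B)) with hLamdef
  have hLam0 : 0 ≤ Lam := by
    have h1 : const X (-B) ≤ f + const X 1 := by
      intro x
      have := (abs_le.1 (hfB x)).1
      show -B ≤ f x + 1
      linarith
    have := hmono h1
    simp only [hLamdef]
    linarith
  set ε : ℝ := (F f - b)/3 with hεdef
  have hε : 0 < ε := by simp only [hεdef]; linarith
  set δ : ℝ := ε / (2 * (Lam + 1)) with hδdef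
  have hδ : 0 < δ := by
    apply div_pos hε
    nlinarith
  have hδLam : (2*δ) * Lam ≤ ε := by
    rw [hδdef]
    rw [div_eq_mul_inv]
    have h1 : (0:ℝ) < 2 * (Lam + 1) := by nlinarith
    have : 2 * (ε * (2 * (Lam + 1))⁻¹) * Lam = ε * (Lam / (Lam + 1)) := by
      field_simp
    rw [this]
    have h2 : Lam / (Lam + 1) ≤ 1 := by
      rw [div_le_one (by nlinarith)]
      linarith
    nlinarith
  obtain ⟨KK, hKcomp, hKmain⟩ := tightness F hconv hmono hup f B hfB hε hδ
  -- Mazur on the compact set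
  haveI : CompactSpace ↥KK := isCompact_iff_compactSpace.1 hKcomp
  set incl : C(↥KK, X) := ⟨Subtype.val, continuous_subtype_val⟩ with hincl
  set p : ℕ → ↥KK →ᵇ ℝ := fun i => (f - g' i).compContinuous incl with hpdef
  have hp_apply : ∀ i (y : ↥KK), p i y = f y.val - g' i y.val := fun i y => rfl
  have hp0 : ∀ i, 0 ≤ p i := by
    intro i y
    have h1 : g' i y.val ≤ f y.val := hg'le i y.val
    show (0:ℝ) ≤ p i y
    rw [hp_apply]
    linarith
  have hpD : ∀ i, p i ≤ const ↥KK (2*B) := by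
    intro i y
    show p i y ≤ 2*B
    rw [hp_apply]
    have h1 := (abs_le.1 (hfB y.val)).2
    have h2 := hg'lb i y.val
    linarith
  have hptw : ∀ y : ↥KK, Tendsto (fun i => p i y) atTop (𝓝 0) := by
    intro y
    have h1 := (tendsto_const_nhds (x := f y.val) (f := atTop)).sub (hg'lim y.val)
    simpa [hp_apply] using h1
  obtain ⟨t, lam, hlam0, hlam1, hlamle⟩ := mazur p (2*B) hp0 hpD hptw hδ
  -- the convex combination
  set h : X →ᵇ ℝ := ∑ i ∈ t, lam i • g' i with hhdef
  have hh_apply : ∀ x, h x = ∑ i ∈ t, lam i * g' i x := by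
    intro x
    rw [hhdef]
    rw [BoundedContinuousFunction.coe_sum]
    rw [Finset.sum_apply]
    apply Finset.sum_congr rfl
    intro i _
    rfl
  have hhB : ∀ x, -B ≤ h x := by
    intro x
    rw [hh_apply]
    have h1 : ∑ i ∈ t, lam i * (-B) ≤ ∑ i ∈ t, lam i * g' i x :=
      Finset.sum_le_sum (fun i _ => mul_le_mul_of_nonneg_left (hg'lb i x) (hlam0 i))
    have h2 : ∑ i ∈ t, lam i * (-B) = -B := by
      rw [← Finset.sum_mul, hlam1, one_mul]
    linarith
  have hhK : ∀ x ∈ KK, f x - δ ≤ h x := by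
    intro x hx
    have hy := hlamle ⟨x, hx⟩
    have hy2 : (∑ i ∈ t, lam i • p i) ⟨x, hx⟩ ≤ δ := hy
    have hy3 : (∑ i ∈ t, lam i • p i) (⟨x, hx⟩ : ↥KK) = ∑ i ∈ t, lam i * (f x - g' i x) := by
      rw [BoundedContinuousFunction.coe_sum, Finset.sum_apply]
      apply Finset.sum_congr rfl
      intro i _
      rfl
    rw [hy3] at hy2
    have hy4 : ∑ i ∈ t, lam i * (f x - g' i x) = f x - h x := by
      rw [hh_apply]
      calc ∑ i ∈ t, lam i * (f x - g' i x)
          = ∑ i ∈ t, (lam i * f x - lam i * g' i x) :=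
            Finset.sum_congr rfl (fun i _ => by ring)
        _ = (∑ i ∈ t, lam i * f x) - ∑ i ∈ t, lam i * g' i x := Finset.sum_sub_distrib _ _
        _ = f x - ∑ i ∈ t, lam i * g' i x := by rw [← Finset.sum_mul, hlam1, one_mul]
    rw [hy4] at hy2
    linarith
  have hmain := hKmain h hhB hhK
  -- Jensen
  have hjensen : F h ≤ ∑ i ∈ t, lam i * F (g' i) := by
    have := hconv.map_sum_le (t := t) (w := lam) (p := g') (fun i _ => hlam0 i) hlam1
      (fun i _ => Set.mem_univ _)
    simpa [smul_eq_mul] using this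
  have hsum_b : ∑ i ∈ t, lam i * F (g' i) ≤ b := by
    have h1 : ∑ i ∈ t, lam i * F (g' i) ≤ ∑ i ∈ t, lam i * b :=
      Finset.sum_le_sum (fun i _ => mul_le_mul_of_nonneg_left (le_of_lt (hg'b i)) (hlam0 i))
    rw [← Finset.sum_mul, hlam1, one_mul] at h1
    exact h1
  rw [← hLamdef] at hmain
  have hfinal : b < F h := by
    have : F f - ε - (2*δ)*Lam ≥ F f - 2*ε := by nlinarith
    have h2 : F f - 2*ε = b + ε := by rw [hεdef]; ring
    linarith
  linarith
end

section
/- Let X be a Polish space and let F : C_b(X) → ℝ be a convex nondecreasing function with F(0) = 0. If F is downward continuous at 0, i.e., for every sequence h_n ∈ C_b(X) with h_n ↓ 0 pointwise on X one has F(h_n) ↓ 0, then F is downward continuous at every f ∈ C_b(X): for every f ∈ C_b(X) and every sequence h_n ∈ C_b(X) with h_n ↓ 0 pointwise, F(f + h_n) ↓ F(f). Consequently, a nondecreasing convex function that is downward continuous at one point is downward continuous at all points. -/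
open Filter Topology BoundedContinuousFunction

/-- A convex nondecreasing `F : C_b(X) → ℝ` with `F 0 = 0` that is downward
continuous at some point (e.g. at `0`: `h_n ↓ 0` pointwise implies `F(h_n) ↓ 0`) is downward
continuous at every `f`: for every sequence `h_n ↓ 0` pointwise, `F(f + h_n) ↓ F(f)`. -/
theorem stmt10 {X : Type*} [TopologicalSpace X] [PolishSpace X]
    (F : (X →ᵇ ℝ) → ℝ) (hconv : ConvexOn ℝ Set.univ F) (hmono : Monotone F)
    (hF0 : F 0 = 0)
    (hpoint : ∃ f₀ : X →ᵇ ℝ, ∀ h : ℕ → X →ᵇ ℝ, Antitone h →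
      (∀ x, Tendsto (fun n => h n x) atTop (𝓝 (0 : ℝ))) →
      Tendsto (fun n => F (f₀ + h n)) atTop (𝓝 (F f₀))) :
    ∀ f : X →ᵇ ℝ, ∀ h : ℕ → X →ᵇ ℝ, Antitone h →
      (∀ x, Tendsto (fun n => h n x) atTop (𝓝 (0 : ℝ))) →
      Tendsto (fun n => F (f + h n)) atTop (𝓝 (F f)) := by
  obtain ⟨f₀, hf₀⟩ := hpoint
  intro f h hanti htend
  -- each h n is nonnegative
  have hpos : ∀ n, (0 : X →ᵇ ℝ) ≤ h n := by
    intro n x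
    have hev : ∀ᶠ m in atTop, h m x ≤ h n x := by
      filter_upwards [eventually_ge_atTop n] with m hm
      exact (hanti hm) x
    simpa using le_of_tendsto (htend x) hev
  have hle : ∀ n, F f ≤ F (f + h n) := fun n =>
    hmono (le_add_of_nonneg_right (hpos n))
  have hFanti : Antitone fun n => F (f + h n) := by
    intro m n hmn
    exact hmono (add_le_add_right (hanti hmn) f)
  have hbdd : BddBelow (Set.range fun n => F (f + h n)) :=
    ⟨F f, by rintro _ ⟨n, rfl⟩; exact hle n⟩
  set L := ⨅ n, F (f + h n) with hL
  have hTL : Tendsto (fun n => F (f + h n)) atTop (𝓝 L) :=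
    tendsto_atTop_ciInf hFanti hbdd
  have hFfL : F f ≤ L := le_ciInf hle
  set g₁ : X →ᵇ ℝ := f + (f - f₀) with hg₁
  -- key upper bound on L for each t ∈ (0, 1/2)
  have key : ∀ t : ℝ, t ∈ Set.Ioo (0 : ℝ) (1/2) →
      L ≤ F f + t * (F f₀ + F g₁ - 2 * F f) := by
    intro t ht
    have ht0 : 0 < t := ht.1
    have ht1 : t < 1 := lt_trans ht.2 (by norm_num)
    have h1t : 0 < 1 - t := by linarith
    set s : ℝ := t / (1 - t) with hs
    have hs0 : 0 < s := div_pos ht0 h1t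
    have hs1 : s < 1 := by
      rw [hs, div_lt_one h1t]; linarith [ht.2]
    have hst : (1 - t) * s = t := by
      rw [hs]; field_simp
    set g : X →ᵇ ℝ := f + s • (f - f₀) with hg
    -- F (f₀ + t⁻¹ • h n) → F f₀
    have hT1 : Tendsto (fun n => F (f₀ + t⁻¹ • h n)) atTop (𝓝 (F f₀)) := by
      apply hf₀
      · intro m n hmn x
        simp only [BoundedContinuousFunction.coe_smul, Pi.smul_apply, smul_eq_mul]
        exact mul_le_mul_of_nonneg_left ((hanti hmn) x) (by positivity)
      · intro x
        have := (htend x).const_mul t⁻¹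
        simpa using this
    -- convexity bound 1
    have hb1 : ∀ n, F (f + h n) ≤ (1 - t) * F g + t * F (f₀ + t⁻¹ • h n) := by
      intro n
      have hc := hconv.2 (Set.mem_univ g) (Set.mem_univ (f₀ + t⁻¹ • h n))
        (show (0:ℝ) ≤ 1 - t from h1t.le) (show (0:ℝ) ≤ t from ht0.le)
        (show (1 - t) + t = 1 by ring)
      have e1 : t • (t⁻¹ • h n) = h n := by
        rw [smul_smul, mul_inv_cancel₀ ht0.ne', one_smul]
      have heq : (1 - t) • g + t • (f₀ + t⁻¹ • h n) = f + h n := by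
        rw [hg, smul_add (1 - t), smul_smul, hst, smul_add t, e1]
        module
      rw [heq] at hc
      simpa only [smul_eq_mul] using hc
    have hLb : L ≤ (1 - t) * F g + t * F f₀ := by
      refine ge_of_tendsto ((hT1.const_mul t).const_add ((1 - t) * F g)) ?_
      filter_upwards with n
      exact le_trans (ciInf_le hbdd n) (hb1 n)
    -- convexity bound 2
    have hb2 : F g ≤ (1 - s) * F f + s * F g₁ := by
      have hc := hconv.2 (Set.mem_univ f) (Set.mem_univ g₁)
        (show (0:ℝ) ≤ 1 - s by linarith) (show (0:ℝ) ≤ s from hs0.le)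
        (show (1 - s) + s = 1 by ring)
      have heq : (1 - s) • f + s • g₁ = g := by
        rw [hg, hg₁]
        match_scalars <;> try ring
      rw [heq] at hc
      simpa only [smul_eq_mul] using hc
    have hmain : L ≤ (1 - t) * ((1 - s) * F f + s * F g₁) + t * F f₀ := by
      have := mul_le_mul_of_nonneg_left hb2 h1t.le
      linarith
    have hexp : (1 - t) * ((1 - s) * F f + s * F g₁) + t * F f₀
        = F f + t * (F f₀ + F g₁ - 2 * F f) := by
      linear_combination (F g₁ - F f) * hst
    linarith [hmain, le_of_eq hexp]
  -- conclude L ≤ F f by letting t → 0⁺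
  have hLle : L ≤ F f := by
    have hT : Tendsto (fun t : ℝ => F f + t * (F f₀ + F g₁ - 2 * F f))
        (𝓝[>] (0:ℝ)) (𝓝 (F f)) := by
      have h1 : Tendsto (fun t : ℝ => F f + t * (F f₀ + F g₁ - 2 * F f))
          (𝓝 (0:ℝ)) (𝓝 (F f + 0 * (F f₀ + F g₁ - 2 * F f))) :=
        (tendsto_id.mul_const _).const_add (F f)
      simpa using h1.mono_left nhdsWithin_le_nhds
    refine ge_of_tendsto hT ?_
    filter_upwards [Ioo_mem_nhdsGT_of_mem
      (by norm_num : (0:ℝ) ∈ Set.Ico 0 (1/2))] with t ht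
    exact key t ht
  have hEq : L = F f := le_antisymm hLle hFfL
  rwa [hEq] at hTL
end

section
/- Let X be a Polish space and let Γ be a set of finite nonnegative Borel measures on X that is bounded in total mass (sup{μ(X) : μ ∈ Γ} < ∞). Then Γ is uniformly tight if and only if for every sequence h_n ∈ C_b(X) with h_n ↓ 0 pointwise on X, one has sup{∫ h_n dμ : μ ∈ Γ} → 0 as n → ∞. -/
open MeasureTheory BoundedContinuousFunction Filter Topology Set Metric
open scoped NNReal ENNReal

/-- Dini-type lemma: uniform smallness on a compact set. -/
lemma dini_aux {X : Type*} [TopologicalSpace X] {L : Set X} (hL : IsCompact L)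
    (h : ℕ → X →ᵇ ℝ) (hmono : Antitone h)
    (hlim : ∀ x, Tendsto (fun n => h n x) atTop (𝓝 (0:ℝ)))
    {δ : ℝ} (hδ : 0 < δ) :
    ∃ N : ℕ, ∀ n ≥ N, ∀ x ∈ L, h n x ≤ δ := by
  obtain ⟨N, hN⟩ := hL.elim_directed_cover (fun n => {x | h n x < δ})
    (fun n => isOpen_lt (h n).continuous continuous_const)
    (fun x _ => mem_iUnion.2 (((hlim x).eventually_lt_const hδ).exists))
    (fun m n => ⟨max m n, fun x hx => lt_of_le_of_lt (hmono (le_max_left m n) x) hx,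
      fun x hx => lt_of_le_of_lt (hmono (le_max_right m n) x) hx⟩)
  exact ⟨N, fun n hn x hx => le_of_lt (lt_of_le_of_lt (hmono hn x) (hN hx))⟩

/-- A set `Γ` of finite nonnegative Borel measures on a Polish space `X` that is
bounded in total mass is uniformly tight if and only if for every sequence `h_n ↓ 0` in
`C_b(X)` one has `sup {∫ h_n dμ : μ ∈ Γ} → 0`. -/
theorem stmt11 {X : Type*} [TopologicalSpace X] [PolishSpace X]
    [MeasurableSpace X] [BorelSpace X]
    (Γ : Set (FiniteMeasure X)) (C : ℝ≥0) (hbdd : ∀ μ ∈ Γ, μ.mass ≤ C) :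
    (∀ ε : ℝ, 0 < ε → ∃ L : Set X, IsCompact L ∧
        ∀ μ ∈ Γ, (μ : Measure X) Lᶜ ≤ ENNReal.ofReal ε) ↔
    (∀ h : ℕ → X →ᵇ ℝ, Antitone h →
      (∀ x, Tendsto (fun n => h n x) atTop (𝓝 (0 : ℝ))) →
      ∀ ε : ℝ, 0 < ε → ∃ N : ℕ, ∀ n ≥ N, ∀ μ ∈ Γ, ∫ x, h n x ∂(μ : Measure X) ≤ ε) := by
  constructor
  · -- tight → integrals go to 0 uniformly
    intro htight h hmono hlim ε hε
    have hnonneg : ∀ n x, 0 ≤ h n x := fun n x =>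
      le_of_tendsto (hlim x) (eventually_atTop.2 ⟨n, fun m hm => hmono hm x⟩)
    set M := ‖h 0‖ with hM
    have hMnn : (0:ℝ) ≤ M := norm_nonneg _
    obtain ⟨L, hLc, hLμ⟩ := htight (ε / (2 * (M + 1))) (by positivity)
    obtain ⟨N, hN⟩ := dini_aux hLc h hmono hlim (δ := ε / (2 * ((C:ℝ) + 1))) (by positivity)
    refine ⟨N, fun n hn μ hμ => ?_⟩
    have hint : Integrable (fun x => h n x) (μ : Measure X) := (h n).integrable _
    have hLm : MeasurableSet L := hLc.isClosed.measurableSet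
    have hmassL : ((μ : Measure X) L).toReal ≤ (C:ℝ) := by
      have h1 : (μ : Measure X) L ≤ (C : ℝ≥0∞) := by
        refine le_trans (measure_mono (subset_univ L)) ?_
        rw [← FiniteMeasure.ennreal_mass]
        exact_mod_cast hbdd μ hμ
      exact ENNReal.toReal_le_of_le_ofReal C.coe_nonneg (by simpa using h1)
    have hmassLc : ((μ : Measure X) Lᶜ).toReal ≤ ε / (2 * (M + 1)) := by
      refine ENNReal.toReal_le_of_le_ofReal (by positivity) (hLμ μ hμ)
    have h1 : ∫ x in L, h n x ∂(μ : Measure X) ≤ ε / 2 := by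
      have hb := norm_setIntegral_le_of_norm_le_const (μ := (μ : Measure X))
        (f := fun x => h n x) (C := ε / (2 * ((C:ℝ) + 1))) (measure_lt_top _ L)
        (fun x hx => by
          rw [Real.norm_eq_abs, abs_of_nonneg (hnonneg n x)]; exact hN n hn x hx)
      refine le_trans (le_trans (le_abs_self _) hb) ?_
      have : ε / (2 * ((C:ℝ) + 1)) * ((μ : Measure X) L).toReal
          ≤ ε / (2 * ((C:ℝ) + 1)) * ((C:ℝ) + 1) := by
        refine mul_le_mul_of_nonneg_left (le_trans hmassL (by linarith)) (by positivity)
      refine le_trans this (le_of_eq ?_)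
      field_simp
    have h2 : ∫ x in Lᶜ, h n x ∂(μ : Measure X) ≤ ε / 2 := by
      have hb := norm_setIntegral_le_of_norm_le_const (μ := (μ : Measure X))
        (f := fun x => h n x) (C := M + 1) (measure_lt_top _ Lᶜ)
        (fun x _ => by
          rw [Real.norm_eq_abs, abs_of_nonneg (hnonneg n x)]
          calc h n x ≤ h 0 x := hmono (Nat.zero_le n) x
            _ ≤ |h 0 x| := le_abs_self _
            _ ≤ M := (h 0).norm_coe_le_norm x
            _ ≤ M + 1 := by linarith)
      refine le_trans (le_trans (le_abs_self _) hb) ?_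
      have : (M + 1) * ((μ : Measure X) Lᶜ).toReal ≤ (M + 1) * (ε / (2 * (M + 1))) :=
        mul_le_mul_of_nonneg_left hmassLc (by positivity)
      refine le_trans this (le_of_eq ?_)
      rw [mul_div_assoc']
      rw [mul_comm (M+1) ε, mul_comm 2 (M+1), ← div_div, mul_div_assoc,
        div_self (by positivity : (M+1:ℝ) ≠ 0), mul_one]
    calc ∫ x, h n x ∂(μ : Measure X)
        = (∫ x in L, h n x ∂(μ : Measure X)) + ∫ x in Lᶜ, h n x ∂(μ : Measure X) :=
          (integral_add_compl hLm hint).symm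
      _ ≤ ε / 2 + ε / 2 := add_le_add h1 h2
      _ = ε := by ring
  · -- integral condition → tight
    intro hcond ε hε
    cases isEmpty_or_nonempty X with
    | inl hempty =>
      refine ⟨∅, isCompact_empty, fun μ _ => ?_⟩
      have : (∅ : Set X)ᶜ = (∅ : Set X) := by
        simp [eq_empty_of_isEmpty]
      rw [this]
      simp
    | inr hne =>
      letI := TopologicalSpace.upgradeIsCompletelyMetrizable X
      set z : ℕ → X := TopologicalSpace.denseSeq X with hz
      have hzdense : DenseRange z := TopologicalSpace.denseRange_denseSeq X
      -- the point sets
      set S : ℕ → Set X := fun n => z '' {k | k ≤ n} with hS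
      have hSne : ∀ n, (S n).Nonempty := fun n => ⟨z 0, ⟨0, Nat.zero_le n, rfl⟩⟩
      have hSfin : ∀ n, (S n).Finite := fun n => (Set.finite_Iic n).image z
      have hSmono : Monotone S := fun a b hab =>
        Set.image_mono (f := z) (fun k hk => le_trans hk hab)
      -- auxiliary function family
      have key : ∀ m : ℕ, ∃ n : ℕ, ∀ μ ∈ Γ,
          (μ : Measure X) {x | 2/(m+1 : ℝ) ≤ infDist x (S n)} ≤
            ENNReal.ofReal (ε / 2 / 2 ^ m) := by
        intro m
        set g : ℕ → X → ℝ := fun n x => max 0 (min 1 ((m+1 : ℝ) * infDist x (S n) - 1))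
          with hg
        have hgcont : ∀ n, Continuous (g n) := fun n =>
          continuous_const.max (continuous_const.min
            ((continuous_const.mul (continuous_infDist_pt (S n))).sub continuous_const))
        have hgbd : ∀ n x, ‖g n x‖ ≤ 1 := by
          intro n x
          rw [Real.norm_eq_abs, abs_of_nonneg (le_max_left _ _)]
          exact max_le zero_le_one (min_le_left _ _)
        set h : ℕ → X →ᵇ ℝ := fun n =>
          ofNormedAddCommGroup (g n) (hgcont n) 1 (hgbd n) with hh
        have hcoe : ∀ n x, h n x = g n x := fun n x => rfl
        have hmono : Antitone h := by
          intro a b hab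
          intro x
          show g b x ≤ g a x
          refine max_le_max le_rfl (min_le_min le_rfl ?_)
          have := infDist_le_infDist_of_subset (hSmono hab) (hSne a) (x := x)
          nlinarith [this]
        have hlim : ∀ x, Tendsto (fun n => h n x) atTop (𝓝 (0:ℝ)) := by
          intro x
          obtain ⟨k, hk⟩ := hzdense.exists_dist_lt x
            (by positivity : (0:ℝ) < 1/(m+1))
          have hev : ∀ n ≥ k, h n x = 0 := by
            intro n hn
            rw [hcoe]
            have hd : infDist x (S n) ≤ 1/(m+1 : ℝ) := by
              refine le_trans (infDist_le_dist_of_mem ⟨k, hn, rfl⟩) (le_of_lt hk)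
            have : (m+1:ℝ) * infDist x (S n) - 1 ≤ 0 := by
              have h1 : (m+1:ℝ) * infDist x (S n) ≤ (m+1:ℝ) * (1/(m+1)) :=
                mul_le_mul_of_nonneg_left hd (by positivity)
              rw [mul_one_div, div_self (by positivity : (m+1:ℝ) ≠ 0)] at h1
              linarith
            have hmin : min 1 ((m+1:ℝ) * infDist x (S n) - 1) ≤ 0 :=
              le_trans (min_le_right _ _) this
            simp [hg, max_eq_left hmin]
          refine tendsto_atTop_of_eventually_const (i₀ := k) hev
        obtain ⟨N, hN⟩ := hcond h hmono hlim (ε / 2 / 2 ^ m) (by positivity)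
        refine ⟨N, fun μ hμ => ?_⟩
        set A : Set X := {x | 2/(m+1 : ℝ) ≤ infDist x (S N)} with hA
        have hAm : MeasurableSet A :=
          (isClosed_le continuous_const (continuous_infDist_pt (S N))).measurableSet
        have hind : ∀ x ∈ A, (1:ℝ) ≤ h N x := by
          intro x hx
          rw [hcoe]
          have hd : (2:ℝ)/(m+1) ≤ infDist x (S N) := hx
          have h1 : (1:ℝ) ≤ (m+1:ℝ) * infDist x (S N) - 1 := by
            have : (m+1:ℝ) * (2/(m+1)) ≤ (m+1:ℝ) * infDist x (S N) :=
              mul_le_mul_of_nonneg_left hd (by positivity)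
            rw [mul_div_assoc', mul_comm, mul_div_assoc,
              div_self (by positivity : (m+1:ℝ) ≠ 0), mul_one] at this
            linarith
          have : (1:ℝ) ≤ min 1 ((m+1:ℝ) * infDist x (S N) - 1) := le_min le_rfl h1
          exact le_trans this (le_max_right _ _)
        have hnonneg : (0 : X → ℝ) ≤ᵐ[(μ : Measure X)] fun x => h N x := by
          refine Filter.Eventually.of_forall (fun x => ?_)
          show (0:ℝ) ≤ g N x
          exact le_max_left _ _
        have hint : Integrable (fun x => h N x) (μ : Measure X) := (h N).integrable _
        have hlow : ((μ : Measure X) A).toReal ≤ ∫ x, h N x ∂(μ : Measure X) := by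
          have h1 := setIntegral_ge_of_const_le (μ := (μ : Measure X)) (c := 1)
            hAm (measure_ne_top _ A) hind hint.integrableOn
          have h2 := setIntegral_le_integral (μ := (μ : Measure X)) (s := A) hint hnonneg
          simpa only [smul_eq_mul, mul_one, Measure.real] using le_trans h1 h2
        have := le_trans hlow (hN N le_rfl μ hμ)
        exact ENNReal.le_ofReal_iff_toReal_le (measure_ne_top _ A) (by positivity) |>.2 this
      choose n hn using key
      -- the compact set
      set K : Set X := ⋂ m : ℕ, {x | infDist x (S (n m)) ≤ 2/((m:ℝ)+1)} with hK
      have hKclosed : IsClosed K :=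
        isClosed_iInter (fun m => isClosed_le (continuous_infDist_pt _) continuous_const)
      have hKtb : TotallyBounded K := by
        rw [Metric.totallyBounded_iff]
        intro δ hδ
        obtain ⟨m, hm⟩ := exists_nat_gt (3/δ)
        have hmpos : (0:ℝ) < m + 1 := by positivity
        have h3 : 3/(m+1 : ℝ) < δ := by
          rw [div_lt_iff₀ hmpos]
          have : 3/δ < m + 1 := lt_trans hm (by linarith)
          calc (3:ℝ) = δ * (3/δ) := by field_simp
            _ < δ * (m+1) := by
              exact mul_lt_mul_of_pos_left this hδ
        refine ⟨S (n m), hSfin (n m), fun x hx => ?_⟩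
        have hxm : infDist x (S (n m)) ≤ 2/((m:ℝ)+1) := Set.mem_iInter.1 hx m
        have hlt : infDist x (S (n m)) < 3/((m:ℝ)+1) := by
          refine lt_of_le_of_lt hxm ?_
          rw [div_lt_div_iff₀ hmpos hmpos]
          linarith
        obtain ⟨y, hy, hdy⟩ := (infDist_lt_iff (hSne (n m))).1 hlt
        exact Set.mem_biUnion hy (Metric.mem_ball.2 (lt_trans hdy h3))
      have hKcompact : IsCompact K := hKtb.isCompact_of_isClosed hKclosed
      refine ⟨K, hKcompact, fun μ hμ => ?_⟩
      have hsub : Kᶜ ⊆ ⋃ m : ℕ, {x | 2/((m:ℝ)+1) ≤ infDist x (S (n m))} := by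
        intro x hx
        rw [Set.mem_compl_iff, hK, Set.mem_iInter] at hx
        push_neg at hx
        obtain ⟨m, hm⟩ := hx
        refine Set.mem_iUnion.2 ⟨m, ?_⟩
        show 2/((m:ℝ)+1) ≤ infDist x (S (n m))
        exact le_of_lt (not_le.1 hm)
      calc (μ : Measure X) Kᶜ
          ≤ ∑' m : ℕ, (μ : Measure X) {x | 2/((m:ℝ)+1) ≤ infDist x (S (n m))} :=
            le_trans (measure_mono hsub) (measure_iUnion_le _)
        _ ≤ ∑' m, ENNReal.ofReal (ε / 2 / 2 ^ m) := ENNReal.tsum_le_tsum (fun m => hn m μ hμ)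
        _ = ENNReal.ofReal (∑' m, ε / 2 / 2 ^ m) := by
            rw [ENNReal.ofReal_tsum_of_nonneg (fun m => by positivity)
              (summable_geometric_two' ε)]
        _ = ENNReal.ofReal ε := by rw [tsum_geometric_two' ε]
end

section
/- Let X be a Polish space and let F : C_b(X) → ℝ be a convex nondecreasing downward continuous function with F(0) = 0. Then for every f ∈ C_b(X) there exists a finite nonnegative Borel measure μ on X such that ∫ f dμ = F(f) + F*(μ), where F*(μ) = sup{∫ h dμ − F(h) : h ∈ C_b(X)}; equivalently, F(f + g) ≥ F(f) + ∫ g dμ for all g ∈ C_b(X), so the epigraph of F has a supporting functional at every point (f, F(f)). -/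
open MeasureTheory BoundedContinuousFunction Filter Topology Metric Set
open scoped ENNReal NNReal Pointwise


section Riesz

variable {X : Type*} [MetricSpace X] [CompleteSpace X] [SecondCountableTopology X]
  [MeasurableSpace X] [BorelSpace X]

/-- admissible test functions for a set `K`. -/
def Adm (K : Set X) : Set (X →ᵇ ℝ) := {g | (∀ x, 0 ≤ g x) ∧ ∀ x ∈ K, 1 ≤ g x}

noncomputable def lam0 (L : (X →ᵇ ℝ) →ₗ[ℝ] ℝ) (K : Set X) : ℝ := sInf (L '' Adm K)

variable (L : (X →ᵇ ℝ) →ₗ[ℝ] ℝ)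
  (hpos : ∀ g : X →ᵇ ℝ, (∀ x, 0 ≤ g x) → 0 ≤ L g)

set_option linter.unusedSectionVars false
include hpos

theorem Lmono {g h : X →ᵇ ℝ} (hle : ∀ x, g x ≤ h x) : L g ≤ L h := by
  have := hpos (h - g) (fun x => by simpa using sub_nonneg.2 (hle x))
  simpa [map_sub] using this

omit hpos in
theorem one_mem_Adm (K : Set X) : const X (1:ℝ) ∈ Adm K :=
  ⟨fun x => zero_le_one, fun x _ => le_refl _⟩

omit hpos in
theorem Adm_nonempty (K : Set X) : (L '' Adm K).Nonempty := ⟨_, _, one_mem_Adm K, rfl⟩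

theorem Adm_bddBelow (K : Set X) : BddBelow (L '' Adm K) := by
  refine ⟨0, ?_⟩
  rintro r ⟨g, hg, rfl⟩
  exact hpos g hg.1

theorem lam0_nonneg (K : Set X) : 0 ≤ lam0 L K :=
  le_csInf (Adm_nonempty L K) (by rintro r ⟨g, hg, rfl⟩; exact hpos g hg.1)

theorem lam0_le {K : Set X} {g : X →ᵇ ℝ} (hg : g ∈ Adm K) : lam0 L K ≤ L g :=
  csInf_le (Adm_bddBelow L hpos K) ⟨g, hg, rfl⟩

theorem lam0_mono {K₁ K₂ : Set X} (h : K₁ ⊆ K₂) : lam0 L K₁ ≤ lam0 L K₂ := by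
  apply le_csInf (Adm_nonempty L K₂)
  rintro r ⟨g, hg, rfl⟩
  exact lam0_le L hpos ⟨hg.1, fun x hx => hg.2 x (h hx)⟩

theorem lam0_union_le (K₁ K₂ : Set X) :
    lam0 L (K₁ ∪ K₂) ≤ lam0 L K₁ + lam0 L K₂ := by
  have key : ∀ g₁ ∈ Adm K₁, ∀ g₂ ∈ Adm (K₂ : Set X), lam0 L (K₁ ∪ K₂) ≤ L g₁ + L g₂ := by
    intro g₁ hg₁ g₂ hg₂
    rw [← map_add]
    refine lam0_le L hpos ⟨fun x => by simpa using add_nonneg (hg₁.1 x) (hg₂.1 x), ?_⟩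
    intro x hx
    rcases hx with hx | hx
    · calc (1:ℝ) ≤ g₁ x := hg₁.2 x hx
        _ ≤ g₁ x + g₂ x := le_add_of_nonneg_right (hg₂.1 x)
        _ = (g₁ + g₂) x := by simp
    · calc (1:ℝ) ≤ g₂ x := hg₂.2 x hx
        _ ≤ g₁ x + g₂ x := le_add_of_nonneg_left (hg₁.1 x)
        _ = (g₁ + g₂) x := by simp
  have h1 : lam0 L (K₁ ∪ K₂) - lam0 L K₂ ≤ lam0 L K₁ := by
    apply le_csInf (Adm_nonempty L K₁)
    rintro r ⟨g₁, hg₁, rfl⟩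
    rw [sub_le_iff_le_add, add_comm, ← sub_le_iff_le_add]
    apply le_csInf (Adm_nonempty L K₂)
    rintro r ⟨g₂, hg₂, rfl⟩
    rw [sub_le_iff_le_add, add_comm]
    exact key g₁ hg₁ g₂ hg₂
  linarith

theorem lam0_disjoint_ge (K₁ K₂ : Set X) (h : Disjoint K₁ K₂) (h₁ : IsClosed K₁)
    (h₂ : IsClosed K₂) : lam0 L K₁ + lam0 L K₂ ≤ lam0 L (K₁ ∪ K₂) := by
  obtain ⟨φ, hφ₂, hφ₁, hφ01⟩ := exists_continuous_zero_one_of_isClosed h₂ h₁ h.symm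
  set φb : X →ᵇ ℝ := BoundedContinuousFunction.ofNormedAddCommGroup φ φ.continuous 1
    (fun x => by rw [Real.norm_eq_abs, abs_le]; constructor <;> [linarith [(hφ01 x).1]; exact (hφ01 x).2]) with hφb
  have hφbx : ∀ x, φb x = φ x := fun x => rfl
  apply le_csInf (Adm_nonempty L (K₁ ∪ K₂))
  rintro r ⟨g, hg, rfl⟩
  have m₁ : g * φb ∈ Adm K₁ := by
    constructor
    · intro x
      simp only [BoundedContinuousFunction.coe_mul, Pi.mul_apply]
      exact mul_nonneg (hg.1 x) ((hφ01 x).1)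
    · intro x hx
      have : φb x = 1 := hφ₁ hx
      simp only [BoundedContinuousFunction.coe_mul, Pi.mul_apply, this, mul_one]
      exact hg.2 x (Or.inl hx)
  have m₂ : g * (const X 1 - φb) ∈ Adm K₂ := by
    constructor
    · intro x
      simp only [BoundedContinuousFunction.coe_mul, Pi.mul_apply,
        BoundedContinuousFunction.coe_sub, Pi.sub_apply, BoundedContinuousFunction.const_apply]
      exact mul_nonneg (hg.1 x) (by linarith [(hφ01 x).2, hφbx x])
    · intro x hx
      have : φb x = 0 := hφ₂ hx
      simp only [BoundedContinuousFunction.coe_mul, Pi.mul_apply,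
        BoundedContinuousFunction.coe_sub, Pi.sub_apply, BoundedContinuousFunction.const_apply,
        this, sub_zero, mul_one]
      exact hg.2 x (Or.inr hx)
  have hsum : g * φb + g * (const X 1 - φb) = g := by
    ext x
    simp only [BoundedContinuousFunction.coe_add, Pi.add_apply,
      BoundedContinuousFunction.coe_mul, Pi.mul_apply, BoundedContinuousFunction.coe_sub,
      Pi.sub_apply, BoundedContinuousFunction.const_apply]
    ring
  calc lam0 L K₁ + lam0 L K₂ ≤ L (g * φb) + L (g * (const X 1 - φb)) :=
        add_le_add (lam0_le L hpos m₁) (lam0_le L hpos m₂)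
    _ = L g := by rw [← map_add, hsum]

theorem lam0_disjoint (K₁ K₂ : Set X) (h : Disjoint K₁ K₂) (h₁ : IsClosed K₁)
    (h₂ : IsClosed K₂) : lam0 L (K₁ ∪ K₂) = lam0 L K₁ + lam0 L K₂ :=
  le_antisymm (lam0_union_le L hpos K₁ K₂) (lam0_disjoint_ge L hpos K₁ K₂ h h₁ h₂)

/-- The content associated to `L`. -/
noncomputable def rieszCont : Content X where
  toFun K := (lam0 L K.1).toNNReal
  mono' K₁ K₂ h := Real.toNNReal_mono (lam0_mono L hpos h)
  sup_disjoint' K₁ K₂ h hc₁ hc₂ := by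
    have h2 := lam0_disjoint L hpos (K₁ : Set X) (K₂ : Set X) h hc₁ hc₂
    show (lam0 L ((K₁ : Set X) ∪ (K₂ : Set X))).toNNReal = _
    rw [h2]
    exact Real.toNNReal_add (lam0_nonneg L hpos (K₁ : Set X)) (lam0_nonneg L hpos (K₂ : Set X))
  sup_le' K₁ K₂ := by
    show (lam0 L ((K₁ : Set X) ∪ (K₂ : Set X))).toNNReal ≤ _
    exact le_trans (Real.toNNReal_mono (lam0_union_le L hpos K₁.1 K₂.1)) Real.toNNReal_add_le

theorem measure_open_le {U : Set X} (hU : IsOpen U) {h : X →ᵇ ℝ} (h0 : ∀ x, 0 ≤ h x)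
    (h1 : ∀ x ∈ U, 1 ≤ h x) :
    (rieszCont L hpos).measure U ≤ ENNReal.ofReal (L h) := by
  rw [Content.measure_apply _ hU.measurableSet,
    Content.outerMeasure_of_isOpen _ _ hU]
  refine iSup_le fun K => iSup_le fun hK => ?_
  have : lam0 L K.1 ≤ L h := lam0_le L hpos ⟨h0, fun x hx => h1 x (hK hx)⟩
  calc ((lam0 L K.1).toNNReal : ℝ≥0∞) ≤ ((L h).toNNReal : ℝ≥0∞) := by
        exact_mod_cast Real.toNNReal_mono this
    _ = ENNReal.ofReal (L h) := rfl

theorem measure_univ_le : (rieszCont L hpos).measure univ ≤ ENNReal.ofReal (L (const X 1)) :=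
  measure_open_le L hpos isOpen_univ (fun x => zero_le_one) (fun x _ => le_refl _)

instance : IsFiniteMeasure (rieszCont L hpos).measure := by
  constructor
  exact lt_of_le_of_lt (measure_univ_le L hpos) ENNReal.ofReal_lt_top

set_option maxHeartbeats 1000000 in
include hpos in
theorem tight [Nonempty X]
    (hsm : ∀ u : ℕ → X →ᵇ ℝ, Antitone u → (∀ x, Tendsto (fun n => u n x) atTop (𝓝 0)) →
      Tendsto (fun n => L (u n)) atTop (𝓝 0))
    {ε : ℝ} (hε : 0 < ε) :
    ∃ K : Set X, IsCompact K ∧ L (const X 1) - 2 * ε ≤ lam0 L K := by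
  obtain ⟨z, hz⟩ := TopologicalSpace.exists_dense_seq X
  -- the approximating closed sets
  set A : ℕ → ℕ → Set X := fun m n => ⋃ i ∈ Finset.range (n + 1), closedBall (z i) (1 / (m + 1))
    with hA
  have hAne : ∀ m n, (A m n).Nonempty := by
    intro m n
    refine ⟨z 0, mem_biUnion (Finset.mem_range.2 (Nat.succ_pos n)) ?_⟩
    exact mem_closedBall_self (by positivity)
  have hAmono : ∀ m, Monotone (A m) := by
    intro m n n' hnn'
    apply biUnion_subset_biUnion_left
    intro i hi
    exact Finset.mem_range.2 (lt_of_lt_of_le (Finset.mem_range.1 hi) (by omega))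
  -- the test functions
  have ucont : ∀ (m n : ℕ), Continuous (fun x => min 1 (((m:ℝ) + 1) * infDist x (A m n))) := by
    intro m n
    exact continuous_const.min (continuous_const.mul (continuous_infDist_pt _))
  set u : ℕ → ℕ → X →ᵇ ℝ := fun m n =>
    BoundedContinuousFunction.ofNormedAddCommGroup _ (ucont m n) 1 (fun x => by
      rw [Real.norm_eq_abs, abs_le]
      constructor
      · have : (0:ℝ) ≤ min 1 (((m:ℝ) + 1) * infDist x (A m n)) :=
          le_min zero_le_one (mul_nonneg (by positivity) infDist_nonneg)
        linarith
      · exact min_le_left _ _) with hu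
  have hux : ∀ (m n : ℕ) (x : X), u m n x = min 1 (((m:ℝ) + 1) * infDist x (A m n)) := fun m n x => rfl
  have hu0 : ∀ (m n : ℕ) (x : X), 0 ≤ u m n x := by
    intro m n x
    rw [hux]
    exact le_min zero_le_one (mul_nonneg (by positivity) infDist_nonneg)
  have huanti : ∀ m, Antitone (fun n => u m n) := by
    intro m n n' hnn'
    intro x
    show u m n' x ≤ u m n x
    rw [hux, hux]
    apply min_le_min le_rfl
    apply mul_le_mul_of_nonneg_left _ (by positivity)
    exact infDist_le_infDist_of_subset (hAmono m hnn') (hAne m n)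
  have hut0 : ∀ (m : ℕ) (x : X), Tendsto (fun n => u m n x) atTop (𝓝 0) := by
    intro m x
    obtain ⟨i, hi⟩ := (Metric.denseRange_iff.1 hz) x (1 / (m + 1)) (by positivity)
    apply tendsto_atTop_of_eventually_const (i₀ := i)
    intro n hn
    have hx : x ∈ A m n := by
      refine mem_biUnion (Finset.mem_range.2 (Nat.lt_succ_of_le hn)) ?_
      exact mem_closedBall.2 hi.le
    rw [hux, infDist_zero_of_mem hx, mul_zero, min_eq_right zero_le_one]
  -- choose good indices
  have hchoice : ∀ m : ℕ, ∃ n, L (u m n) < ε * (1/2)^(m+1) := by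
    intro m
    have h1 : Tendsto (fun n => L (u m n)) atTop (𝓝 0) := hsm _ (huanti m) (hut0 m)
    have h2 : ∀ᶠ n in atTop, L (u m n) < ε * (1/2)^(m+1) :=
      h1.eventually_lt_const (by positivity)
    exact h2.exists
  choose s hs using hchoice
  -- the compact set
  set C : ℕ → Set X := fun m => {x | infDist x (A m (s m)) ≤ 1 / (m + 1)} with hC
  have hCclosed : ∀ m, IsClosed (C m) :=
    fun m => isClosed_le (continuous_infDist_pt _) continuous_const
  set K : Set X := ⋂ m, C m with hK
  have hKcomp : IsCompact K := by
    apply TotallyBounded.isCompact_of_isClosed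
    · rw [totallyBounded_iff]
      intro δ hδ
      obtain ⟨m, hm⟩ := exists_nat_gt (3 / δ)
      have hm1 : 3 / (m + 1 : ℝ) < δ := by
        rw [div_lt_iff₀ (by positivity)]
        rw [div_lt_iff₀ hδ] at hm
        nlinarith
      refine ⟨z '' (Finset.range (s m + 1) : Finset ℕ), ((Finset.range (s m + 1)).finite_toSet.image z), ?_⟩
      intro x hx
      have hxC : x ∈ C m := mem_iInter.1 hx m
      have h1 : infDist x (A m (s m)) < 2 / (m + 1) := by
        have := hxC
        simp only [hC, mem_setOf_eq] at this
        have : infDist x (A m (s m)) ≤ 1 / (m + 1) := this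
        have hm0 : (0:ℝ) < (m:ℝ) + 1 := by positivity
        have h2 : (1 : ℝ) / (m + 1) < 2 / (m + 1) := by
          rw [div_lt_div_iff₀ hm0 hm0]; nlinarith
        linarith
      obtain ⟨a, haA, hax⟩ := (infDist_lt_iff (hAne m (s m))).1 h1
      obtain ⟨i, hi, hai⟩ := mem_iUnion₂.1 haA
      have hzi : z i ∈ z '' ((Finset.range (s m + 1) : Finset ℕ) : Set ℕ) :=
        ⟨i, Finset.mem_coe.2 hi, rfl⟩
      refine mem_biUnion hzi ?_
      have : dist x (z i) < 3 / (m + 1) := by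
        have h3 := mem_closedBall.1 hai
        calc dist x (z i) ≤ dist x a + dist a (z i) := dist_triangle _ _ _
          _ < 2 / (m + 1) + 1 / (m + 1) := by exact add_lt_add_of_lt_of_le hax h3
          _ = 3 / (m + 1) := by ring
      exact mem_ball.2 (lt_trans this hm1)
    · exact isClosed_iInter hCclosed
  refine ⟨K, hKcomp, ?_⟩
  -- lower bound on lam0 K
  have hne : (L '' Adm K).Nonempty :=
    ⟨L (const X 1), ⟨const X 1, ⟨fun x => zero_le_one, fun x _ => le_refl _⟩, rfl⟩⟩
  refine le_csInf hne ?_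
  rintro r ⟨g, hg, rfl⟩
  -- the tail functions
  set v : ℕ → X →ᵇ ℝ := fun M => g + ∑ m ∈ Finset.range M, u m (s m) with hv
  set w : ℕ → X →ᵇ ℝ := fun M => (const X 1 - v M) ⊔ 0 with hw
  have hvx : ∀ M x, v M x = g x + ∑ m ∈ Finset.range M, u m (s m) x := by
    intro M x
    simp [hv]
  have hwx : ∀ M x, w M x = max (1 - v M x) 0 := by
    intro M x
    simp [hw]
  have hvmono : ∀ M M', M ≤ M' → ∀ x, v M x ≤ v M' x := by
    intro M M' hMM' x
    rw [hvx, hvx]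
    have : ∑ m ∈ Finset.range M, u m (s m) x ≤ ∑ m ∈ Finset.range M', u m (s m) x :=
      Finset.sum_le_sum_of_subset_of_nonneg (Finset.range_subset_range.2 hMM')
        (fun i _ _ => hu0 i (s i) x)
    linarith
  have hwanti : Antitone w := by
    intro M M' hMM' x
    show w M' x ≤ w M x
    rw [hwx, hwx]
    exact max_le_max (by linarith [hvmono M M' hMM' x]) le_rfl
  have hwt0 : ∀ x, Tendsto (fun M => w M x) atTop (𝓝 0) := by
    intro x
    by_cases hxK : x ∈ K
    · apply tendsto_atTop_of_eventually_const (i₀ := 0)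
      intro M _
      have h1 : (1:ℝ) ≤ g x := hg.2 x hxK
      have h2 : g x ≤ v M x := by
        rw [hvx]
        have : (0:ℝ) ≤ ∑ m ∈ Finset.range M, u m (s m) x :=
          Finset.sum_nonneg (fun i _ => hu0 i (s i) x)
        linarith
      rw [hwx]
      exact max_eq_right (by linarith)
    · obtain ⟨m, hm⟩ : ∃ m, x ∉ C m := by
        by_contra hcon
        push_neg at hcon
        exact hxK (mem_iInter.2 hcon)
      have hum : u m (s m) x = 1 := by
        have h1 : 1 / (m + 1 : ℝ) < infDist x (A m (s m)) := by
          simp only [hC, mem_setOf_eq, not_le] at hm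
          exact hm
        rw [hux]
        apply min_eq_left
        rw [← div_le_iff₀' (by positivity : (0:ℝ) < (m+1:ℝ))] at *
        nlinarith [h1]
      apply tendsto_atTop_of_eventually_const (i₀ := m + 1)
      intro M hM
      have h2 : (1:ℝ) ≤ v M x := by
        rw [hvx]
        have h3 : u m (s m) x ≤ ∑ k ∈ Finset.range M, u k (s k) x := by
          apply Finset.single_le_sum (fun i _ => hu0 i (s i) x)
          exact Finset.mem_range.2 (by omega)
        have := hg.1 x
        linarith [hum ▸ h3]
      rw [hwx]
      exact max_eq_right (by linarith)
  have hwlim : Tendsto (fun M => L (w M)) atTop (𝓝 0) := hsm w hwanti hwt0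
  obtain ⟨M, hM⟩ : ∃ M, L (w M) < ε := (hwlim.eventually_lt_const hε).exists
  -- key inequality
  have hkey : ∀ x, const X (1:ℝ) x ≤ (v M + w M) x := by
    intro x
    simp only [BoundedContinuousFunction.coe_add, Pi.add_apply,
      BoundedContinuousFunction.const_apply]
    rw [hwx]
    have := le_max_left (1 - v M x) 0
    linarith
  have hL1 : L (const X 1) ≤ L (v M) + L (w M) := by
    have h1 : L (const X 1) ≤ L (v M + w M) := by
      have := hpos ((v M + w M) - const X 1) (fun x => by
        simpa using sub_nonneg.2 (hkey x))
      simp only [map_sub] at this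
      linarith
    rw [map_add] at h1
    exact h1
  have hLv : L (v M) ≤ L g + ε := by
    rw [hv]
    simp only [map_add, map_sum]
    have h1 : ∑ m ∈ Finset.range M, L (u m (s m)) ≤ ∑ m ∈ Finset.range M, ε * (1/2)^(m+1) :=
      Finset.sum_le_sum (fun m _ => (hs m).le)
    have h2 : ∑ m ∈ Finset.range M, ε * (1/2:ℝ)^(m+1) ≤ ε := by
      have h3 : ∑ m ∈ Finset.range M, ε * (1/2:ℝ)^(m+1)
          = (ε/2) * ∑ m ∈ Finset.range M, (1/2:ℝ)^m := by
        rw [Finset.mul_sum]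
        apply Finset.sum_congr rfl
        intro m _
        ring
      rw [h3]
      have h4 : ∑ m ∈ Finset.range M, (1/2:ℝ)^m ≤ 2 := by
        simpa using sum_geometric_two_le M
      nlinarith
    linarith
  linarith


include hpos in
theorem measure_univ_eq [Nonempty X]
    (hsm : ∀ u : ℕ → X →ᵇ ℝ, Antitone u → (∀ x, Tendsto (fun n => u n x) atTop (𝓝 0)) →
      Tendsto (fun n => L (u n)) atTop (𝓝 0)) :
    (rieszCont L hpos).measure univ = ENNReal.ofReal (L (const X 1)) := by
  refine le_antisymm (measure_univ_le L hpos) ?_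
  have hfin : (rieszCont L hpos).measure univ ≠ ⊤ :=
    (lt_of_le_of_lt (measure_univ_le L hpos) ENNReal.ofReal_lt_top).ne
  have key : ∀ ε : ℝ, 0 < ε →
      L (const X 1) - 2 * ε ≤ ((rieszCont L hpos).measure univ).toReal := by
    intro ε hε
    obtain ⟨K, hKcomp, hKge⟩ := tight L hpos hsm hε
    have h1 : ((rieszCont L hpos) ⟨K, hKcomp⟩ : ℝ≥0∞) ≤ (rieszCont L hpos).measure univ := by
      rw [Content.measure_apply _ MeasurableSet.univ, Content.outerMeasure_of_isOpen _ _ isOpen_univ]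
      exact Content.le_innerContent _ _ _ (subset_univ K)
    have h2 : ENNReal.ofReal (L (const X 1) - 2 * ε) ≤ (rieszCont L hpos).measure univ := by
      refine le_trans ?_ h1
      show ENNReal.ofReal (L (const X 1) - 2 * ε) ≤ ((lam0 L K).toNNReal : ℝ≥0∞)
      rw [ENNReal.ofReal]
      exact_mod_cast Real.toNNReal_mono hKge
    rcases le_or_gt (L (const X 1) - 2 * ε) 0 with hc | hc
    · exact hc.trans ENNReal.toReal_nonneg
    · calc L (const X 1) - 2 * ε
          = (ENNReal.ofReal (L (const X 1) - 2 * ε)).toReal :=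
            (ENNReal.toReal_ofReal hc.le).symm
        _ ≤ ((rieszCont L hpos).measure univ).toReal := ENNReal.toReal_mono hfin h2
  have h3 : L (const X 1) ≤ ((rieszCont L hpos).measure univ).toReal := by
    by_contra hcon
    push_neg at hcon
    obtain ⟨ε, hε, hlt⟩ : ∃ ε > 0, L (const X 1) - 2 * ε > ((rieszCont L hpos).measure univ).toReal :=
      ⟨(L (const X 1) - ((rieszCont L hpos).measure univ).toReal) / 4, by linarith, by linarith⟩
    exact absurd (key ε hε) (not_le.2 hlt)
  calc ENNReal.ofReal (L (const X 1)) ≤ ENNReal.ofReal (((rieszCont L hpos).measure univ).toReal) :=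
        ENNReal.ofReal_le_ofReal h3
    _ = (rieszCont L hpos).measure univ := ENNReal.ofReal_toReal hfin

include hpos in
theorem integral_le_of_nonneg (g : X →ᵇ ℝ) (h0 : ∀ x, 0 ≤ g x) :
    ∫ x, g x ∂(rieszCont L hpos).measure ≤ L g := by
  set μ := (rieszCont L hpos).measure with hμ
  have main : ∀ N : ℕ, 0 < N → ∫ x, g x ∂μ ≤ L g + (1/(N:ℝ)) * (μ univ).toReal := by
    intro N hN
    have hN0 : (0:ℝ) < (N:ℝ) := by exact_mod_cast hN
    set M := ⌈(N:ℝ) * ‖g‖⌉₊ with hM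
    set U : ℕ → Set X := fun i => {x | (i:ℝ)/N < g x} with hU
    have hUopen : ∀ i, IsOpen (U i) := fun i =>
      isOpen_lt continuous_const g.continuous
    -- pointwise bound by a simple function
    have hpt : ∀ x, g x ≤ ∑ i ∈ Finset.range (M+1),
        (N:ℝ)⁻¹ * (U i).indicator (fun _ => (1:ℝ)) x := by
      intro x
      set k := ⌈(N:ℝ) * g x⌉₊ with hk
      have hkM : k ≤ M + 1 := by
        have : k ≤ M := Nat.ceil_le_ceil (by
          have h1 : g x ≤ ‖g‖ := le_trans (le_abs_self _) (g.norm_coe_le_norm x)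
          nlinarith)
        omega
      have hsub : ∑ i ∈ Finset.range k, (N:ℝ)⁻¹ * (U i).indicator (fun _ => (1:ℝ)) x
          ≤ ∑ i ∈ Finset.range (M+1), (N:ℝ)⁻¹ * (U i).indicator (fun _ => (1:ℝ)) x := by
        apply Finset.sum_le_sum_of_subset_of_nonneg (Finset.range_subset_range.2 hkM)
        intro i _ _
        apply mul_nonneg (by positivity)
        exact Set.indicator_nonneg (fun _ _ => zero_le_one) x
      have hval : ∀ i ∈ Finset.range k, (N:ℝ)⁻¹ * (U i).indicator (fun _ => (1:ℝ)) x
          = (N:ℝ)⁻¹ := by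
        intro i hi
        have h1 : ((i:ℕ):ℝ) < (N:ℝ) * g x := Nat.lt_ceil.1 (Finset.mem_range.1 hi)
        have h2 : x ∈ U i := by
          show (i:ℝ)/N < g x
          rw [div_lt_iff₀ hN0]
          linarith
        rw [Set.indicator_of_mem h2, mul_one]
      have hsum : ∑ i ∈ Finset.range k, (N:ℝ)⁻¹ * (U i).indicator (fun _ => (1:ℝ)) x
          = (k:ℝ)/N := by
        rw [Finset.sum_congr rfl hval, Finset.sum_const, Finset.card_range,
          nsmul_eq_mul]
        ring
      have h3 : g x ≤ (k:ℝ)/N := by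
        rw [le_div_iff₀ hN0]
        have := Nat.le_ceil ((N:ℝ) * g x)
        rw [← hk] at this
        linarith
      linarith [hsub, hsum ▸ le_of_eq hsum.symm, h3, hsum ▸ hsub]
    have hintone : ∀ i : ℕ, Integrable (fun x => (N:ℝ)⁻¹ * (U i).indicator (fun _ => (1:ℝ)) x) μ := by
      intro i
      exact ((integrable_const (1:ℝ)).indicator (hUopen i).measurableSet).const_mul _
    have hint : Integrable (fun x => ∑ i ∈ Finset.range (M+1),
        (N:ℝ)⁻¹ * (U i).indicator (fun _ => (1:ℝ)) x) μ :=
      integrable_finset_sum _ (fun i _ => hintone i)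
    have h1 : ∫ x, g x ∂μ ≤ ∑ i ∈ Finset.range (M+1), (N:ℝ)⁻¹ * (μ (U i)).toReal := by
      calc ∫ x, g x ∂μ ≤ ∫ x, ∑ i ∈ Finset.range (M+1),
            (N:ℝ)⁻¹ * (U i).indicator (fun _ => (1:ℝ)) x ∂μ :=
            integral_mono (g.integrable μ) hint hpt
        _ = ∑ i ∈ Finset.range (M+1), ∫ x, (N:ℝ)⁻¹ * (U i).indicator (fun _ => (1:ℝ)) x ∂μ :=
            integral_finset_sum _ (fun i _ => hintone i)
        _ = ∑ i ∈ Finset.range (M+1), (N:ℝ)⁻¹ * (μ (U i)).toReal := by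
            apply Finset.sum_congr rfl
            intro i _
            rw [integral_const_mul, integral_indicator_const (1:ℝ) (hUopen i).measurableSet]
            simp
            exact Or.inl rfl
    -- the telescoping test functions
    set G : ℕ → X →ᵇ ℝ := fun i => g ⊓ const X ((i:ℝ)/N) with hG
    set hfun : ℕ → X →ᵇ ℝ := fun i => (N:ℝ) • (G (i+1) - G i) with hhfun
    have hGx : ∀ i x, G i x = min (g x) ((i:ℝ)/N) := by
      intro i x; simp [hG]
    have hfx : ∀ i x, hfun i x = (N:ℝ) * (min (g x) (((i:ℝ)+1)/N) - min (g x) ((i:ℝ)/N)) := by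
      intro i x
      simp only [hhfun, BoundedContinuousFunction.coe_smul, Pi.smul_apply,
        BoundedContinuousFunction.coe_sub, Pi.sub_apply, smul_eq_mul]
      rw [hGx, hGx]
      push_cast
      ring_nf
    have hdivmono : ∀ i : ℕ, (i:ℝ)/N ≤ ((i:ℝ)+1)/N := by
      intro i
      rw [div_le_div_iff₀ hN0 hN0]
      nlinarith [Nat.cast_nonneg (α := ℝ) i]
    have hfnonneg : ∀ i x, 0 ≤ hfun i x := by
      intro i x
      rw [hfx]
      apply mul_nonneg hN0.le
      exact sub_nonneg.2 (min_le_min le_rfl (hdivmono i))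
    have hfone : ∀ i x, x ∈ U (i+1) → 1 ≤ hfun i x := by
      intro i x hx
      have hgx : ((i:ℝ)+1)/N < g x := by
        have : ((i+1:ℕ):ℝ)/N < g x := hx
        push_cast at this
        linarith
      rw [hfx]
      have h1 : min (g x) (((i:ℝ)+1)/N) = ((i:ℝ)+1)/N := min_eq_right hgx.le
      have h2 : min (g x) ((i:ℝ)/N) = (i:ℝ)/N :=
        min_eq_right (le_trans (hdivmono i) hgx.le)
      rw [h1, h2]
      field_simp
      linarith
    have hterm : ∀ i : ℕ, (μ (U (i+1))).toReal ≤ L (hfun i) := by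
      intro i
      have h2 : μ (U (i+1)) ≤ ENNReal.ofReal (L (hfun i)) :=
        measure_open_le L hpos (hUopen (i+1)) (hfnonneg i) (hfone i)
      calc (μ (U (i+1))).toReal ≤ (ENNReal.ofReal (L (hfun i))).toReal :=
            ENNReal.toReal_mono ENNReal.ofReal_ne_top h2
        _ = L (hfun i) := ENNReal.toReal_ofReal (hpos _ (hfnonneg i))
    have htele : ∑ i ∈ Finset.range M, hfun i = (N:ℝ) • (G M - G 0) := by
      rw [hhfun]
      rw [← Finset.smul_sum, Finset.sum_range_sub]
    have hGM : G M = g := by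
      ext x
      rw [hGx]
      apply min_eq_left
      rw [le_div_iff₀ hN0]
      have h1 : g x ≤ ‖g‖ := le_trans (le_abs_self _) (g.norm_coe_le_norm x)
      have h2 := Nat.le_ceil ((N:ℝ) * ‖g‖)
      rw [← hM] at h2
      nlinarith
    have hG0 : G 0 = 0 := by
      ext x
      rw [hGx]
      simp only [Nat.cast_zero, zero_div, BoundedContinuousFunction.coe_zero, Pi.zero_apply]
      exact min_eq_right (h0 x)
    have hsumL : ∑ i ∈ Finset.range M, L (hfun i) = (N:ℝ) * L g := by
      rw [← map_sum, htele, hGM, hG0, sub_zero, _root_.map_smul, smul_eq_mul]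
    calc ∫ x, g x ∂μ ≤ ∑ i ∈ Finset.range (M+1), (N:ℝ)⁻¹ * (μ (U i)).toReal := h1
      _ = (∑ i ∈ Finset.range M, (N:ℝ)⁻¹ * (μ (U (i+1))).toReal) + (N:ℝ)⁻¹ * (μ (U 0)).toReal :=
          Finset.sum_range_succ' _ _
      _ ≤ (∑ i ∈ Finset.range M, (N:ℝ)⁻¹ * L (hfun i)) + (N:ℝ)⁻¹ * (μ univ).toReal := by
          apply add_le_add
          · apply Finset.sum_le_sum
            intro i _
            exact mul_le_mul_of_nonneg_left (hterm i) (by positivity)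
          · apply mul_le_mul_of_nonneg_left ?_ (by positivity)
            exact ENNReal.toReal_mono (measure_ne_top μ univ) (measure_mono (subset_univ _))
      _ = L g + (1/(N:ℝ)) * (μ univ).toReal := by
          rw [← Finset.mul_sum, hsumL]
          field_simp
  have hlim : Tendsto (fun N : ℕ => L g + (1/(N:ℝ)) * (μ univ).toReal) atTop (𝓝 (L g)) := by
    have h2 : Tendsto (fun N : ℕ => (1/(N:ℝ)) * (μ univ).toReal) atTop (𝓝 0) := by
      simpa using tendsto_one_div_atTop_nhds_zero_nat.mul_const ((μ univ).toReal)
    simpa using tendsto_const_nhds.add h2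
  refine ge_of_tendsto hlim ?_
  filter_upwards [eventually_ge_atTop 1] with N hN
  exact main N (by omega)

include hpos in
theorem integral_eq [Nonempty X]
    (hsm : ∀ u : ℕ → X →ᵇ ℝ, Antitone u → (∀ x, Tendsto (fun n => u n x) atTop (𝓝 0)) →
      Tendsto (fun n => L (u n)) atTop (𝓝 0)) (g : X →ᵇ ℝ) :
    ∫ x, g x ∂(rieszCont L hpos).measure = L g := by
  set μ := (rieszCont L hpos).measure with hμ
  have huniv : (μ univ).toReal = L (const X 1) := by
    rw [hμ, measure_univ_eq L hpos hsm,
      ENNReal.toReal_ofReal (hpos _ (fun x => zero_le_one))]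
  have key : ∀ h : X →ᵇ ℝ, ∫ x, h x ∂μ ≤ L h := by
    intro h
    set c := ‖h‖ with hc
    have h0 : ∀ x, 0 ≤ (h + const X c) x := by
      intro x
      simp only [BoundedContinuousFunction.coe_add, Pi.add_apply,
        BoundedContinuousFunction.const_apply]
      have h1 : -c ≤ h x := neg_le_of_abs_le (h.norm_coe_le_norm x)
      linarith
    have hle := integral_le_of_nonneg L hpos (h + const X c) h0
    have hconst : const X c = c • const X (1:ℝ) := by
      ext x; simp
    have hR : L (h + const X c) = L h + c * L (const X 1) := by
      rw [map_add, hconst, _root_.map_smul, smul_eq_mul]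
    have hLint : ∫ x, (h + const X c) x ∂μ = (∫ x, h x ∂μ) + c * (μ univ).toReal := by
      have : (fun x => (h + const X c) x) = fun x => h x + c := by
        ext x; simp
      rw [this, integral_add (h.integrable μ) (integrable_const c), integral_const,
        smul_eq_mul, mul_comm]
      rfl
    rw [hLint, hR, huniv] at hle
    linarith
  refine le_antisymm (key g) ?_
  have h2 := key (-g)
  have h3 : ∫ x, (-g) x ∂μ = - ∫ x, g x ∂μ := by
    have : (fun x => (-g) x) = fun x => -(g x) := by ext x; simp
    rw [this, integral_neg]
  rw [h3, map_neg] at h2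
  linarith

include hpos in
theorem riesz_rep [Nonempty X]
    (hsm : ∀ u : ℕ → X →ᵇ ℝ, Antitone u → (∀ x, Tendsto (fun n => u n x) atTop (𝓝 0)) →
      Tendsto (fun n => L (u n)) atTop (𝓝 0)) :
    ∃ μ : FiniteMeasure X, ∀ g : X →ᵇ ℝ, ∫ x, g x ∂(μ : Measure X) = L g :=
  ⟨⟨(rieszCont L hpos).measure, inferInstance⟩, fun g => integral_eq L hpos hsm g⟩


end Riesz


section Sub
variable {X : Type*} [TopologicalSpace X]
variable (F : (X →ᵇ ℝ) → ℝ) (hconv : ConvexOn ℝ Set.univ F) (hmono : Monotone F)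
  (f : X →ᵇ ℝ)

noncomputable def qslope (g : X →ᵇ ℝ) (t : ℝ) : ℝ := (F (f + t • g) - F f) / t
noncomputable def psub (g : X →ᵇ ℝ) : ℝ := sInf (qslope F f g '' Ioi 0)

include hconv in
theorem qslope_mono (g : X →ᵇ ℝ) {s t : ℝ} (hs : 0 < s) (hst : s ≤ t) :
    qslope F f g s ≤ qslope F f g t := by
  have ht : 0 < t := lt_of_lt_of_le hs hst
  have ha : (0:ℝ) ≤ (t - s)/t := div_nonneg (by linarith) ht.le
  have hb : (0:ℝ) ≤ s/t := by positivity
  have hab : (t - s)/t + s/t = 1 := by field_simp; ring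
  have hcomb : ((t-s)/t) • f + (s/t) • (f + t • g) = f + s • g := by
    match_scalars <;> field_simp <;> ring
  have h := hconv.2 (mem_univ f) (mem_univ (f + t • g)) ha hb hab
  rw [hcomb] at h
  show (F (f + s • g) - F f) / s ≤ (F (f + t • g) - F f) / t
  rw [div_le_div_iff₀ hs ht]
  simp only [smul_eq_mul] at h
  rw [div_mul_eq_mul_div, div_mul_eq_mul_div, ← add_div, le_div_iff₀ ht] at h
  linarith

include hconv in
theorem qslope_lb (g : X →ᵇ ℝ) {t : ℝ} (ht : 0 < t) :
    F f - F (f - g) ≤ qslope F f g t := by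
  have ha : (0:ℝ) ≤ t/(t+1) := by positivity
  have hb : (0:ℝ) ≤ 1/(t+1) := by positivity
  have hab : t/(t+1) + 1/(t+1) = 1 := by field_simp
  have hcomb : (t/(t+1)) • (f - g) + (1/(t+1)) • (f + t • g) = f := by
    match_scalars <;> field_simp <;> ring
  have h := hconv.2 (mem_univ (f - g)) (mem_univ (f + t • g)) ha hb hab
  rw [hcomb] at h
  show F f - F (f - g) ≤ (F (f + t • g) - F f) / t
  rw [le_div_iff₀ ht]
  simp only [smul_eq_mul] at h
  rw [div_mul_eq_mul_div, div_mul_eq_mul_div, ← add_div, le_div_iff₀ (by positivity : (0:ℝ) < t+1)] at h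
  linarith

include hconv in
theorem psub_bddBelow (g : X →ᵇ ℝ) : BddBelow (qslope F f g '' Ioi 0) := by
  refine ⟨F f - F (f - g), ?_⟩
  rintro r ⟨t, ht, rfl⟩
  exact qslope_lb F hconv f g ht

include hconv in
theorem psub_le_q1 (g : X →ᵇ ℝ) : psub F f g ≤ F (f + g) - F f := by
  have h1 : qslope F f g 1 = F (f + g) - F f := by
    rw [qslope, one_smul, div_one]
  exact h1 ▸ csInf_le (psub_bddBelow F hconv f g) ⟨1, mem_Ioi.2 one_pos, rfl⟩

include hconv in
theorem psub_add (g h : X →ᵇ ℝ) : psub F f (g + h) ≤ psub F f g + psub F f h := by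
  refine le_of_forall_pos_le_add ?_
  intro ε hε
  obtain ⟨r₁, ⟨t₁, ht₁, rfl⟩, hr₁⟩ :=
    exists_lt_of_csInf_lt (⟨_, ⟨1, mem_Ioi.2 one_pos, rfl⟩⟩ : (qslope F f g '' Ioi 0).Nonempty)
      (lt_add_of_pos_right (psub F f g) (half_pos hε))
  obtain ⟨r₂, ⟨t₂, ht₂, rfl⟩, hr₂⟩ :=
    exists_lt_of_csInf_lt (⟨_, ⟨1, mem_Ioi.2 one_pos, rfl⟩⟩ : (qslope F f h '' Ioi 0).Nonempty)
      (lt_add_of_pos_right (psub F f h) (half_pos hε))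
  set t := min t₁ t₂ with hmin
  have ht : 0 < t := lt_min ht₁ ht₂
  have key : qslope F f (g + h) (t/2) ≤ qslope F f g t + qslope F f h t := by
    have hcomb : (1/2 : ℝ) • (f + t • g) + (1/2 : ℝ) • (f + t • h) = f + (t/2) • (g + h) := by
      match_scalars <;> field_simp <;> ring
    have hco := hconv.2 (mem_univ (f + t • g)) (mem_univ (f + t • h))
      (by norm_num : (0:ℝ) ≤ 1/2) (by norm_num : (0:ℝ) ≤ 1/2) (by norm_num)
    rw [hcomb] at hco
    show (F (f + (t/2) • (g + h)) - F f) / (t/2) ≤ (F (f + t • g) - F f) / t + (F (f + t • h) - F f) / t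
    simp only [smul_eq_mul] at hco
    rw [← add_div, div_le_div_iff₀ (by positivity) ht]
    nlinarith [mul_le_mul_of_nonneg_right hco ht.le]
  have h1 : psub F f (g + h) ≤ qslope F f (g + h) (t/2) :=
    csInf_le (psub_bddBelow F hconv f (g+h)) ⟨t/2, mem_Ioi.2 (by positivity), rfl⟩
  have h2 : qslope F f g t ≤ qslope F f g t₁ :=
    qslope_mono F hconv f g ht (min_le_left _ _)
  have h3 : qslope F f h t ≤ qslope F f h t₂ :=
    qslope_mono F hconv f h ht (min_le_right _ _)
  linarith

theorem psub_smul (g : X →ᵇ ℝ) {c : ℝ} (hc : 0 < c) : psub F f (c • g) = c * psub F f g := by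
  have himg : qslope F f (c • g) '' Ioi 0 = c • (qslope F f g '' Ioi 0) := by
    ext r
    constructor
    · rintro ⟨t, ht, rfl⟩
      rw [mem_Ioi] at ht
      refine ⟨qslope F f g (t * c), ⟨t * c, mem_Ioi.2 (by positivity), rfl⟩, ?_⟩
      show c * qslope F f g (t * c) = qslope F f (c • g) t
      rw [qslope, qslope, smul_smul]
      field_simp
    · rintro ⟨r', ⟨t, ht, rfl⟩, rfl⟩
      rw [mem_Ioi] at ht
      refine ⟨t / c, mem_Ioi.2 (by positivity : (0:ℝ) < t / c), ?_⟩
      show qslope F f (c • g) (t/c) = c • qslope F f g t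
      rw [qslope, qslope, smul_smul, smul_eq_mul]
      rw [div_mul_cancel₀ _ hc.ne']
      field_simp
  rw [psub, himg, Real.sInf_smul_of_nonneg hc.le, smul_eq_mul, psub]

theorem psub_zero (hF0 : F 0 = 0) : psub F f 0 = 0 := by
  have hq : qslope F f 0 = fun _ => (0:ℝ) :=
    funext fun t => by rw [qslope, smul_zero, add_zero, sub_self, zero_div]
  rw [psub, hq, Set.Nonempty.image_const nonempty_Ioi 0, csInf_singleton]

end Sub




open MeasureTheory BoundedContinuousFunction Filter Topology

/-- The conjugate function `F*(μ) = sup {∫ h dμ - F(h) : h ∈ C_b(X)} ∈ ℝ ∪ {+∞}`. -/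
noncomputable def conjugate13 {X : Type*} [TopologicalSpace X] [MeasurableSpace X]
    (F : (X →ᵇ ℝ) → ℝ) (μ : FiniteMeasure X) : EReal :=
  ⨆ h : X →ᵇ ℝ, ((∫ x, h x ∂(μ : Measure X) - F h : ℝ) : EReal)

/-- For a convex nondecreasing downward continuous `F : C_b(X) → ℝ` with
`F 0 = 0` on a Polish space, for every `f` there is a finite nonnegative Borel measure `μ`
with `∫ f dμ = F(f) + F*(μ)`; equivalently `F(f + g) ≥ F(f) + ∫ g dμ` for all `g`, i.e. the
epigraph of `F` has a supporting functional at `(f, F(f))`. -/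
theorem stmt13 {X : Type*} [TopologicalSpace X] [PolishSpace X]
    [MeasurableSpace X] [BorelSpace X]
    (F : (X →ᵇ ℝ) → ℝ) (hconv : ConvexOn ℝ Set.univ F) (hmono : Monotone F)
    (hF0 : F 0 = 0)
    (hdown : ∀ (f : X →ᵇ ℝ) (g : ℕ → X →ᵇ ℝ), Antitone g →
      (∀ x, Tendsto (fun n => g n x) atTop (𝓝 (f x))) →
      Tendsto (fun n => F (g n)) atTop (𝓝 (F f)))
    (f : X →ᵇ ℝ) :
    ∃ μ : FiniteMeasure X,
      ((∫ x, f x ∂(μ : Measure X) : ℝ) : EReal) = (F f : ℝ) + conjugate13 F μ ∧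
      (∀ g : X →ᵇ ℝ, F (f + g) ≥ F f + ∫ x, g x ∂(μ : Measure X)) := by
  obtain ⟨μ, hμ⟩ : ∃ μ : FiniteMeasure X, ∀ g : X →ᵇ ℝ,
      (∫ x, g x ∂(μ : Measure X)) ≤ F (f + g) - F f := by
    rcases isEmpty_or_nonempty X with hX | hX
    · refine ⟨0, fun g => ?_⟩
      have hg : ∀ h : X →ᵇ ℝ, h = 0 := fun h => by
        ext x
        exact (IsEmpty.false x).elim
      have h1 : F (f + g) = F f := by rw [hg (f + g), hg f]
      have h2 : (∫ x, g x ∂((0 : FiniteMeasure X) : Measure X)) = 0 := by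
        simp
      rw [h1, h2]
      simp
    · -- Hahn-Banach extension of the zero functional below psub
      obtain ⟨L, -, hL⟩ := exists_extension_of_le_sublinear
        (⟨⊥, 0⟩ : ((X →ᵇ ℝ) →ₗ.[ℝ] ℝ)) (psub F f)
        (fun c hc x => psub_smul F f x hc)
        (fun g h => psub_add F hconv f g h)
        (fun x => by
          have hx : (x : X →ᵇ ℝ) = 0 := (Submodule.mem_bot ℝ).1 x.2
          have h0 : ((⟨⊥, 0⟩ : ((X →ᵇ ℝ) →ₗ.[ℝ] ℝ)) x) = 0 := rfl
          rw [h0, hx, psub_zero F f hF0])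
      have hLle : ∀ g : X →ᵇ ℝ, L g ≤ F (f + g) - F f :=
        fun g => (hL g).trans (psub_le_q1 F hconv f g)
      have hLpos : ∀ g : X →ᵇ ℝ, (∀ x, 0 ≤ g x) → 0 ≤ L g := by
        intro g hg
        have h1 : L (-g) ≤ psub F f (-g) := hL _
        have h2 : psub F f (-g) ≤ F (f + -g) - F f := psub_le_q1 F hconv f (-g)
        have h3 : F (f + -g) ≤ F f := by
          apply hmono
          intro x
          show (f + -g) x ≤ f x
          simp only [BoundedContinuousFunction.coe_add, Pi.add_apply,
            BoundedContinuousFunction.coe_neg, Pi.neg_apply]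
          linarith [hg x]
        rw [map_neg] at h1
        linarith
      have hsm : ∀ u : ℕ → X →ᵇ ℝ, Antitone u →
          (∀ x, Tendsto (fun n => u n x) atTop (𝓝 0)) →
          Tendsto (fun n => L (u n)) atTop (𝓝 0) := by
        intro u hanti hu0
        have upos : ∀ n x, 0 ≤ u n x := by
          intro n x
          exact Antitone.le_of_tendsto (fun a b hab => hanti hab x) (hu0 x) n
        have hup : ∀ n, 0 ≤ L (u n) := fun n => hLpos _ (upos n)
        have hub : ∀ n, L (u n) ≤ F (f + u n) - F f := fun n => hLle (u n)
        have hda : Antitone (fun n => f + u n) := by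
          intro a b hab x
          show (f + u b) x ≤ (f + u a) x
          simp only [BoundedContinuousFunction.coe_add, Pi.add_apply]
          have h5 : u b x ≤ u a x := hanti hab x
          linarith
        have hdt : ∀ x, Tendsto (fun n => (f + u n) x) atTop (𝓝 (f x)) := by
          intro x
          have : Tendsto (fun n => f x + u n x) atTop (𝓝 (f x + 0)) :=
            tendsto_const_nhds.add (hu0 x)
          simpa using this
        have hF := hdown f (fun n => f + u n) hda hdt
        have hFsub : Tendsto (fun n => F (f + u n) - F f) atTop (𝓝 0) := by
          simpa using hF.sub_const (F f)
        exact squeeze_zero hup hub hFsub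
      letI := TopologicalSpace.upgradeIsCompletelyMetrizable X
      obtain ⟨μ, hμint⟩ := riesz_rep L hLpos hsm
      refine ⟨μ, fun g => ?_⟩
      rw [hμint g]
      exact hLle g
  have hconjle : ∀ h : X →ᵇ ℝ,
      (∫ x, h x ∂(μ : Measure X)) - F h ≤ (∫ x, f x ∂(μ : Measure X)) - F f := by
    intro h
    have h1 := hμ (h - f)
    have h2 : ∫ x, (h - f) x ∂(μ : Measure X)
        = (∫ x, h x ∂(μ : Measure X)) - ∫ x, f x ∂(μ : Measure X) := by
      have he : (fun x => (h - f) x) = fun x => h x - f x := by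
        ext x; simp
      rw [he, integral_sub (h.integrable _) (f.integrable _)]
    have h3 : f + (h - f) = h := by abel
    rw [h3, h2] at h1
    linarith
  have hconj : conjugate13 F μ = (((∫ x, f x ∂(μ : Measure X)) - F f : ℝ) : EReal) := by
    apply le_antisymm
    · exact iSup_le fun h => EReal.coe_le_coe_iff.2 (hconjle h)
    · exact le_iSup_of_le f (le_refl _)
  refine ⟨μ, ?_, fun g => by linarith [hμ g]⟩
  rw [hconj, ← EReal.coe_add]
  exact congrArg _ (by ring)
end

section
/- Let E be a set, G ⊆ E a nonempty subset, and (f_k)_{k≥1} a uniformly bounded sequence of functions f_k : E → ℝ. Let conv_σ(f_k ; k ≥ 1) = {Σ_{k≥1} λ_k f_k : λ_k ≥ 0, Σ_k λ_k = 1} denote the set of countable convex combinations of the f_k. Suppose that for every f ∈ conv_σ(f_k ; k ≥ 1) there exists x ∈ G with f(x) = sup_{y ∈ E} f(y). Then sup{limsup_k f_k(x) : x ∈ G} = sup{limsup_k f_k(x) : x ∈ E}. -/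
open Filter Topology

lemma summable_of_tsum_one (lam : ℕ → ℝ) (h : ∑' k, lam k = 1) : Summable lam := by
  by_contra hs
  rw [tsum_eq_zero_of_not_summable hs] at h; norm_num at h

lemma summable_mul {E : Type*} (f : ℕ → E → ℝ) (C : ℝ) (hbdd : ∀ k x, |f k x| ≤ C)
    (lam : ℕ → ℝ) (h0 : ∀ k, 0 ≤ lam k) (hs : Summable lam) (y : E) :
    Summable fun k => lam k * f k y := by
  apply Summable.of_norm_bounded (hs.mul_right C)
  intro k
  rw [Real.norm_eq_abs, abs_mul, abs_of_nonneg (h0 k)]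
  exact mul_le_mul_of_nonneg_left (hbdd k y) (h0 k)

lemma cg_le {E : Type*} (f : ℕ → E → ℝ) (C : ℝ) (hbdd : ∀ k x, |f k x| ≤ C)
    (lam : ℕ → ℝ) (h0 : ∀ k, 0 ≤ lam k) (h1 : ∑' k, lam k = 1) (y : E) (M : ℝ)
    (hM : ∀ k, lam k ≠ 0 → f k y ≤ M) : ∑' k, lam k * f k y ≤ M := by
  have hs := summable_of_tsum_one lam h1
  calc ∑' k, lam k * f k y ≤ ∑' k, lam k * M := by
        refine Summable.tsum_le_tsum (fun k => ?_) (summable_mul f C hbdd lam h0 hs y) (hs.mul_right M)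
        by_cases h : lam k = 0
        · simp [h]
        · exact mul_le_mul_of_nonneg_left (hM k h) (h0 k)
    _ = M := by rw [tsum_mul_right, h1, one_mul]

lemma le_cg {E : Type*} (f : ℕ → E → ℝ) (C : ℝ) (hbdd : ∀ k x, |f k x| ≤ C)
    (lam : ℕ → ℝ) (h0 : ∀ k, 0 ≤ lam k) (h1 : ∑' k, lam k = 1) (y : E) (M : ℝ)
    (hM : ∀ k, lam k ≠ 0 → M ≤ f k y) : M ≤ ∑' k, lam k * f k y := by
  have hs := summable_of_tsum_one lam h1
  calc M = ∑' k, lam k * M := by rw [tsum_mul_right, h1, one_mul]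
    _ ≤ ∑' k, lam k * f k y := by
        refine Summable.tsum_le_tsum (fun k => ?_) (hs.mul_right M) (summable_mul f C hbdd lam h0 hs y)
        by_cases h : lam k = 0
        · simp [h]
        · exact mul_le_mul_of_nonneg_left (hM k h) (h0 k)

lemma mix {E : Type*} (f : ℕ → E → ℝ) (C : ℝ) (hbdd : ∀ k x, |f k x| ≤ C)
    (w : ℕ → ℝ) (hw0 : ∀ n, 0 ≤ w n) (hw1 : ∑' n, w n = 1)
    (Λ : ℕ → ℕ → ℝ) (hΛ0 : ∀ n k, 0 ≤ Λ n k) (hΛ1 : ∀ n, ∑' k, Λ n k = 1) :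
    (∑' k, ∑' n, w n * Λ n k) = 1 ∧
      ∀ y, ∑' k, (∑' n, w n * Λ n k) * f k y = ∑' n, w n * ∑' k, Λ n k * f k y := by
  have hws := summable_of_tsum_one w hw1
  have hΛs : ∀ n, Summable (Λ n) := fun n => summable_of_tsum_one _ (hΛ1 n)
  have hrow : ∀ n, Summable fun k => w n * Λ n k := fun n => (hΛs n).mul_left (w n)
  have hrowsum : ∀ n, ∑' k, w n * Λ n k = w n := fun n => by
    rw [tsum_mul_left, hΛ1, mul_one]
  have hF : Summable (fun p : ℕ × ℕ => w p.1 * Λ p.1 p.2) := by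
    rw [summable_prod_of_nonneg (fun p => mul_nonneg (hw0 _) (hΛ0 _ _))]
    exact ⟨hrow, by simpa only [hrowsum] using hws⟩
  have hcol : ∀ k, Summable fun n => w n * Λ n k := by
    intro k
    apply Summable.of_norm_bounded hws
    intro n
    rw [Real.norm_eq_abs, abs_mul, abs_of_nonneg (hw0 n), abs_of_nonneg (hΛ0 n k)]
    calc w n * Λ n k ≤ w n * 1 := by
          refine mul_le_mul_of_nonneg_left ?_ (hw0 n)
          rw [← hΛ1 n]; exact Summable.le_tsum (hΛs n) k (fun j _ => hΛ0 n j)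
      _ = w n := mul_one _
  constructor
  · rw [Summable.tsum_comm' (f := fun n k => w n * Λ n k) hF hrow hcol]
    simp only [hrowsum, hw1]
  · intro y
    have hF' : Summable (fun p : ℕ × ℕ => w p.1 * Λ p.1 p.2 * f p.2 y) := by
      have h2 : Summable (fun p : ℕ × ℕ => w p.1 * Λ p.1 p.2 * C) := hF.mul_right C
      apply Summable.of_norm_bounded h2
      intro p
      rw [Real.norm_eq_abs, abs_mul, abs_of_nonneg (mul_nonneg (hw0 _) (hΛ0 _ _))]
      exact mul_le_mul_of_nonneg_left (hbdd _ _) (mul_nonneg (hw0 _) (hΛ0 _ _))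
    have hrow' : ∀ n, Summable fun k => w n * Λ n k * f k y := by
      intro n
      have h2 : Summable (fun k => w n * Λ n k * C) := (hrow n).mul_right C
      apply Summable.of_norm_bounded h2
      intro k
      rw [Real.norm_eq_abs, abs_mul, abs_of_nonneg (mul_nonneg (hw0 _) (hΛ0 _ _))]
      exact mul_le_mul_of_nonneg_left (hbdd _ _) (mul_nonneg (hw0 _) (hΛ0 _ _))
    have hcol' : ∀ k, Summable fun n => w n * Λ n k * f k y := fun k =>
      (hcol k).mul_right (f k y)
    calc ∑' k, (∑' n, w n * Λ n k) * f k y = ∑' k, ∑' n, w n * Λ n k * f k y := by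
          refine tsum_congr fun k => ?_
          rw [tsum_mul_right]
      _ = ∑' n, ∑' k, w n * Λ n k * f k y := Summable.tsum_comm' (f := fun n k => w n * Λ n k * f k y) hF' hrow' hcol'
      _ = ∑' n, w n * ∑' k, Λ n k * f k y := by
          refine tsum_congr fun n => ?_
          rw [← tsum_mul_left]
          exact tsum_congr fun k => (mul_assoc _ _ _)

/-- Coefficient sequences of σ-convex combinations supported on `A ∩ [n, ∞)`. -/
def IsW (A : Set ℕ) (n : ℕ) (lam : ℕ → ℝ) : Prop :=
  (∀ k, 0 ≤ lam k) ∧ (∑' k, lam k) = 1 ∧ (∀ k, k < n → lam k = 0) ∧ (∀ k, k ∉ A → lam k = 0)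

lemma cg_abs_le {E : Type*} (f : ℕ → E → ℝ) (C : ℝ) (hbdd : ∀ k x, |f k x| ≤ C)
    (lam : ℕ → ℝ) (h0 : ∀ k, 0 ≤ lam k) (h1 : ∑' k, lam k = 1) (y : E) :
    |∑' k, lam k * f k y| ≤ C := by
  rw [abs_le]
  constructor
  · exact le_cg f C hbdd lam h0 h1 y (-C) (fun k _ => (abs_le.1 (hbdd k y)).1)
  · exact cg_le f C hbdd lam h0 h1 y C (fun k _ => (abs_le.1 (hbdd k y)).2)

lemma choice_step {E : Type*} [Nonempty E] (f : ℕ → E → ℝ) (C : ℝ)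
    (hbdd : ∀ k x, |f k x| ≤ C) (A : Set ℕ) (hA : A.Infinite)
    (d : ℝ) (hd : 0 < d) (n : ℕ) (h : E → ℝ) :
    ∃ lam, IsW A n lam ∧ ((∀ y, |h y| ≤ C) →
      ∀ lam', IsW A n lam' →
        (⨆ y, (h y + (2⁻¹:ℝ)^n * ∑' k, lam k * f k y)) ≤
          (⨆ y, (h y + (2⁻¹:ℝ)^n * ∑' k, lam' k * f k y)) + d) := by
  have hC : 0 ≤ C := le_trans (abs_nonneg _) (hbdd 0 (Classical.arbitrary E))
  have hc0 : (0:ℝ) < (2⁻¹:ℝ)^n := by positivity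
  have hc1 : ((2:ℝ)⁻¹)^n ≤ 1 := pow_le_one₀ (by norm_num) (by norm_num)
  -- a witness that IsW is nonempty
  obtain ⟨a, haA, han⟩ := hA.exists_gt n
  have hW0 : IsW A n (fun k => if k = a then 1 else 0) := by
    refine ⟨fun k => by positivity, tsum_ite_eq a 1, fun k hk => ?_, fun k hk => ?_⟩
    · simp only [if_neg (by omega : k ≠ a)]
    · have : k ≠ a := fun hka => hk (hka ▸ haA)
      simp only [if_neg this]
  by_cases hb : ∀ y, |h y| ≤ C
  · -- the set of suprema
    have hbdd_range : ∀ lam, IsW A n lam →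
        ∀ y, h y + (2⁻¹:ℝ)^n * ∑' k, lam k * f k y ≤ C + C := by
      intro lam hlam y
      have h1 := (hb y)
      have h2 := cg_abs_le f C hbdd lam hlam.1 hlam.2.1 y
      have : (2⁻¹:ℝ)^n * ∑' k, lam k * f k y ≤ C := by
        calc (2⁻¹:ℝ)^n * ∑' k, lam k * f k y ≤ (2⁻¹:ℝ)^n * C :=
              mul_le_mul_of_nonneg_left (abs_le.1 h2).2 hc0.le
          _ ≤ 1 * C := mul_le_mul_of_nonneg_right hc1 hC
          _ = C := one_mul C
      linarith [(abs_le.1 h1).2]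
    set T : Set ℝ := (fun lam => ⨆ y, (h y + (2⁻¹:ℝ)^n * ∑' k, lam k * f k y)) ''
      {lam | IsW A n lam} with hT
    have hTne : T.Nonempty := ⟨_, ⟨_, hW0, rfl⟩⟩
    obtain ⟨y0⟩ := ‹Nonempty E›
    have hTlb : ∀ t ∈ T, h y0 - C ≤ t := by
      rintro t ⟨lam, hlam, rfl⟩
      have h2 := cg_abs_le f C hbdd lam hlam.1 hlam.2.1 y0
      have hle : h y0 - C ≤ h y0 + (2⁻¹:ℝ)^n * ∑' k, lam k * f k y0 := by
        have : -C ≤ (2⁻¹:ℝ)^n * ∑' k, lam k * f k y0 := by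
          calc (-C : ℝ) ≤ (2⁻¹:ℝ)^n * (-C) := by nlinarith
            _ ≤ (2⁻¹:ℝ)^n * ∑' k, lam k * f k y0 :=
                mul_le_mul_of_nonneg_left (abs_le.1 h2).1 hc0.le
        linarith
      exact le_trans hle (le_ciSup ⟨C + C, by rintro _ ⟨y, rfl⟩; exact hbdd_range lam hlam y⟩ y0)
    have hTbb : BddBelow T := ⟨h y0 - C, hTlb⟩
    have hlt : sInf T < sInf T + d := by linarith
    obtain ⟨t, ⟨lam, hlam, rfl⟩, htlt⟩ := (csInf_lt_iff hTbb hTne).1 hlt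
    refine ⟨lam, hlam, fun _ lam' hlam' => ?_⟩
    have : sInf T ≤ ⨆ y, (h y + (2⁻¹:ℝ)^n * ∑' k, lam' k * f k y) :=
      csInf_le hTbb ⟨lam', hlam', rfl⟩
    linarith
  · exact ⟨_, hW0, fun hc => absurd hc hb⟩
lemma simons_aux {E : Type*} (G : Set E) (hG : G.Nonempty) (f : ℕ → E → ℝ) (C : ℝ)
    (hbdd : ∀ (k : ℕ) (x : E), |f k x| ≤ C)
    (hpeak : ∀ lam : ℕ → ℝ, (∀ k, 0 ≤ lam k) → (∑' k, lam k) = 1 →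
      ∃ x ∈ G, ∀ y : E, (∑' k, lam k * f k y) ≤ ∑' k, lam k * f k x)
    (A : Set ℕ) (hA : A.Infinite) (p ε : ℝ) (hε : 0 < ε)
    (hp : ∀ lam : ℕ → ℝ, (∀ k, 0 ≤ lam k) → (∑' k, lam k) = 1 → (∀ k, k ∉ A → lam k = 0) →
      ∃ y, p ≤ ∑' k, lam k * f k y) :
    ∃ b ∈ G, p - ε ≤ limsup (fun k => f k b) atTop := by
  haveI : Nonempty E := ⟨hG.choose⟩
  have hC : 0 ≤ C := le_trans (abs_nonneg _) (hbdd 0 (Classical.arbitrary E))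
  -- choice function for the recursive construction
  have hch : ∀ (n : ℕ) (h : E → ℝ), ∃ lam, IsW A n lam ∧ ((∀ y, |h y| ≤ C) →
      ∀ lam', IsW A n lam' →
        (⨆ y, (h y + (2⁻¹:ℝ)^n * ∑' k, lam k * f k y)) ≤
          (⨆ y, (h y + (2⁻¹:ℝ)^n * ∑' k, lam' k * f k y)) + ε * (4⁻¹:ℝ)^(n+1)) :=
    fun n h => choice_step f C hbdd A hA (ε * (4⁻¹:ℝ)^(n+1)) (by positivity) n h
  choose F hF1 hF2 using hch
  -- the recursively defined partial sums
  obtain ⟨hs, hs0, hsS⟩ : ∃ hs : ℕ → E → ℝ, hs 0 = (fun _ => 0) ∧ ∀ n, hs (n+1) =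
      fun y => hs n y + (2⁻¹:ℝ)^(n+1) * ∑' k, F n (hs n) k * f k y :=
    ⟨fun n => Nat.rec (fun _ => 0)
      (fun m hm y => hm y + (2⁻¹:ℝ)^(m+1) * ∑' k, F m hm k * f k y) n, rfl, fun n => rfl⟩
  set Λ : ℕ → ℕ → ℝ := fun n => F n (hs n) with hΛdef
  have hΛW : ∀ n, IsW A n (Λ n) := fun n => hF1 n (hs n)
  -- the individual convex combinations
  set gk : ℕ → E → ℝ := fun m y => ∑' k, Λ m k * f k y with hgk
  have hgkbd : ∀ m y, |gk m y| ≤ C := fun m y =>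
    cg_abs_le f C hbdd (Λ m) (hΛW m).1 (hΛW m).2.1 y
  -- bound on partial sums
  have hbnd : ∀ n y, |hs n y| ≤ (1 - (2⁻¹:ℝ)^n) * C := by
    intro n
    induction n with
    | zero => intro y; simp [hs0]
    | succ n ih =>
      intro y
      rw [hsS n]
      have h1 := ih y
      have h2 := hgkbd n y
      have habs : |hs n y + (2⁻¹:ℝ)^(n+1) * gk n y| ≤
          |hs n y| + (2⁻¹:ℝ)^(n+1) * |gk n y| := by
        refine le_trans (abs_add_le _ _) ?_
        rw [abs_mul, abs_of_nonneg (by positivity : (0:ℝ) ≤ (2⁻¹:ℝ)^(n+1))]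
      have hpow : ((2:ℝ)⁻¹)^(n+1) = (2⁻¹:ℝ)^n * 2⁻¹ := pow_succ _ _
      have : (2⁻¹:ℝ)^(n+1) * |gk n y| ≤ (2⁻¹:ℝ)^(n+1) * C :=
        mul_le_mul_of_nonneg_left h2 (by positivity)
      calc |hs n y + (2⁻¹:ℝ)^(n+1) * gk n y| ≤ |hs n y| + (2⁻¹:ℝ)^(n+1) * |gk n y| := habs
        _ ≤ (1 - (2⁻¹:ℝ)^n) * C + (2⁻¹:ℝ)^(n+1) * C := by linarith
        _ = (1 - (2⁻¹:ℝ)^(n+1)) * C := by rw [hpow]; ring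
  have hbC : ∀ n y, |hs n y| ≤ C := by
    intro n y
    refine le_trans (hbnd n y) ?_
    have h1 : (0:ℝ) ≤ (2⁻¹:ℝ)^n := by positivity
    nlinarith
  have hnear : ∀ n lam', IsW A n lam' →
      (⨆ y, (hs n y + (2⁻¹:ℝ)^n * gk n y)) ≤
        (⨆ y, (hs n y + (2⁻¹:ℝ)^n * ∑' k, lam' k * f k y)) + ε * (4⁻¹:ℝ)^(n+1) :=
    fun n => hF2 n (hs n) (hbC n)
  -- geometric weights
  set w : ℕ → ℝ := fun j => (2⁻¹:ℝ)^(j+1) with hw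
  have hw0 : ∀ j, 0 ≤ w j := fun j => by positivity
  have hw1 : ∑' j, w j = 1 := by
    have h := tsum_geometric_of_lt_one (r := (2⁻¹:ℝ)) (by norm_num) (by norm_num)
    have : ∑' j : ℕ, (2⁻¹:ℝ)^(j+1) = ∑' j : ℕ, (2⁻¹:ℝ)^j * 2⁻¹ := by
      exact tsum_congr fun j => pow_succ _ _
    rw [hw]
    rw [this, tsum_mul_right, h]
    norm_num
  have hws : Summable w := summable_of_tsum_one w hw1
  -- the tail combinations ν n and their properties
  set ν : ℕ → ℕ → ℝ := fun n k => ∑' j, w j * Λ (n + j) k with hν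
  have hmix : ∀ n, (∑' k, ν n k) = 1 ∧
      ∀ y, ∑' k, ν n k * f k y = ∑' j, w j * ∑' k, Λ (n + j) k * f k y :=
    fun n => mix f C hbdd w hw0 hw1 (fun j => Λ (n + j)) (fun j k => (hΛW (n + j)).1 k)
      (fun j => (hΛW (n + j)).2.1)
  have hνW : ∀ n, IsW A n (ν n) := by
    intro n
    refine ⟨fun k => tsum_nonneg fun j => mul_nonneg (hw0 j) ((hΛW (n+j)).1 k),
      (hmix n).1, fun k hk => ?_, fun k hk => ?_⟩
    · have : ∀ j, w j * Λ (n + j) k = 0 := fun j => by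
        rw [(hΛW (n+j)).2.2.1 k (by omega), mul_zero]
      simp only [hν, this, tsum_zero]
    · have : ∀ j, w j * Λ (n + j) k = 0 := fun j => by
        rw [(hΛW (n+j)).2.2.2 k hk, mul_zero]
      simp only [hν, this, tsum_zero]
  -- R n = value of ν n as ∑ of gk's
  set R : ℕ → E → ℝ := fun n y => ∑' j, w j * gk (n + j) y with hR
  have hRν : ∀ n y, ∑' k, ν n k * f k y = R n y := fun n y => (hmix n).2 y
  have hRsummable : ∀ n y, Summable fun j => w j * gk (n + j) y := by
    intro n y
    have h2 : Summable fun j => w j * C := hws.mul_right C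
    apply Summable.of_norm_bounded h2
    intro j
    rw [Real.norm_eq_abs, abs_mul, abs_of_nonneg (hw0 j)]
    exact mul_le_mul_of_nonneg_left (hgkbd _ _) (hw0 j)
  have hRrec : ∀ n y, R n y = 2⁻¹ * gk n y + 2⁻¹ * R (n+1) y := by
    intro n y
    have h1 : R n y = w 0 * gk (n + 0) y + ∑' j, w (j+1) * gk (n + (j+1)) y := by
      rw [hR]
      exact Summable.tsum_eq_zero_add (hRsummable n y)
    have h2 : ∀ j : ℕ, w (j+1) * gk (n + (j+1)) y = 2⁻¹ * (w j * gk ((n+1) + j) y) := by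
      intro j
      have hwj : w (j+1) = 2⁻¹ * w j := by
        simp only [hw]
        rw [pow_succ]
        ring
      have : n + (j+1) = (n+1) + j := by omega
      rw [hwj, this, mul_assoc]
    rw [h1]
    simp only [h2]
    rw [tsum_mul_left]
    have : w 0 = 2⁻¹ := by simp [hw]
    rw [this, Nat.add_zero]
  -- total function and the peak point
  have hptot := hpeak (ν 0) (hνW 0).1 (hνW 0).2.1
  obtain ⟨b, hbG, hb⟩ := hptot
  set S : ℝ := ∑' k, ν 0 k * f k b with hS
  -- the key identity: total = hs n + (2⁻¹)^n * R n
  have htot : ∀ n y, ∑' k, ν 0 k * f k y = hs n y + (2⁻¹:ℝ)^n * R n y := by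
    intro n
    induction n with
    | zero => intro y; rw [hRν 0 y, hs0]; norm_num
    | succ n ih =>
      intro y
      rw [ih y, hsS n, hRrec n y]
      have hpow : ((2:ℝ)⁻¹)^(n+1) = (2⁻¹:ℝ)^n * 2⁻¹ := pow_succ _ _
      rw [hpow]
      ring
  -- p ≤ S
  have hpS : p ≤ S := by
    obtain ⟨y₀, hy₀⟩ := hp (ν 0) (hνW 0).1 (hνW 0).2.1 (hνW 0).2.2.2
    exact le_trans hy₀ (hb y₀)
  -- supremum of partial sums
  set u : ℕ → ℝ := fun n => ⨆ y, hs n y with hu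
  have hu0 : u 0 = 0 := by
    rw [hu]; simp [hs0]
  -- the near-minimality gives: sup (hs n + c_n * gk n) ≤ S + ε δ_n
  have hstar : ∀ n, (⨆ y, (hs n y + (2⁻¹:ℝ)^n * gk n y)) ≤ S + ε * (4⁻¹:ℝ)^(n+1) := by
    intro n
    refine le_trans (hnear n (ν n) (hνW n)) ?_
    have heq : ∀ y, hs n y + (2⁻¹:ℝ)^n * ∑' k, ν n k * f k y = ∑' k, ν 0 k * f k y := by
      intro y
      rw [hRν n y, htot n y]
    have : (⨆ y, (hs n y + (2⁻¹:ℝ)^n * ∑' k, ν n k * f k y)) ≤ S := by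
      refine ciSup_le fun y => ?_
      rw [heq y, hS]
      exact hb y
    linarith
  -- bddAbove facts for le_ciSup
  have hbddhs : ∀ n, BddAbove (Set.range fun y => hs n y) := fun n =>
    ⟨C, by rintro _ ⟨y, rfl⟩; exact (abs_le.1 (hbC n y)).2⟩
  have hbddphi : ∀ n, BddAbove (Set.range fun y => hs n y + (2⁻¹:ℝ)^n * gk n y) := by
    intro n
    refine ⟨C + C, ?_⟩
    rintro _ ⟨y, rfl⟩
    have h2 := hgkbd n y
    have hc1 : ((2:ℝ)⁻¹)^n ≤ 1 := pow_le_one₀ (by norm_num) (by norm_num)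
    have hc0 : (0:ℝ) ≤ (2⁻¹:ℝ)^n := by positivity
    have : (2⁻¹:ℝ)^n * gk n y ≤ C := by nlinarith [(abs_le.1 h2).2, (abs_le.1 h2).1]
    have := (abs_le.1 (hbC n y)).2
    linarith
  -- recursion bound on u
  have hurec : ∀ n, u (n+1) ≤ 2⁻¹ * u n + 2⁻¹ * (S + ε * (4⁻¹:ℝ)^(n+1)) := by
    intro n
    rw [hu]
    refine ciSup_le fun y => ?_
    rw [hsS n]
    show hs n y + (2⁻¹:ℝ)^(n+1) * gk n y ≤ 2⁻¹ * u n + 2⁻¹ * (S + ε * (4⁻¹:ℝ)^(n+1))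
    have h1 : hs n y ≤ u n := le_ciSup (hbddhs n) y
    have h2 : hs n y + (2⁻¹:ℝ)^n * gk n y ≤ S + ε * (4⁻¹:ℝ)^(n+1) :=
      le_trans (le_ciSup (hbddphi n) y) (hstar n)
    have hpow : ((2:ℝ)⁻¹)^(n+1) = (2⁻¹:ℝ)^n * 2⁻¹ := pow_succ _ _
    have : hs n y + (2⁻¹:ℝ)^(n+1) * gk n y =
        2⁻¹ * hs n y + 2⁻¹ * (hs n y + (2⁻¹:ℝ)^n * gk n y) := by
      rw [hpow]; ring
    rw [this]
    -- goal: 2⁻¹ * hs n y + 2⁻¹ * (...) ≤ 2⁻¹ * u n + 2⁻¹ * (S + ...)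
    nlinarith
  -- the main induction bound
  have humain : ∀ n, u n ≤ S - (2⁻¹:ℝ)^n * p + ε * ((2⁻¹:ℝ)^n * (1 - (2⁻¹:ℝ)^n)) := by
    intro n
    induction n with
    | zero => rw [hu0]; norm_num; linarith
    | succ n ih =>
      have h1 := hurec n
      have hpow : ((2:ℝ)⁻¹)^(n+1) = (2⁻¹:ℝ)^n * 2⁻¹ := pow_succ _ _
      have hpow4 : ((4:ℝ)⁻¹)^(n+1) = ((2⁻¹:ℝ)^(n+1))^2 := by
        rw [← pow_mul, show ((4:ℝ)⁻¹) = ((2:ℝ)⁻¹)^2 by norm_num, ← pow_mul]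
        ring_nf
      have hc0 : (0:ℝ) ≤ (2⁻¹:ℝ)^n := by positivity
      rw [hpow] at *
      rw [hpow4] at h1
      nlinarith [sq_nonneg ((2⁻¹:ℝ)^n), mul_nonneg hε.le hc0]
  -- lower bound for R n b
  have hRb : ∀ n, p - ε * (1 - (2⁻¹:ℝ)^n) ≤ R n b := by
    intro n
    have h1 : hs n b ≤ u n := le_ciSup (hbddhs n) b
    have h2 : S = hs n b + (2⁻¹:ℝ)^n * R n b := htot n b
    have h3 := humain n
    have hc0 : (0:ℝ) < (2⁻¹:ℝ)^n := by positivity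
    -- (2⁻¹)^n * R n b = S - hs n b ≥ (2⁻¹)^n * p - ε (2⁻¹)^n (1 - (2⁻¹)^n)
    have h4 : (2⁻¹:ℝ)^n * (p - ε * (1 - (2⁻¹:ℝ)^n)) ≤ (2⁻¹:ℝ)^n * R n b := by nlinarith
    exact le_of_mul_le_mul_left h4 hc0
  -- conclude by contradiction
  refine ⟨b, hbG, ?_⟩
  by_contra hcon
  push_neg at hcon
  have hbla : IsBoundedUnder (· ≤ ·) atTop (fun k => f k b) :=
    ⟨C, Filter.eventually_map.2 (Filter.Eventually.of_forall fun k => (abs_le.1 (hbdd k b)).2)⟩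
  have hev := Filter.eventually_lt_of_limsup_lt hcon hbla
  obtain ⟨N, hN⟩ := Filter.eventually_atTop.1 hev
  have hub : R N b ≤ p - ε := by
    rw [← hRν N b]
    refine cg_le f C hbdd (ν N) (hνW N).1 (hνW N).2.1 b (p - ε) fun k hk => ?_
    have hkN : N ≤ k := by
      by_contra hkn
      exact hk ((hνW N).2.2.1 k (by omega))
    exact (hN k hkN).le
  have hlb := hRb N
  have hc0 : (0:ℝ) < (2⁻¹:ℝ)^N := by positivity
  nlinarith

/-- sup-limsup theorem of Galán and Simons: Let `E` be a set, `G ⊆ E` nonempty,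
and `(f_k)` a uniformly bounded sequence of real functions on `E`. If every countable convex
combination `∑ λ_k f_k` attains its supremum over `E` at some point of `G`, then
`sup {limsup_k f_k(x) : x ∈ G} = sup {limsup_k f_k(x) : x ∈ E}`. -/
theorem stmt14 {E : Type*} (G : Set E) (hG : G.Nonempty)
    (f : ℕ → E → ℝ) (C : ℝ) (hbdd : ∀ (k : ℕ) (x : E), |f k x| ≤ C)
    (hpeak : ∀ lam : ℕ → ℝ, (∀ k, 0 ≤ lam k) → (∑' k, lam k) = 1 →
      ∃ x ∈ G, ∀ y : E, (∑' k, lam k * f k y) ≤ ∑' k, lam k * f k x) :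
    sSup ((fun x => limsup (fun k => f k x) atTop) '' G) =
      sSup (Set.range fun x : E => limsup (fun k => f k x) atTop) := by
  haveI : Nonempty E := ⟨hG.choose⟩
  have hbu : ∀ x : E, IsBoundedUnder (· ≤ ·) atTop (fun k => f k x) := fun x =>
    ⟨C, Filter.eventually_map.2 (Filter.Eventually.of_forall fun k => (abs_le.1 (hbdd k x)).2)⟩
  have hbl : ∀ x : E, IsBoundedUnder (· ≥ ·) atTop (fun k => f k x) := fun x =>
    ⟨-C, Filter.eventually_map.2 (Filter.Eventually.of_forall fun k => (abs_le.1 (hbdd k x)).1)⟩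
  have hcb : ∀ x : E, IsCoboundedUnder (· ≤ ·) atTop (fun k => f k x) := fun x =>
    (hbl x).isCoboundedUnder_le
  have hlimsuple : ∀ x : E, limsup (fun k => f k x) atTop ≤ C := fun x =>
    limsup_le_of_le (hcb x) (Filter.Eventually.of_forall fun k => (abs_le.1 (hbdd k x)).2)
  have hbddrange : BddAbove (Set.range fun x : E => limsup (fun k => f k x) atTop) :=
    ⟨C, by rintro _ ⟨x, rfl⟩; exact hlimsuple x⟩
  have hbddim : BddAbove ((fun x => limsup (fun k => f k x) atTop) '' G) :=
    hbddrange.mono (Set.image_subset_range _ _)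
  apply le_antisymm
  · exact csSup_le_csSup hbddrange (hG.image _) (Set.image_subset_range _ _)
  · refine csSup_le (Set.range_nonempty _) ?_
    rintro _ ⟨x, rfl⟩
    refine le_of_forall_pos_le_add fun ε hε => ?_
    set d := limsup (fun k => f k x) atTop with hd
    have hfreq : ∃ᶠ k in atTop, d - ε/2 < f k x :=
      Filter.frequently_lt_of_lt_limsup (hcb x) (by linarith)
    have hAinf : {k | d - ε/2 < f k x}.Infinite := Nat.frequently_atTop_iff_infinite.1 hfreq
    have hp : ∀ lam : ℕ → ℝ, (∀ k, 0 ≤ lam k) → (∑' k, lam k) = 1 →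
        (∀ k, k ∉ {k | d - ε/2 < f k x} → lam k = 0) →
        ∃ y, d - ε/2 ≤ ∑' k, lam k * f k y := by
      intro lam h0 h1 hsupp
      refine ⟨x, le_cg f C hbdd lam h0 h1 x (d - ε/2) fun k hk => ?_⟩
      by_contra hlt
      push_neg at hlt
      exact hk (hsupp k (fun hmem => absurd hmem (by simpa using hlt.not_gt)))
    obtain ⟨b, hbG, hlb⟩ := simons_aux G hG f C hbdd hpeak _ hAinf (d - ε/2) (ε/2)
      (by linarith) hp
    have hmem : limsup (fun k => f k b) atTop ≤
        sSup ((fun x => limsup (fun k => f k x) atTop) '' G) :=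
      le_csSup hbddim ⟨b, hbG, rfl⟩
    linarith
end

section
/- Let (K, d) be a compact metric space, let X ⊆ K be a dense subset that is Polish in the induced topology, and let F : C_b(X) → ℝ be a convex nondecreasing downward continuous function with F(0) = 0. If μ is a finite nonnegative Borel measure on K with μ(K \ X) > 0, then sup{∫_K f dμ − F(f|_X) : f ∈ C(K)} = +∞. -/
open MeasureTheory BoundedContinuousFunction Filter Topology

/-- Restriction of a continuous function on a compact metric space `K` to a subset `X ⊆ K`,
as a bounded continuous function on `X`. -/
noncomputable def restrictBCF {K : Type*} [TopologicalSpace K] [CompactSpace K]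
    (X : Set K) (f : C(K, ℝ)) : X →ᵇ ℝ :=
  (BoundedContinuousFunction.mkOfCompact f).compContinuous
    ⟨Subtype.val, continuous_subtype_val⟩

/-- Let `K` be a compact metric space, `X ⊆ K` a dense Polish subset, and
`F : C_b(X) → ℝ` convex, nondecreasing, downward continuous with `F 0 = 0`. If `μ` is a finite
nonnegative Borel measure on `K` with `μ(K \ X) > 0`, then
`sup {∫_K f dμ - F(f|_X) : f ∈ C(K)} = +∞`. -/
theorem stmt16 {K : Type*} [MetricSpace K] [CompactSpace K]
    [MeasurableSpace K] [BorelSpace K]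
    (X : Set K) (hX : Dense X) [PolishSpace X]
    (F : ((X : Set K) →ᵇ ℝ) → ℝ) (hconv : ConvexOn ℝ Set.univ F) (hmono : Monotone F)
    (hF0 : F 0 = 0)
    (hdown : ∀ (f : (X : Set K) →ᵇ ℝ) (g : ℕ → (X : Set K) →ᵇ ℝ), Antitone g →
      (∀ x, Tendsto (fun n => g n x) atTop (𝓝 (f x))) →
      Tendsto (fun n => F (g n)) atTop (𝓝 (F f)))
    (μ : Measure K) [IsFiniteMeasure μ] (hμX : 0 < μ Xᶜ) :
    ∀ M : ℝ, ∃ f : C(K, ℝ), M < ∫ x, f x ∂μ - F (restrictBCF X f) := by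
  intro M
  -- `X` is measurable, being the continuous injective image of a Polish space
  have hXmeas : MeasurableSet X := by
    have : X = Set.range (Subtype.val : X → K) := (Subtype.range_coe).symm
    rw [this]
    exact measurableSet_range_of_continuous_injective continuous_subtype_val
      Subtype.val_injective
  -- find a compact (hence closed) subset `C ⊆ Xᶜ` of positive measure
  obtain ⟨C, hCsub, hCcomp, hCpos⟩ :=
    hXmeas.compl.exists_lt_isCompact (r := 0) hμX
  have hCclosed : IsClosed C := hCcomp.isClosed
  have hCne : C.Nonempty := by
    rcases C.eq_empty_or_nonempty with h | h
    · simp [h] at hCpos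
    · exact h
  set δ : ℝ := (μ C).toReal with hδ
  have hδpos : 0 < δ := ENNReal.toReal_pos (ne_of_gt hCpos) (measure_ne_top μ C)
  -- choose `n` large
  obtain ⟨n, hn⟩ := exists_nat_gt ((M + 1) / δ)
  have hnδ : M + 1 < n * δ := by
    rwa [div_lt_iff₀ hδpos] at hn
  -- the approximating continuous functions
  have hcont : ∀ m : ℕ, Continuous fun x : K =>
      (n : ℝ) * max 0 (1 - m * Metric.infDist x C) := by
    intro m
    exact continuous_const.mul
      (continuous_const.max (continuous_const.sub
        (continuous_const.mul (Metric.continuous_infDist_pt C))))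
  set g : ℕ → C(K, ℝ) := fun m => ⟨_, hcont m⟩ with hg
  have hg_apply : ∀ m x, g m x = (n : ℝ) * max 0 (1 - m * Metric.infDist x C) := fun _ _ => rfl
  -- nonnegativity
  have hg_nonneg : ∀ m x, 0 ≤ g m x := fun m x => by
    rw [hg_apply]
    positivity
  -- equals n on C
  have hg_onC : ∀ m, ∀ x ∈ C, g m x = n := by
    intro m x hx
    rw [hg_apply, Metric.infDist_zero_of_mem hx]
    norm_num
  -- antitone in m
  have hg_anti : ∀ x : K, Antitone fun m => g m x := by
    intro x m m' hmm'
    simp only [hg_apply]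
    have h0 := Metric.infDist_nonneg (x := x) (s := C)
    have hmul : (m : ℝ) * Metric.infDist x C ≤ m' * Metric.infDist x C := by
      exact mul_le_mul_of_nonneg_right (by exact_mod_cast hmm') h0
    have : max 0 (1 - m' * Metric.infDist x C) ≤ max 0 (1 - m * Metric.infDist x C) :=
      max_le_max le_rfl (by linarith)
    exact mul_le_mul_of_nonneg_left this (by positivity)
  -- pointwise convergence to 0 on X
  have hg_tendsto : ∀ x : X, Tendsto (fun m => g m (x : K)) atTop (𝓝 0) := by
    intro x
    have hxC : (x : K) ∉ C := fun h => hCsub h x.2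
    have hd : 0 < Metric.infDist (x : K) C :=
      (hCclosed.notMem_iff_infDist_pos hCne).1 hxC
    obtain ⟨m₀, hm₀⟩ := exists_nat_gt (1 / Metric.infDist (x : K) C)
    have : ∀ m ≥ m₀, g m (x : K) = 0 := by
      intro m hm
      rw [hg_apply]
      have h1 : 1 < m * Metric.infDist (x : K) C := by
        have : (1 : ℝ) / Metric.infDist (x : K) C < m := lt_of_lt_of_le hm₀ (by exact_mod_cast hm)
        rwa [div_lt_iff₀ hd] at this
      rw [max_eq_left (by linarith)]
      ring
    exact tendsto_atTop_of_eventually_const this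
  -- apply downward continuity to the restrictions
  have hanti : Antitone fun m => restrictBCF X (g m) := by
    intro m m' hmm'
    intro x
    exact hg_anti x hmm'
  have hptwise : ∀ x : X, Tendsto (fun m => (restrictBCF X (g m)) x) atTop
      (𝓝 ((0 : X →ᵇ ℝ) x)) := by
    intro x
    show Tendsto (fun m => g m (x : K)) atTop (𝓝 ((0 : X →ᵇ ℝ) x))
    simpa using hg_tendsto x
  have hFto : Tendsto (fun m => F (restrictBCF X (g m))) atTop (𝓝 0) := by
    have := hdown 0 (fun m => restrictBCF X (g m)) hanti hptwise
    rwa [hF0] at this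
  obtain ⟨m, hm⟩ := (hFto.eventually (eventually_lt_nhds (show (0:ℝ) < 1 by norm_num))).exists
  refine ⟨g m, ?_⟩
  -- integral lower bound
  have hint : Integrable (fun x => g m x) μ := (mkOfCompact (g m)).integrable μ
  have hind : Integrable (C.indicator fun _ : K => (n : ℝ)) μ := by
    rw [integrable_indicator_iff hCcomp.measurableSet]
    exact integrableOn_const (measure_lt_top μ C).ne
  have hle : ∀ x, C.indicator (fun _ : K => (n : ℝ)) x ≤ g m x := by
    intro x
    by_cases hx : x ∈ C
    · rw [Set.indicator_of_mem hx, hg_onC m x hx]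
    · rw [Set.indicator_of_notMem hx]
      exact hg_nonneg m x
  have hint_ge : (n : ℝ) * δ ≤ ∫ x, g m x ∂μ := by
    have := integral_mono hind hint hle
    rwa [integral_indicator_const _ hCcomp.measurableSet, smul_eq_mul, mul_comm] at this
  linarith
end

section
/- Let X be a Polish space and let F : C(X) → ℝ be a convex nondecreasing function defined on all continuous (not necessarily bounded) real-valued functions on X, with F(0) = 0. Then F automatically satisfies the upward continuity property: for every sequence f_n ∈ C(X) with f_n ↑ f ∈ C(X) pointwise on X, one has F(f_n) ↑ F(f). -/
open Filter Topology

private theorem exists_subgradient_aux {E : Type*} [AddCommGroup E] [Module ℝ E]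
    (F : E → ℝ) (hconv : ConvexOn ℝ Set.univ F) (f : E) :
    ∃ μ : E →ₗ[ℝ] ℝ, ∀ v : E, μ v ≤ F (f + v) - F f := by
  classical
  set q : E → ℝ → ℝ := fun v t => (F (f + t • v) - F f) / t with hqdef
  have hcvx : ∀ (u w : E) (a b : ℝ), 0 ≤ a → 0 ≤ b → a + b = 1 →
      F (a • u + b • w) ≤ a * F u + b * F w := fun u w a b ha hb hab =>
    hconv.2 (Set.mem_univ u) (Set.mem_univ w) ha hb hab
  -- monotonicity of slopes
  have hsec : ∀ (v : E) (s t : ℝ), 0 < s → s ≤ t → q v s ≤ q v t := by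
    intro v s t hs hst
    have ht : 0 < t := lt_of_lt_of_le hs hst
    have htne : t ≠ 0 := ht.ne'
    have hcomb : (1 - s / t) • f + (s / t) • (f + t • v) = f + s • v := by
      rw [smul_add, smul_smul, div_mul_cancel₀ s htne, sub_smul, one_smul]
      abel
    have h1 : F (f + s • v) ≤ (1 - s / t) * F f + (s / t) * F (f + t • v) := by
      rw [← hcomb]
      exact hcvx _ _ _ _ (sub_nonneg.mpr ((div_le_one ht).mpr hst)) (by positivity) (by ring)
    have h2 : F (f + s • v) - F f ≤ (s / t) * (F (f + t • v) - F f) := by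
      ring_nf at h1 ⊢
      linarith
    simp only [hqdef]
    rw [div_le_div_iff₀ hs ht]
    calc (F (f + s • v) - F f) * t ≤ (s / t) * (F (f + t • v) - F f) * t :=
          mul_le_mul_of_nonneg_right h2 ht.le
      _ = (F (f + t • v) - F f) * s := by field_simp
  -- lower bound for slopes
  have hcross : ∀ (v : E) (t : ℝ), 0 < t → F f - F (f - v) ≤ q v t := by
    intro v t ht
    have h1t : (0 : ℝ) < 1 + t := by linarith
    have hne : (1 + t : ℝ) ≠ 0 := h1t.ne'
    have hcomb : (t / (1 + t)) • (f - v) + (1 / (1 + t)) • (f + t • v) = f := by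
      have h0 : (t / (1 + t)) • (f - v) + (1 / (1 + t)) • (f + t • v)
          = ((t / (1 + t)) + 1 / (1 + t)) • f + ((1 / (1 + t)) * t - t / (1 + t)) • v := by
        rw [smul_sub, smul_add, smul_smul, add_smul, sub_smul]
        abel
      rw [h0]
      have e1 : (t / (1 + t)) + 1 / (1 + t) = 1 := by
        field_simp
        ring
      have e2 : (1 / (1 + t)) * t - t / (1 + t) = 0 := by ring
      rw [e1, e2, one_smul, zero_smul, add_zero]
    have h1 : F f ≤ (t / (1 + t)) * F (f - v) + (1 / (1 + t)) * F (f + t • v) := by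
      conv_lhs => rw [← hcomb]
      refine hcvx _ _ _ _ (by positivity) (by positivity) ?_
      field_simp
      ring
    have h3 : (1 + t) * F f ≤ t * F (f - v) + F (f + t • v) := by
      have h4 : (1 + t) * ((t / (1 + t)) * F (f - v) + (1 / (1 + t)) * F (f + t • v))
          = t * F (f - v) + F (f + t • v) := by field_simp
      calc (1 + t) * F f ≤ (1 + t) * ((t / (1 + t)) * F (f - v) + (1 / (1 + t)) * F (f + t • v)) :=
            mul_le_mul_of_nonneg_left h1 h1t.le
        _ = _ := h4
    simp only [hqdef]
    rw [le_div_iff₀ ht]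
    nlinarith
  set p : E → ℝ := fun v => sInf (q v '' Set.Ioi (0 : ℝ)) with hpdef
  have hne : ∀ v : E, (q v '' Set.Ioi (0 : ℝ)).Nonempty :=
    fun v => ⟨q v 1, ⟨1, Set.mem_Ioi.mpr one_pos, rfl⟩⟩
  have hbdd : ∀ v : E, BddBelow (q v '' Set.Ioi (0 : ℝ)) := by
    intro v
    refine ⟨F f - F (f - v), ?_⟩
    rintro y ⟨t, ht, rfl⟩
    exact hcross v t (Set.mem_Ioi.mp ht)
  have hple : ∀ (v : E) (t : ℝ), 0 < t → p v ≤ q v t :=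
    fun v t ht => csInf_le (hbdd v) ⟨t, Set.mem_Ioi.mpr ht, rfl⟩
  -- positive homogeneity
  have N_hom : ∀ c : ℝ, 0 < c → ∀ v : E, p (c • v) = c * p v := by
    intro c hc v
    have hq' : ∀ t : ℝ, 0 < t → q (c • v) t = c * q v (t * c) := by
      intro t ht
      simp only [hqdef]
      rw [smul_smul]
      field_simp
    apply le_antisymm
    · have h5 : ∀ s : ℝ, 0 < s → p (c • v) ≤ c * q v s := by
        intro s hs
        have h6 := hple (c • v) (s / c) (by positivity)
        rwa [hq' (s / c) (by positivity), div_mul_cancel₀ s hc.ne'] at h6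
      have h6 : p (c • v) / c ≤ p v := by
        refine le_csInf (hne v) ?_
        rintro y ⟨s, hs, rfl⟩
        rw [div_le_iff₀' hc]
        exact h5 s (Set.mem_Ioi.mp hs)
      calc p (c • v) = c * (p (c • v) / c) := by field_simp
        _ ≤ c * p v := mul_le_mul_of_nonneg_left h6 hc.le
    · refine le_csInf (hne (c • v)) ?_
      rintro y ⟨t, ht, rfl⟩
      rw [hq' t (Set.mem_Ioi.mp ht)]
      exact mul_le_mul_of_nonneg_left (hple v (t * c) (mul_pos (Set.mem_Ioi.mp ht) hc)) hc.le
  -- subadditivity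
  have N_add : ∀ u v : E, p (u + v) ≤ p u + p v := by
    intro u v
    have hmid : ∀ r : ℝ, 0 < r → q (u + v) r ≤ q u (2 * r) + q v (2 * r) := by
      intro r hr
      have hcomb : (1 / 2 : ℝ) • (f + (2 * r) • u) + (1 / 2 : ℝ) • (f + (2 * r) • v)
          = f + r • (u + v) := by
        rw [smul_add, smul_add, smul_smul, smul_smul, smul_add]
        have e1 : (1 / 2 : ℝ) * (2 * r) = r := by ring
        rw [e1]
        have e2 : (1 / 2 : ℝ) • f + ((1 / 2 : ℝ) • f) = f := by
          rw [← add_smul]; norm_num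
        rw [add_add_add_comm, e2]
      have h7 : F (f + r • (u + v))
          ≤ (1 / 2) * F (f + (2 * r) • u) + (1 / 2) * F (f + (2 * r) • v) := by
        rw [← hcomb]
        exact hcvx _ _ _ _ (by norm_num) (by norm_num) (by norm_num)
      simp only [hqdef]
      rw [← add_div, div_le_div_iff₀ hr (by positivity)]
      have h8 : 2 * (F (f + r • (u + v)) - F f)
          ≤ (F (f + (2 * r) • u) - F f) + (F (f + (2 * r) • v) - F f) := by linarith
      calc (F (f + r • (u + v)) - F f) * (2 * r)
          = (2 * (F (f + r • (u + v)) - F f)) * r := by ring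
        _ ≤ ((F (f + (2 * r) • u) - F f) + (F (f + (2 * r) • v) - F f)) * r :=
            mul_le_mul_of_nonneg_right h8 hr.le
    have hst : ∀ s t : ℝ, 0 < s → 0 < t → p (u + v) ≤ q u s + q v t := by
      intro s t hs ht
      set r := min s t / 2 with hrdef
      have hr : 0 < r := by positivity
      have h2r : 2 * r = min s t := by rw [hrdef]; ring
      calc p (u + v) ≤ q (u + v) r := hple _ r hr
        _ ≤ q u (2 * r) + q v (2 * r) := hmid r hr
        _ ≤ q u s + q v t := by
            refine add_le_add (hsec u (2 * r) s (by positivity) ?_)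
              (hsec v (2 * r) t (by positivity) ?_)
            · rw [h2r]; exact min_le_left s t
            · rw [h2r]; exact min_le_right s t
    have h9 : ∀ t : ℝ, 0 < t → p (u + v) - q v t ≤ p u := by
      intro t ht
      refine le_csInf (hne u) ?_
      rintro y ⟨s, hs, rfl⟩
      linarith [hst s t (Set.mem_Ioi.mp hs) ht]
    have h10 : p (u + v) - p u ≤ p v := by
      refine le_csInf (hne v) ?_
      rintro y ⟨t, ht, rfl⟩
      linarith [h9 t (Set.mem_Ioi.mp ht)]
    linarith
  -- value at zero
  have hp0 : p 0 = 0 := by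
    have hq0 : ∀ t : ℝ, 0 < t → q (0 : E) t = 0 := by
      intro t ht
      simp [hqdef]
    apply le_antisymm
    · have := hple 0 1 one_pos
      rwa [hq0 1 one_pos] at this
    · refine le_csInf (hne 0) ?_
      rintro y ⟨t, ht, rfl⟩
      rw [hq0 t (Set.mem_Ioi.mp ht)]
  -- Hahn-Banach
  obtain ⟨μ, -, hμle⟩ := exists_extension_of_le_sublinear ⟨⊥, 0⟩ p N_hom N_add
    (by
      rintro ⟨x, hx⟩
      obtain rfl : x = 0 := (Submodule.mem_bot ℝ).mp hx
      simpa using hp0.ge)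
  refine ⟨μ, fun v => ?_⟩
  have h1 := hple v 1 one_pos
  have h2 : q v 1 = F (f + v) - F f := by simp [hqdef]
  have h3 := hμle v
  linarith

/-- A convex nondecreasing `F : C(X) → ℝ` with `F 0 = 0`, defined on all
continuous real functions on a Polish space `X`, is automatically upward continuous:
`f_n ↑ f` pointwise (with `f_n, f ∈ C(X)`) implies `F(f_n) ↑ F(f)`. -/
theorem stmt17 {X : Type*} [TopologicalSpace X] [PolishSpace X]
    (F : C(X, ℝ) → ℝ) (hconv : ConvexOn ℝ Set.univ F) (hmono : Monotone F)
    (hF0 : F 0 = 0) :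
    ∀ (f : C(X, ℝ)) (g : ℕ → C(X, ℝ)), Monotone g →
      (∀ x, Tendsto (fun n => g n x) atTop (𝓝 (f x))) →
      Tendsto (fun n => F (g n)) atTop (𝓝 (F f)) := by
  intro f g hg hlim
  classical
  -- g n ≤ f
  have hgle : ∀ n, g n ≤ f := by
    intro n
    rw [ContinuousMap.le_def]
    intro x
    refine ge_of_tendsto (hlim x) ?_
    filter_upwards [eventually_ge_atTop n] with m hm
    exact ContinuousMap.le_def.mp (hg hm) x
  have hFb : BddAbove (Set.range fun n => F (g n)) := by
    refine ⟨F f, ?_⟩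
    rintro y ⟨n, rfl⟩
    exact hmono (hgle n)
  have hFmono : Monotone fun n => F (g n) := fun a b h => hmono (hg h)
  set L := ⨆ n, F (g n) with hLdef
  have htendL : Tendsto (fun n => F (g n)) atTop (𝓝 L) := tendsto_atTop_ciSup hFmono hFb
  have hLle : L ≤ F f := ciSup_le fun n => hmono (hgle n)
  -- main claim : L = F f
  have hLeq : L = F f := by
    refine le_antisymm hLle ?_
    by_contra hcon
    push_neg at hcon
    set ε := F f - L with hεdef
    have hε : 0 < ε := sub_pos.mpr hcon
    obtain ⟨μ, hμ⟩ := exists_subgradient_aux F hconv f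
    -- μ is positive
    have hμpos : ∀ h : C(X, ℝ), 0 ≤ h → 0 ≤ μ h := by
      intro h hh
      have h1 := hμ (-h)
      have h2 : f + -h ≤ f := by
        rw [ContinuousMap.le_def]
        intro x
        have := ContinuousMap.le_def.mp hh x
        simp only [ContinuousMap.add_apply, ContinuousMap.neg_apply]
        simp only [ContinuousMap.zero_apply] at this
        linarith
      have h3 : F (f + -h) ≤ F f := hmono h2
      rw [map_neg] at h1
      linarith
    -- μ (f - g n) ≥ ε
    have hμd : ∀ n, ε ≤ μ (f - g n) := by
      intro n
      have h1 := hμ (g n - f)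
      have h2 : f + (g n - f) = g n := by abel
      rw [h2] at h1
      have h3 : F (g n) ≤ L := le_ciSup hFb n
      have h4 : μ (f - g n) = -μ (g n - f) := by
        rw [← map_neg]
        congr 1
        abel
      rw [h4]
      linarith
    set c := μ (1 : C(X, ℝ)) with hcdef
    have hc : 0 ≤ c := hμpos 1 (ContinuousMap.le_def.mpr fun x => by simp)
    set δ := ε / (2 * (c + 1)) with hδdef
    have hδ : 0 < δ := by positivity
    -- the truncated functions
    have hTc : ∀ n : ℕ, Continuous fun x => max (f x - g n x - δ) 0 := fun n =>
      (((map_continuous f).sub (map_continuous (g n))).sub continuous_const).max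
        continuous_const
    set T : ℕ → C(X, ℝ) := fun n => ⟨fun x => max (f x - g n x - δ) 0, hTc n⟩ with hTdef
    have hμT : ∀ n, ε / 2 ≤ μ (T n) := by
      intro n
      have h1 : (f - g n) - δ • (1 : C(X, ℝ)) ≤ T n := by
        rw [ContinuousMap.le_def]
        intro x
        simp only [hTdef, ContinuousMap.coe_mk, ContinuousMap.sub_apply,
          ContinuousMap.smul_apply, ContinuousMap.one_apply, smul_eq_mul, mul_one]
        exact le_max_left _ _
      have h2 := hμpos _ (sub_nonneg.mpr h1)
      have h3 : μ (T n - ((f - g n) - δ • (1 : C(X, ℝ))))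
          = μ (T n) - (μ (f - g n) - δ * c) := by
        rw [map_sub, map_sub, map_smul, smul_eq_mul]
      rw [h3] at h2
      have h4 := hμd n
      have h5 : δ * c ≤ ε / 2 := by
        rw [hδdef]
        rw [div_mul_eq_mul_div, div_le_div_iff₀ (by linarith) (by norm_num)]
        nlinarith
      linarith
    -- pointwise eventual vanishing
    have hptw : ∀ (x : X) {m n : ℕ}, m ≤ n → f x - g n x ≤ f x - g m x := by
      intro x m n h
      have := ContinuousMap.le_def.mp (hg h) x
      linarith
    have hx0 : ∀ x : X, ∃ N : ℕ, f x - g N x < δ := by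
      intro x
      have h1 : Tendsto (fun n => f x - g n x) atTop (𝓝 0) := by
        have h3 := (tendsto_const_nhds :
          Tendsto (fun _ : ℕ => f x) atTop (𝓝 (f x))).sub (hlim x)
        simpa using h3
      exact ((tendsto_order.mp h1).2 δ hδ).exists
    have hterm0 : ∀ (x : X) (N : ℕ), f x - g N x < δ → ∀ n, N ≤ n → T n x = 0 := by
      intro x N hN n hn
      have h1 := hptw x hn
      simp only [hTdef, ContinuousMap.coe_mk]
      exact max_eq_right (by linarith)
    have hsum : ∀ x : X, Summable fun n => T n x := by
      intro x
      obtain ⟨N, hN⟩ := hx0 x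
      exact summable_of_ne_finset_zero (s := Finset.range N) fun n hn =>
        hterm0 x N hN n (by simpa [Finset.mem_range, not_lt] using hn)
    -- the dominating continuous function
    have hΦc : Continuous fun x => ∑' n, T n x := by
      rw [continuous_iff_continuousAt]
      intro x
      obtain ⟨N, hN⟩ := hx0 x
      have hVo : IsOpen {y : X | f y - g N y < δ} :=
        isOpen_lt ((map_continuous f).sub (map_continuous (g N))) continuous_const
      have hVx : {y : X | f y - g N y < δ} ∈ 𝓝 x := hVo.mem_nhds hN
      have hfin : Continuous fun y => ∑ n ∈ Finset.range N, T n y :=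
        continuous_finset_sum _ fun n _ => map_continuous (T n)
      refine hfin.continuousAt.congr ?_
      refine Filter.eventuallyEq_of_mem hVx fun y hy => ?_
      exact (tsum_eq_sum fun n hn =>
        hterm0 y N hy n (by simpa [Finset.mem_range, not_lt] using hn)).symm
    set Φ : C(X, ℝ) := ⟨fun x => ∑' n, T n x, hΦc⟩ with hΦdef
    have hΦge : ∀ K : ℕ, ∑ n ∈ Finset.range K, μ (T n) ≤ μ Φ := by
      intro K
      have h1 : (∑ n ∈ Finset.range K, T n) ≤ Φ := by
        rw [ContinuousMap.le_def]
        intro x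
        have h2 := Summable.sum_le_tsum (Finset.range K)
          (fun n _ => by
            simp only [hTdef, ContinuousMap.coe_mk]
            exact le_max_right _ _)
          (hsum x)
        simpa [hΦdef, ContinuousMap.coe_sum, Finset.sum_apply] using h2
      have h3 := hμpos _ (sub_nonneg.mpr h1)
      rw [map_sub, map_sum] at h3
      linarith
    have hK : ∀ K : ℕ, (K : ℝ) * (ε / 2) ≤ μ Φ := by
      intro K
      calc (K : ℝ) * (ε / 2) = ∑ _n ∈ Finset.range K, (ε / 2) := by
            rw [Finset.sum_const, Finset.card_range, nsmul_eq_mul]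
        _ ≤ ∑ n ∈ Finset.range K, μ (T n) := Finset.sum_le_sum fun n _ => hμT n
        _ ≤ μ Φ := hΦge K
    obtain ⟨K, hK'⟩ := exists_nat_gt (μ Φ / (ε / 2))
    rw [div_lt_iff₀ (by positivity)] at hK'
    have := hK K
    linarith
  rwa [hLeq] at htendL
end

section
/- Let X be a Polish space and let F : C(X) → ℝ be a convex nondecreasing function with F(0) = 0. Then F satisfies the downward continuity property: for every sequence f_n ∈ C(X) with f_n ↓ f ∈ C(X) pointwise on X, one has F(f_n) ↓ F(f). -/
open Filter Topology

/-- Auxiliary: a continuous function dominating `k * (g k - f - δ)₊` for all `k`. -/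
lemma stmt19_exists_W {X : Type*} [TopologicalSpace X] (f : C(X, ℝ)) (g : ℕ → C(X, ℝ))
    (hg : Antitone g) (htend : ∀ x, Tendsto (fun n => g n x) atTop (𝓝 (f x)))
    {δ : ℝ} (hδ : 0 < δ) :
    ∃ W : C(X, ℝ), 0 ≤ W ∧ ∀ (k : ℕ) (x : X),
      (k : ℝ) * max (g k x - f x - δ) 0 ≤ W x := by
  set t : ℕ → X → ℝ := fun k x => (k : ℝ) * max (g k x - f x - δ) 0 with ht
  have ht0 : ∀ (k : ℕ) (x : X), 0 ≤ t k x := fun k x =>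
    mul_nonneg (Nat.cast_nonneg k) (le_max_right _ _)
  have hzero : ∀ (m k : ℕ), m ≤ k → ∀ x : X, g m x - f x < δ → t k x = 0 := by
    intro m k hmk x hx
    have : g k x ≤ g m x := hg hmk x
    have : max (g k x - f x - δ) 0 = 0 := max_eq_right (by linarith)
    simp [ht, this]
  have hm : ∀ x : X, ∃ m : ℕ, g m x - f x < δ := by
    intro x
    have h1 : ∀ᶠ n in atTop, g n x < f x + δ :=
      (htend x).eventually (Filter.Tendsto.eventually_lt_const (lt_add_of_pos_right (f x) hδ)
        tendsto_id)
    rcases h1.exists with ⟨m, hm⟩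
    exact ⟨m, by linarith⟩
  have hsum : ∀ x : X, Summable (fun k => t k x) := by
    intro x
    rcases hm x with ⟨m, hmx⟩
    refine summable_of_ne_finset_zero (s := Finset.range m) ?_
    intro k hk
    exact hzero m k (le_of_not_gt fun h => hk (Finset.mem_range.2 h)) x hmx
  have hcont : Continuous (fun x => ∑' k, t k x) := by
    rw [continuous_iff_continuousAt]
    intro x
    rcases hm x with ⟨m, hmx⟩
    have hV : {y : X | g m y - f y < δ} ∈ 𝓝 x := by
      have : IsOpen {y : X | g m y - f y < δ} :=
        isOpen_lt (by continuity) continuous_const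
      exact this.mem_nhds hmx
    have heq : (fun y => ∑' k, t k y) =ᶠ[𝓝 x]
        (fun y => ∑ k ∈ Finset.range m, t k y) := by
      filter_upwards [hV] with y hy
      refine tsum_eq_sum ?_
      intro k hk
      exact hzero m k (le_of_not_gt fun h => hk (Finset.mem_range.2 h)) y hy
    have hcs : ContinuousAt (fun y => ∑ k ∈ Finset.range m, t k y) x := by
      refine (Continuous.continuousAt ?_)
      refine continuous_finset_sum _ ?_
      intro k _
      exact continuous_const.mul ((((g k).continuous.sub f.continuous).sub
        continuous_const).max continuous_const)
    exact hcs.congr heq.symm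
  refine ⟨⟨fun x => ∑' k, t k x, hcont⟩, ?_, ?_⟩
  · rw [ContinuousMap.le_def]
    intro x
    exact tsum_nonneg (fun k => ht0 k x)
  · intro k x
    exact Summable.le_tsum (hsum x) k (fun j _ => ht0 j x)

/-- A convex nondecreasing `F : C(X) → ℝ` with `F 0 = 0`, defined on all
continuous real functions on a Polish space `X`, satisfies downward continuity:
`f_n ↓ f` pointwise (with `f_n, f ∈ C(X)`) implies `F(f_n) ↓ F(f)`. -/
theorem stmt19 {X : Type*} [TopologicalSpace X] [PolishSpace X]
    (F : C(X, ℝ) → ℝ) (hconv : ConvexOn ℝ Set.univ F) (hmono : Monotone F)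
    (hF0 : F 0 = 0) :
    ∀ (f : C(X, ℝ)) (g : ℕ → C(X, ℝ)), Antitone g →
      (∀ x, Tendsto (fun n => g n x) atTop (𝓝 (f x))) →
      Tendsto (fun n => F (g n)) atTop (𝓝 (F f)) := by
  intro f g hg htend
  have hfg : ∀ k, f ≤ g k := by
    intro k
    rw [ContinuousMap.le_def]
    intro x
    refine le_of_tendsto (htend x) ?_
    filter_upwards [eventually_ge_atTop k] with n hn
    exact hg hn x
  have hab : F f ≤ F (f + 1) := hmono (by
    rw [ContinuousMap.le_def]; intro x; simp)
  rw [Metric.tendsto_atTop]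
  intro ε hε
  obtain ⟨δ, hδ0, hδhalf, hδA⟩ : ∃ δ : ℝ, 0 < δ ∧ δ ≤ 1/2 ∧
      δ * (F (f + 1) - F f) < ε / 2 := by
    refine ⟨min (1/2) (ε / (2 * ((F (f + 1) - F f) + 1))), ?_, min_le_left _ _, ?_⟩
    · exact lt_min (by norm_num) (div_pos hε (by linarith))
    · have h1 : min (1/2) (ε / (2 * ((F (f + 1) - F f) + 1))) * (F (f + 1) - F f)
          ≤ (ε / (2 * ((F (f + 1) - F f) + 1))) * (F (f + 1) - F f) :=
        mul_le_mul_of_nonneg_right (min_le_right _ _) (by linarith)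
      have h2 : (ε / (2 * ((F (f + 1) - F f) + 1))) * (F (f + 1) - F f) < ε / 2 := by
        rw [div_mul_eq_mul_div, div_lt_div_iff₀ (by linarith) (by norm_num)]
        nlinarith
      linarith
  obtain ⟨W, hW0, hWk⟩ := stmt19_exists_W f g hg htend hδ0
  have hac : F f ≤ F (f + W) := hmono (by
    calc f = f + 0 := by rw [add_zero]
    _ ≤ f + W := add_le_add_right hW0 f)
  obtain ⟨K₀, hK₀⟩ := exists_nat_gt ((F (f + W) - F f) / (ε / 2))
  refine ⟨max K₀ 2, fun k hk => ?_⟩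
  have hk2 : (2 : ℕ) ≤ k := le_trans (le_max_right _ _) hk
  have hkK₀ : (K₀ : ℝ) ≤ (k : ℝ) := Nat.cast_le.2 (le_trans (le_max_left _ _) hk)
  have hkR : (2 : ℝ) ≤ (k : ℝ) := by exact_mod_cast hk2
  have hkpos : (0 : ℝ) < (k : ℝ) := by linarith
  have hk0 : (k : ℝ) ≠ 0 := ne_of_gt hkpos
  have hBk : (F (f + W) - F f) / k < ε / 2 := by
    rw [div_lt_iff₀ hkpos]
    have h1 : (F (f + W) - F f) / (ε / 2) < (k : ℝ) := lt_of_lt_of_le hK₀ hkK₀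
    rw [div_lt_iff₀ (by linarith)] at h1
    linarith
  have hstep0 : g k ≤ (1/2 : ℝ) • (f + (2 * δ) • (1 : C(X, ℝ)))
      + (1/2 : ℝ) • (f + (2 / (k : ℝ)) • W) := by
    rw [ContinuousMap.le_def]
    intro x
    have h1 : (k : ℝ) * max (g k x - f x - δ) 0 ≤ W x := hWk k x
    have h2 : g k x - f x - δ ≤ max (g k x - f x - δ) 0 := le_max_left _ _
    have h3 : g k x - f x - δ ≤ W x / k := by
      rw [le_div_iff₀ hkpos]
      nlinarith
    have h4 : W x / k = (k : ℝ)⁻¹ * W x := by field_simp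
    simp only [ContinuousMap.add_apply, ContinuousMap.smul_apply,
      ContinuousMap.one_apply, smul_eq_mul]
    have h5 : 2 / (k : ℝ) = 2 * (k : ℝ)⁻¹ := by field_simp
    rw [h5]
    rw [h4] at h3
    linarith
  have hconv1 : F ((1/2 : ℝ) • (f + (2 * δ) • (1 : C(X, ℝ)))
        + (1/2 : ℝ) • (f + (2 / (k : ℝ)) • W))
      ≤ (1/2) * F (f + (2 * δ) • (1 : C(X, ℝ))) + (1/2) * F (f + (2 / (k : ℝ)) • W) := by
    have := hconv.2 (Set.mem_univ (f + (2 * δ) • (1 : C(X, ℝ))))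
      (Set.mem_univ (f + (2 / (k : ℝ)) • W))
      (by norm_num : (0:ℝ) ≤ 1/2) (by norm_num : (0:ℝ) ≤ 1/2) (by norm_num)
    simpa [smul_eq_mul] using this
  have hP1eq : f + (2 * δ) • (1 : C(X, ℝ)) = (1 - 2*δ) • f + (2*δ) • (f + 1) := by
    ext x
    simp only [ContinuousMap.add_apply, ContinuousMap.smul_apply,
      ContinuousMap.one_apply, smul_eq_mul]
    ring
  have hP1le : F (f + (2 * δ) • (1 : C(X, ℝ))) ≤ (1 - 2*δ) * F f + (2*δ) * F (f + 1) := by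
    rw [hP1eq]
    have := hconv.2 (Set.mem_univ f) (Set.mem_univ (f + 1))
      (by linarith : (0:ℝ) ≤ 1 - 2*δ) (by linarith : (0:ℝ) ≤ 2*δ) (by ring)
    simpa [smul_eq_mul] using this
  have hP2eq : f + (2 / (k : ℝ)) • W = (1 - 2/(k:ℝ)) • f + (2/(k:ℝ)) • (f + W) := by
    ext x
    simp only [ContinuousMap.add_apply, ContinuousMap.smul_apply, smul_eq_mul]
    ring
  have htk1 : 2/(k:ℝ) ≤ 1 := by rw [div_le_one hkpos]; exact hkR
  have hP2le : F (f + (2 / (k : ℝ)) • W)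
      ≤ (1 - 2/(k:ℝ)) * F f + (2/(k:ℝ)) * F (f + W) := by
    rw [hP2eq]
    have h2k : (0:ℝ) ≤ 2/(k:ℝ) := div_nonneg (by norm_num) hkpos.le
    have := hconv.2 (Set.mem_univ f) (Set.mem_univ (f + W))
      (by linarith : (0:ℝ) ≤ 1 - 2/(k:ℝ)) h2k (by ring)
    simpa [smul_eq_mul] using this
  have hidty : (1/2) * ((1 - 2*δ) * F f + (2*δ) * F (f + 1))
      + (1/2) * ((1 - 2/(k:ℝ)) * F f + (2/(k:ℝ)) * F (f + W))
      = F f + δ * (F (f + 1) - F f) + (F (f + W) - F f) / k := by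
    field_simp
    ring
  have hkey : F (g k) ≤ F f + δ * (F (f + 1) - F f) + (F (f + W) - F f) / k := by
    calc F (g k) ≤ F ((1/2 : ℝ) • (f + (2 * δ) • (1 : C(X, ℝ)))
        + (1/2 : ℝ) • (f + (2 / (k : ℝ)) • W)) := hmono hstep0
    _ ≤ (1/2) * F (f + (2 * δ) • (1 : C(X, ℝ))) + (1/2) * F (f + (2 / (k : ℝ)) • W) :=
        hconv1
    _ ≤ (1/2) * ((1 - 2*δ) * F f + (2*δ) * F (f + 1))
        + (1/2) * ((1 - 2/(k:ℝ)) * F f + (2/(k:ℝ)) * F (f + W)) := by linarith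
    _ = F f + δ * (F (f + 1) - F f) + (F (f + W) - F f) / k := hidty
  have hlow : F f ≤ F (g k) := hmono (hfg k)
  rw [Real.dist_eq, abs_sub_lt_iff]
  constructor
  · linarith
  · linarith
end
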